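/- arXiv:0901.1283 — 5 statements merged into one kernel-verified Lean document; each statement's English description precedes it below -/
import Mathlib

section
/- Under hypotheses (a1)–(a5), every solution x of the initial value problem for the distributed-delay equation satisfies x(t) > 0 for all t ≥ 0. -/
open MeasureTheory Filter Set
open scoped Topology

theorem distributed_delay_positivity
    (f : ℝ → ℝ) (L K : ℝ) (hL : 0 ≤ L) (hK : 0 < K)
    (h r : ℝ → ℝ) (μ : ℝ → Measure ℝ) (φ : ℝ → ℝ)
    (hf_cont : Continuous f)
    (hf_nonneg : ∀ y : ℝ, 0 ≤ y → 0 ≤ f y)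
    (hf_lip : ∀ u v : ℝ, 0 ≤ u → 0 ≤ v → |f u - f v| ≤ L * |u - v|)
    (hf_zero : f 0 = 0)
    (hf_below : ∀ y : ℝ, 0 < y → y < K → y < f y)
    (hf_above : ∀ y : ℝ, K < y → 0 < f y ∧ f y < y)
    (hh_meas : Measurable h)
    (hh_le : ∀ t : ℝ, 0 ≤ t → h t ≤ t)
    (hh_tend : Tendsto h atTop atTop)
    (hr_meas : Measurable r)
    (hr_nonneg : ∀ t : ℝ, 0 ≤ r t)
    (hr_bdd : ∃ C : ℝ, ∀ᵐ t ∂volume, r t ≤ C)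
    (hr_div : ¬ IntegrableOn r (Ici (0 : ℝ)))
    (hμ_prob : ∀ t : ℝ, 0 ≤ t → IsProbabilityMeasure (μ t))
    (hμ_supp : ∀ t : ℝ, 0 ≤ t → μ t (Icc (h t) t)ᶜ = 0)
    (hμ_meas : ∀ g : ℝ → ℝ, Measurable g → (∃ C : ℝ, ∀ y : ℝ, |g y| ≤ C) →
      Measurable (fun t => ∫ s, g s ∂(μ t)))
    (hφ_cont : ContinuousOn φ (Iic (0 : ℝ)))
    (hφ_bdd : ∃ C : ℝ, ∀ t : ℝ, t ≤ 0 → |φ t| ≤ C)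
    (hφ_nonneg : ∀ t : ℝ, t ≤ 0 → 0 ≤ φ t)
    (hφ_pos : 0 < φ 0)
    (x : ℝ → ℝ)
    (hx_cont : Continuous x)
    (hx_init : ∀ t : ℝ, t ≤ 0 → x t = φ t)
    (hx_sol : ∀ t : ℝ, 0 ≤ t →
      x t = φ 0 + ∫ u in (0:ℝ)..t, r u * ((∫ s, f (x s) ∂(μ u)) - x u))
    :
    ∀ t : ℝ, 0 ≤ t → 0 < x t := by
  by_contra hcon
  push_neg at hcon
  obtain ⟨T, hT0, hTle⟩ := hcon
  -- first zero t₀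
  set S : Set ℝ := {t | 0 ≤ t ∧ x t ≤ 0} with hSdef
  have hS_ne : S.Nonempty := ⟨T, hT0, hTle⟩
  have hS_bdd : BddBelow S := ⟨0, fun t ht => ht.1⟩
  have hS_closed : IsClosed S := by
    have : S = Ici 0 ∩ x ⁻¹' (Iic 0) := by ext t; simp [hSdef, mem_Ici, mem_Iic]
    rw [this]; exact isClosed_Ici.inter (isClosed_Iic.preimage hx_cont)
  set t₀ := sInf S with ht₀def
  have ht₀S : t₀ ∈ S := hS_closed.csInf_mem hS_ne hS_bdd
  have hx0 : x 0 = φ 0 := by simpa using hx_sol 0 le_rfl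
  have ht₀pos : 0 < t₀ := by
    rcases lt_or_eq_of_le ht₀S.1 with h' | h'
    · exact h'
    · exfalso; have := ht₀S.2; rw [← h', hx0] at this; linarith
  have hpos : ∀ s, 0 ≤ s → s < t₀ → 0 < x s := by
    intro s hs hst
    by_contra hle
    push_neg at hle
    exact absurd ⟨hs, hle⟩ (notMem_of_lt_csInf hst hS_bdd)
  have ht₀zero : x t₀ = 0 := by
    refine le_antisymm ht₀S.2 ?_
    have h1 : Tendsto x (𝓝[Iio t₀] t₀) (𝓝 (x t₀)) :=
      (hx_cont.tendsto t₀).mono_left nhdsWithin_le_nhds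
    have h2 : ∀ᶠ s in 𝓝[Iio t₀] t₀, 0 ≤ x s := by
      filter_upwards [Ioo_mem_nhdsLT_of_mem (⟨ht₀pos, le_rfl⟩ : t₀ ∈ Ioc 0 t₀)] with s hs
      exact (hpos s hs.1.le hs.2).le
    exact ge_of_tendsto h1 h2
  have hxnn : ∀ s, s ≤ t₀ → 0 ≤ x s := by
    intro s hs
    rcases le_or_gt s 0 with h' | h'
    · rw [hx_init s h']; exact hφ_nonneg s h'
    · rcases lt_or_eq_of_le hs with h'' | h''
      · exact (hpos s h'.le h'').le
      · rw [h'', ht₀zero]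
  -- bound on x on (-∞, t₀]
  obtain ⟨Cφ, hCφ⟩ := hφ_bdd
  obtain ⟨B₂, hB₂⟩ := isCompact_Icc.exists_bound_of_continuousOn
    (s := Icc (0:ℝ) t₀) hx_cont.continuousOn
  set B : ℝ := max Cφ B₂ with hBdef
  have hB : ∀ s, s ≤ t₀ → |x s| ≤ B := by
    intro s hs
    rcases le_or_gt s 0 with h' | h'
    · rw [hx_init s h']; exact (hCφ s h').trans (le_max_left _ _)
    · have := hB₂ s ⟨h'.le, hs⟩
      rw [Real.norm_eq_abs] at this
      exact this.trans (le_max_right _ _)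
  -- bound on f on [-B, B]
  obtain ⟨F, hF⟩ := isCompact_Icc.exists_bound_of_continuousOn
    (s := Icc (-B) B) hf_cont.continuousOn
  set g₀ : ℝ → ℝ := fun s => f (x (min s t₀)) with hg₀def
  have hg₀cont : Continuous g₀ :=
    hf_cont.comp (hx_cont.comp (continuous_id.min continuous_const))
  have hg₀bd : ∀ s, |g₀ s| ≤ F := by
    intro s
    have h1 : |x (min s t₀)| ≤ B := hB _ (min_le_right _ _)
    have := hF (x (min s t₀)) (abs_le.mp h1)
    rwa [Real.norm_eq_abs] at this
  have hg₀nn : ∀ s, 0 ≤ g₀ s := fun s => hf_nonneg _ (hxnn _ (min_le_right _ _))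
  have hI : ∀ u ∈ Icc (0:ℝ) t₀, ∫ s, f (x s) ∂(μ u) = ∫ s, g₀ s ∂(μ u) := by
    intro u hu
    refine integral_congr_ae ?_
    have hnull := hμ_supp u hu.1
    have hae : ∀ᵐ s ∂(μ u), s ∈ Icc (h u) u := by
      rw [ae_iff]
      exact measure_mono_null (fun s hs => hs) hnull
    filter_upwards [hae] with s hs
    have hmin : min s t₀ = s := min_eq_left (hs.2.trans hu.2)
    simp [hg₀def, hmin]
  have hImeas : Measurable (fun u => ∫ s, g₀ s ∂(μ u)) :=
    hμ_meas g₀ hg₀cont.measurable ⟨F, hg₀bd⟩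
  have hInn : ∀ u, 0 ≤ ∫ s, g₀ s ∂(μ u) := fun u => integral_nonneg hg₀nn
  have hIbd : ∀ u, 0 ≤ u → |∫ s, g₀ s ∂(μ u)| ≤ F := by
    intro u hu
    haveI := hμ_prob u hu
    have := norm_integral_le_of_norm_le_const (μ := μ u) (f := g₀) (C := F)
      (Eventually.of_forall fun s => by rw [Real.norm_eq_abs]; exact hg₀bd s)
    simpa using this
  set G : ℝ → ℝ := fun u => r u * ((∫ s, g₀ s ∂(μ u)) - x u) with hGdef
  have hGmeas : Measurable G := hr_meas.mul (hImeas.sub hx_cont.measurable)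
  obtain ⟨C, hC⟩ := hr_bdd
  set C' : ℝ := max C 1 with hC'def
  have hC'pos : (0:ℝ) < C' := lt_of_lt_of_le one_pos (le_max_right _ _)
  have hrC' : ∀ᵐ u ∂volume, r u ≤ C' := by
    filter_upwards [hC] with u hu; exact hu.trans (le_max_left _ _)
  have hfin : volume (Icc (0:ℝ) t₀) < ⊤ := measure_Icc_lt_top
  have hrint : IntegrableOn r (Icc (0:ℝ) t₀) volume := by
    refine Integrable.mono' (g := fun _ => C') (integrableOn_const hfin.ne)
      hr_meas.aestronglyMeasurable.restrict ?_
    refine ae_restrict_of_ae ?_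
    filter_upwards [hrC'] with u hu
    rw [Real.norm_eq_abs, abs_of_nonneg (hr_nonneg u)]; exact hu
  have hGint : IntegrableOn G (Icc (0:ℝ) t₀) volume := by
    refine Integrable.mono' (g := fun _ => C' * (F + B)) (integrableOn_const hfin.ne)
      hGmeas.aestronglyMeasurable.restrict ?_
    rw [ae_restrict_iff' measurableSet_Icc]
    filter_upwards [hrC'] with u hu hu'
    rw [Real.norm_eq_abs, hGdef]
    simp only []
    rw [abs_mul]
    have h1 : |r u| ≤ C' := by rw [abs_of_nonneg (hr_nonneg u)]; exact hu
    have h2 : |(∫ s, g₀ s ∂(μ u)) - x u| ≤ F + B :=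
      (abs_sub _ _).trans (add_le_add (hIbd u hu'.1) (hB u hu'.2))
    exact mul_le_mul h1 h2 (abs_nonneg _) hC'pos.le
  have hint : ∀ a b, 0 ≤ a → b ≤ t₀ → a ≤ b → IntervalIntegrable G volume a b := by
    intro a b ha hb hab
    apply IntegrableOn.intervalIntegrable
    rw [uIcc_of_le hab]
    exact hGint.mono_set (Icc_subset_Icc ha hb)
  have hxG : ∀ t, 0 ≤ t → t ≤ t₀ → x t = φ 0 + ∫ u in (0:ℝ)..t, G u := by
    intro t ht ht'
    rw [hx_sol t ht]
    congr 1
    refine intervalIntegral.integral_congr ?_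
    intro u hu
    rw [uIcc_of_le ht] at hu
    have hu' : u ∈ Icc (0:ℝ) t₀ := ⟨hu.1, hu.2.trans ht'⟩
    simp only [hGdef]
    rw [hI u hu']
  -- choose δ and maximum point
  set δ : ℝ := min t₀ (1 / (2 * C')) with hδdef
  have hδpos : 0 < δ := lt_min ht₀pos (by positivity)
  have hδle : δ ≤ t₀ := min_le_left _ _
  have hδle2 : δ ≤ 1 / (2 * C') := min_le_right _ _
  set t₁ : ℝ := t₀ - δ with ht₁def
  have ht₁0 : 0 ≤ t₁ := by simp [ht₁def]; linarith
  have ht₁lt : t₁ < t₀ := by simp [ht₁def]; linarith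
  obtain ⟨ts, hts, htsmax⟩ := isCompact_Icc.exists_isMaxOn
    (nonempty_Icc.2 ht₁lt.le) hx_cont.continuousOn
  have hts0 : 0 ≤ ts := le_trans ht₁0 hts.1
  set M : ℝ := x ts with hMdef
  have hMge : x t₁ ≤ M := htsmax ⟨le_rfl, ht₁lt.le⟩
  have hMpos : 0 < M := lt_of_lt_of_le (hpos t₁ ht₁0 ht₁lt) hMge
  -- key identity
  have hsub : x t₀ - x ts = ∫ u in ts..t₀, G u := by
    rw [hxG t₀ ht₀S.1 le_rfl, hxG ts hts0 hts.2]
    have := intervalIntegral.integral_interval_sub_left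
      (hint 0 t₀ le_rfl le_rfl ht₀S.1) (hint 0 ts le_rfl hts.2 hts0)
    linarith
  -- lower bound for the integral
  have hrint2 : IntervalIntegrable r volume ts t₀ := by
    apply IntegrableOn.intervalIntegrable
    rw [uIcc_of_le hts.2]
    exact hrint.mono_set (Icc_subset_Icc hts0 le_rfl)
  have hMrint : IntervalIntegrable (fun u => -(M * r u)) volume ts t₀ :=
    ((hrint2.const_mul M).neg)
  have hG_lb : ∀ u ∈ Icc ts t₀, -(M * r u) ≤ G u := by
    intro u hu
    have hru := hr_nonneg u
    have hIu := hInn u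
    have hxu : x u ≤ M := htsmax ⟨le_trans hts.1 hu.1, hu.2⟩
    have h1 : 0 ≤ r u * (∫ s, g₀ s ∂(μ u)) := mul_nonneg hru hIu
    have h2 : 0 ≤ r u * (M - x u) := mul_nonneg hru (by linarith)
    simp only [hGdef]
    nlinarith
  have h1 : ∫ u in ts..t₀, -(M * r u) ≤ ∫ u in ts..t₀, G u :=
    intervalIntegral.integral_mono_on hts.2 hMrint (hint ts t₀ hts0 le_rfl hts.2) hG_lb
  have h2 : ∫ u in ts..t₀, r u ≤ ∫ u in ts..t₀, (C' : ℝ) :=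
    intervalIntegral.integral_mono_ae hts.2 hrint2 intervalIntegrable_const hrC'
  have h3 : ∫ u in ts..t₀, (C' : ℝ) = C' * (t₀ - ts) := by
    rw [intervalIntegral.integral_const]; ring_nf
  have h4 : ∫ u in ts..t₀, -(M * r u) = -(M * ∫ u in ts..t₀, r u) := by
    rw [intervalIntegral.integral_neg, intervalIntegral.integral_const_mul]
  have hts_close : t₀ - ts ≤ δ := by
    have := hts.1; simp [ht₁def] at this; linarith
  have h5 : ∫ u in ts..t₀, r u ≤ 1 / 2 := by
    have : C' * (t₀ - ts) ≤ C' * δ := by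
      exact mul_le_mul_of_nonneg_left hts_close hC'pos.le
    have h6 : C' * δ ≤ C' * (1 / (2 * C')) := mul_le_mul_of_nonneg_left hδle2 hC'pos.le
    have h7 : C' * (1 / (2 * C')) = 1 / 2 := by field_simp
    linarith [h2, h3]
  have h8 : -(M * ∫ u in ts..t₀, r u) ≥ -(M * (1/2)) := by
    have := mul_le_mul_of_nonneg_left h5 hMpos.le
    linarith
  rw [ht₀zero] at hsub
  rw [h4] at h1
  nlinarith
end

section
/- Under hypotheses (a1)–(a5), every solution x of the initial value problem for the distributed-delay equation is permanent: there exist real numbers A and B with 0 < A ≤ B such that A ≤ x(t) ≤ B for all t ≥ 0. -/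
open MeasureTheory Filter Set
open scoped Interval

lemma aux_ry_integrable (r y : ℝ → ℝ) (C : ℝ)
    (hr_meas : Measurable r) (hr0 : ∀ t, 0 ≤ r t) (hrC : ∀ᵐ t ∂volume, r t ≤ C)
    (hy : Continuous y) (a b : ℝ) :
    IntervalIntegrable (fun u => r u * y u) volume a b := by
  obtain ⟨u0, hu0mem, hu0⟩ := isCompact_uIcc.exists_isMaxOn
    ⟨a, left_mem_uIcc⟩ (hy.abs.continuousOn (s := uIcc a b))
  set N := |y u0| with hN
  have hmeas : AEStronglyMeasurable (fun u => r u * y u)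
      (volume.restrict (Ι a b)) :=
    ((hr_meas.mul hy.measurable).aestronglyMeasurable)
  refine (IntervalIntegrable.mono_fun' (g := fun _ => |C| * N) ?_ hmeas ?_)
  · exact intervalIntegrable_const
  · have h1 : ∀ᵐ u ∂(volume.restrict (Ι a b)), r u ≤ C := ae_restrict_of_ae hrC
    have h2 : ∀ᵐ u ∂(volume.restrict (Ι a b)), u ∈ Ι a b :=
      ae_restrict_mem measurableSet_uIoc
    filter_upwards [h1, h2] with u h1u h2u
    have hyu : |y u| ≤ N := hu0 (uIoc_subset_uIcc h2u)
    have hru : |r u| = r u := abs_of_nonneg (hr0 u)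
    calc ‖r u * y u‖ = |r u| * |y u| := abs_mul _ _
      _ ≤ |C| * N := by
          apply mul_le_mul ?_ hyu (abs_nonneg _) (abs_nonneg _)
          rw [hru]; exact h1u.trans (le_abs_self C)

lemma gronwall_pos (r y : ℝ → ℝ) (C a b : ℝ) (hC : 0 < C)
    (hr_meas : Measurable r) (hr0 : ∀ t, 0 ≤ r t) (hrC : ∀ᵐ t ∂volume, r t ≤ C)
    (hy : Continuous y) (hab : a ≤ b)
    (hy0 : ∀ t ∈ Icc a b, 0 ≤ y t) (hya : 0 < y a)
    (hkey : ∀ t1 t2, a ≤ t1 → t1 ≤ t2 → t2 ≤ b →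
      y t1 ≤ y t2 + ∫ u in t1..t2, r u * y u) :
    0 < y b := by
  set E : ℝ → ℝ := fun t => y a * Real.exp (-2 * C * (t - a)) with hE
  have hEpos : ∀ t, 0 < E t := fun t => mul_pos hya (Real.exp_pos _)
  have hEcont : Continuous E := by
    apply continuous_const.mul
    exact Real.continuous_exp.comp (by continuity)
  suffices hS : E b ≤ y b from lt_of_lt_of_le (hEpos b) hS
  set S : Set ℝ := {t | t ∈ Icc a b ∧ ∀ s ∈ Icc a t, E s ≤ y s} with hSdef
  have haS : a ∈ S := by
    refine ⟨⟨le_refl a, hab⟩, ?_⟩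
    intro s hs
    have : s = a := le_antisymm hs.2 hs.1
    subst this
    simp [hE]
  have hSne : S.Nonempty := ⟨a, haS⟩
  have hSbdd : BddAbove S := ⟨b, fun t ht => ht.1.2⟩
  set τ := sSup S with hτ
  have hτmem : a ≤ τ ∧ τ ≤ b :=
    ⟨le_csSup hSbdd haS, csSup_le hSne fun t ht => ht.1.2⟩
  have hbelow : ∀ s, a ≤ s → s < τ → E s ≤ y s := by
    intro s has hsτ
    obtain ⟨t, htS, hst⟩ := exists_lt_of_lt_csSup hSne hsτ
    exact htS.2 s ⟨has, hst.le⟩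
  have hτE : E τ ≤ y τ := by
    rcases eq_or_lt_of_le hτmem.1 with heq | hlt
    · rw [← heq]; simp [hE]
    · have hlim : Tendsto (fun s => y s - E s) (nhdsWithin τ (Iio τ))
          (nhds (y τ - E τ)) :=
        ((hy.sub hEcont).tendsto τ).mono_left nhdsWithin_le_nhds
      have hne : (nhdsWithin τ (Iio τ)).NeBot := nhdsLT_neBot τ
      have hev : ∀ᶠ s in nhdsWithin τ (Iio τ), 0 ≤ y s - E s := by
        filter_upwards [Ioo_mem_nhdsLT hlt] with s hs
        exact sub_nonneg.2 (hbelow s hs.1.le hs.2)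
      have := ge_of_tendsto hlim hev
      linarith
  have hτS : τ ∈ S := by
    refine ⟨⟨hτmem.1, hτmem.2⟩, ?_⟩
    intro s hs
    rcases lt_or_eq_of_le hs.2 with hlt | heq
    · exact hbelow s hs.1 hlt
    · rw [heq]; exact hτE
  -- show τ = b
  have hτb : τ = b := by
    by_contra hne
    have hτltb : τ < b := lt_of_le_of_ne hτmem.2 hne
    have hyτpos : 0 < y τ := lt_of_lt_of_le (hEpos τ) hτE
    -- continuity of y at τ
    have hcont : ∀ᶠ s in nhds τ, y s < (3/2) * y τ := by
      have : Tendsto y (nhds τ) (nhds (y τ)) := hy.tendsto τ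
      apply this.eventually_lt_const
      linarith
    obtain ⟨δ, hδpos, hδ⟩ := Metric.eventually_nhds_iff.1 hcont
    set ε := min (min (δ/2) (1/(6*C))) (b - τ) with hεdef
    have hεpos : 0 < ε := by
      apply lt_min (lt_min (by linarith) (by positivity)) (by linarith)
    have hεδ : ε ≤ δ/2 := le_trans (min_le_left _ _) (min_le_left _ _)
    have hεC : ε ≤ 1/(6*C) := le_trans (min_le_left _ _) (min_le_right _ _)
    have hεb : τ + ε ≤ b := by
      have := min_le_right (min (δ/2) (1/(6*C))) (b - τ); linarith
    have hstep : ∀ s ∈ Icc a (τ + ε), E s ≤ y s := by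
      intro s hs
      rcases le_or_gt s τ with hsτ | hsτ
      · exact hτS.2 s ⟨hs.1, hsτ⟩
      · -- τ < s ≤ τ + ε
        have hsb : s ≤ b := le_trans hs.2 hεb
        have hkey' := hkey τ s hτmem.1 hsτ.le hsb
        -- bound the integral
        have hIbd : (∫ u in τ..s, r u * y u) ≤ C * ((3/2) * y τ) * (s - τ) := by
          have hint : IntervalIntegrable (fun u => r u * y u) volume τ s :=
            aux_ry_integrable r y C hr_meas hr0 hrC hy τ s
          have hconst : IntervalIntegrable (fun _ : ℝ => C * ((3/2) * y τ)) volume τ s :=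
            intervalIntegrable_const
          have hmono := intervalIntegral.integral_mono_ae_restrict hsτ.le hint hconst ?_
          · calc (∫ u in τ..s, r u * y u) ≤ ∫ u in τ..s, C * ((3/2) * y τ) := hmono
              _ = C * ((3/2) * y τ) * (s - τ) := by
                  rw [intervalIntegral.integral_const]; ring_nf
          · have h1 : ∀ᵐ u ∂(volume.restrict (Icc τ s)), r u ≤ C := ae_restrict_of_ae hrC
            have h2 : ∀ᵐ u ∂(volume.restrict (Icc τ s)), u ∈ Icc τ s :=
              ae_restrict_mem measurableSet_Icc
            filter_upwards [h1, h2] with u h1u h2u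
            have hyub : y u < (3/2) * y τ := by
              apply hδ
              rw [Real.dist_eq, abs_of_nonneg (by linarith [h2u.1])]
              have := h2u.2
              have : u - τ ≤ ε := by linarith [hs.2]
              linarith
            have hyu0 : 0 ≤ y u := hy0 u ⟨le_trans hτmem.1 h2u.1, le_trans h2u.2 hsb⟩
            calc r u * y u ≤ C * y u := mul_le_mul_of_nonneg_right h1u hyu0
              _ ≤ C * ((3/2) * y τ) := mul_le_mul_of_nonneg_left hyub.le hC.le
        -- now: y s >= y tau - C * 1.5 ytau Delta >= E tau * exp(-2C Delta) = E s
        have hΔpos : 0 < s - τ := by linarith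
        have hΔε : s - τ ≤ ε := by linarith [hs.2]
        have hCΔ : C * (s - τ) ≤ 1/6 := by
          have h6 : s - τ ≤ 1/(6*C) := le_trans hΔε hεC
          calc C * (s - τ) ≤ C * (1/(6*C)) := mul_le_mul_of_nonneg_left h6 hC.le
            _ = 1/6 := by field_simp
        have hys : y τ * (1 - (3/2) * (C * (s - τ))) ≤ y s := by
          have : y τ ≤ y s + C * ((3/2) * y τ) * (s - τ) := hkey'.trans (by linarith [hIbd])
          nlinarith
        have hexp : Real.exp (-2 * C * (s - τ)) ≤ 1 - (3/2) * (C * (s - τ)) := by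
          have hprod : Real.exp (-2 * C * (s - τ)) * Real.exp (2 * (C * (s - τ))) = 1 := by
            rw [← Real.exp_add]
            have : -2 * C * (s - τ) + 2 * (C * (s - τ)) = 0 := by ring
            rw [this, Real.exp_zero]
          have h2 : (1 : ℝ) + 2 * (C * (s - τ)) ≤ Real.exp (2 * (C * (s - τ))) := by
            linarith [Real.add_one_le_exp (2 * (C * (s - τ)))]
          have hepos : 0 < Real.exp (-2 * C * (s - τ)) := Real.exp_pos _
          have hu0 : 0 ≤ C * (s - τ) := by positivity
          have he1 : Real.exp (-2 * C * (s - τ)) * (1 + 2 * (C * (s - τ))) ≤ 1 := by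
            calc Real.exp (-2 * C * (s - τ)) * (1 + 2 * (C * (s - τ)))
                ≤ Real.exp (-2 * C * (s - τ)) * Real.exp (2 * (C * (s - τ))) :=
                  mul_le_mul_of_nonneg_left h2 hepos.le
              _ = 1 := hprod
          nlinarith
        have hEs : E s = E τ * Real.exp (-2 * C * (s - τ)) := by
          have hee : Real.exp (-2 * C * (τ - a)) * Real.exp (-2 * C * (s - τ))
              = Real.exp (-2 * C * (s - a)) := by
            rw [← Real.exp_add]; congr 1; ring
          simp only [hE]
          rw [← hee]; ring
        calc E s = E τ * Real.exp (-2 * C * (s - τ)) := hEs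
          _ ≤ y τ * Real.exp (-2 * C * (s - τ)) :=
              mul_le_mul_of_nonneg_right hτE (Real.exp_pos _).le
          _ ≤ y τ * (1 - (3/2) * (C * (s - τ))) := mul_le_mul_of_nonneg_left hexp hyτpos.le
          _ ≤ y s := hys
    have : τ + ε ∈ S := ⟨⟨by linarith [hτmem.1], hεb⟩, hstep⟩
    have : τ + ε ≤ τ := le_csSup hSbdd this
    linarith
  exact hτS.2 b ⟨hab, hτb.ge⟩

theorem distributed_delay_permanence
    (f : ℝ → ℝ) (L K : ℝ) (hL : 0 ≤ L) (hK : 0 < K)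
    (h r : ℝ → ℝ) (μ : ℝ → Measure ℝ) (φ : ℝ → ℝ)
    (hf_cont : Continuous f)
    (hf_nonneg : ∀ y : ℝ, 0 ≤ y → 0 ≤ f y)
    (hf_lip : ∀ u v : ℝ, 0 ≤ u → 0 ≤ v → |f u - f v| ≤ L * |u - v|)
    (hf_zero : f 0 = 0)
    (hf_below : ∀ y : ℝ, 0 < y → y < K → y < f y)
    (hf_above : ∀ y : ℝ, K < y → 0 < f y ∧ f y < y)
    (hh_meas : Measurable h)
    (hh_le : ∀ t : ℝ, 0 ≤ t → h t ≤ t)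
    (hh_tend : Tendsto h atTop atTop)
    (hr_meas : Measurable r)
    (hr_nonneg : ∀ t : ℝ, 0 ≤ r t)
    (hr_bdd : ∃ C : ℝ, ∀ᵐ t ∂volume, r t ≤ C)
    (hr_div : ¬ IntegrableOn r (Ici (0 : ℝ)))
    (hμ_prob : ∀ t : ℝ, 0 ≤ t → IsProbabilityMeasure (μ t))
    (hμ_supp : ∀ t : ℝ, 0 ≤ t → μ t (Icc (h t) t)ᶜ = 0)
    (hμ_meas : ∀ g : ℝ → ℝ, Measurable g → (∃ C : ℝ, ∀ y : ℝ, |g y| ≤ C) →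
      Measurable (fun t => ∫ s, g s ∂(μ t)))
    (hφ_cont : ContinuousOn φ (Iic (0 : ℝ)))
    (hφ_bdd : ∃ C : ℝ, ∀ t : ℝ, t ≤ 0 → |φ t| ≤ C)
    (hφ_nonneg : ∀ t : ℝ, t ≤ 0 → 0 ≤ φ t)
    (hφ_pos : 0 < φ 0)
    (x : ℝ → ℝ)
    (hx_cont : Continuous x)
    (hx_init : ∀ t : ℝ, t ≤ 0 → x t = φ t)
    (hx_sol : ∀ t : ℝ, 0 ≤ t →
      x t = φ 0 + ∫ u in (0:ℝ)..t, r u * ((∫ s, f (x s) ∂(μ u)) - x u))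
    :
    ∃ A B : ℝ, 0 < A ∧ A ≤ B ∧ ∀ t : ℝ, 0 ≤ t → A ≤ x t ∧ x t ≤ B := by
  -- boundedness constants
  obtain ⟨C0, hC0⟩ := hr_bdd
  set C := max C0 1 with hCdef
  have hC : 0 < C := lt_of_lt_of_le one_pos (le_max_right _ _)
  have hrC : ∀ᵐ t ∂volume, r t ≤ C := hC0.mono fun t ht => le_trans ht (le_max_left _ _)
  obtain ⟨Cφ, hCφ⟩ := hφ_bdd
  have hφ0C : φ 0 ≤ Cφ := le_trans (le_abs_self _) (hCφ 0 le_rfl)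
  have hφub : ∀ s : ℝ, s ≤ 0 → φ s ≤ Cφ := fun s hs => le_trans (le_abs_self _) (hCφ s hs)
  have hx0 : x 0 = φ 0 := by simpa using hx_sol 0 le_rfl
  set F : ℝ → ℝ := fun u => ∫ s, f (x s) ∂(μ u) with hF
  have hx_sol' : ∀ t : ℝ, 0 ≤ t →
      x t = φ 0 + ∫ u in (0:ℝ)..t, r u * (F u - x u) := by
    intro t ht
    simp only [hF]
    exact hx_sol t ht
  -- support of μ
  have hμae : ∀ u : ℝ, 0 ≤ u → ∀ᵐ s ∂(μ u), s ∈ Icc (h u) u := by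
    intro u hu
    rw [MeasureTheory.ae_iff]
    exact hμ_supp u hu
  -- bound for x on Iic T
  have hxbdT : ∀ T : ℝ, 0 ≤ T → ∃ R, ∀ s, s ≤ T → |x s| ≤ R := by
    intro T hT
    obtain ⟨v, hvmem, hvmax⟩ := isCompact_Icc.exists_isMaxOn
      ⟨0, le_rfl, hT⟩ (hx_cont.abs.continuousOn (s := Icc 0 T))
    refine ⟨max (|x v|) Cφ, fun s hsT => ?_⟩
    rcases le_or_gt s 0 with hs | hs
    · rw [hx_init s hs]
      exact le_max_of_le_right (hCφ s hs)
    · exact le_max_of_le_left (hvmax ⟨hs.le, hsT⟩)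
  -- bound for f ∘ x on Iic T
  have hfxbdT : ∀ T : ℝ, 0 ≤ T → ∃ R, ∀ s, s ≤ T → |f (x s)| ≤ R := by
    intro T hT
    obtain ⟨R, hR⟩ := hxbdT T hT
    have hR0 : 0 ≤ R := le_trans (abs_nonneg _) (hR 0 hT)
    obtain ⟨v, hvmem, hvmax⟩ := isCompact_Icc.exists_isMaxOn
      ⟨0, neg_nonpos_of_nonneg hR0, hR0⟩ (hf_cont.abs.continuousOn (s := Icc (-R) R))
    refine ⟨|f v|, fun s hsT => ?_⟩
    have := abs_le.1 (hR s hsT)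
    exact hvmax ⟨this.1, this.2⟩
  -- integrability of f ∘ x w.r.t. μ u
  have hfxμInt : ∀ u : ℝ, 0 ≤ u → Integrable (fun s => f (x s)) (μ u) := by
    intro u hu
    obtain ⟨R, hR⟩ := hfxbdT u hu
    haveI := hμ_prob u hu
    apply Integrable.mono' (integrable_const R)
      ((hf_cont.comp hx_cont).aestronglyMeasurable)
    filter_upwards [hμae u hu] with s hsmem
    exact hR s hsmem.2
  -- bound on F
  have hFbd : ∀ T : ℝ, 0 ≤ T → ∃ R, ∀ u, 0 ≤ u → u ≤ T → |F u| ≤ R := by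
    intro T hT
    obtain ⟨R, hR⟩ := hfxbdT T hT
    refine ⟨R, fun u hu huT => ?_⟩
    haveI := hμ_prob u hu
    have hb : ∀ᵐ s ∂(μ u), ‖f (x s)‖ ≤ R := by
      filter_upwards [hμae u hu] with s hsmem
      exact hR s (hsmem.2.trans huT)
    have := MeasureTheory.norm_integral_le_of_norm_le_const (μ := μ u) hb
    simpa [hF] using this
  -- a.e. strong measurability of F on intervals
  have hFaesm : ∀ t1 t2 : ℝ, 0 ≤ t1 → 0 ≤ t2 →
      AEStronglyMeasurable F (volume.restrict (Ι t1 t2)) := by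
    intro t1 t2 h1 h2
    set T := max t1 t2 with hT
    have hT0 : 0 ≤ T := le_trans h1 (le_max_left _ _)
    have hGmeas : Measurable (fun s => f (x (min s T))) :=
      (hf_cont.comp (hx_cont.comp (continuous_id.min continuous_const))).measurable
    obtain ⟨R, hR⟩ := hfxbdT T hT0
    have hFT := hμ_meas _ hGmeas ⟨R, fun s => hR _ (min_le_right s T)⟩
    apply (hFT.aestronglyMeasurable.restrict).congr
    filter_upwards [ae_restrict_mem measurableSet_uIoc] with u hu
    have hu0 : (0:ℝ) ≤ u := le_of_lt (lt_of_le_of_lt (le_min h1 h2) hu.1)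
    have huT : u ≤ T := hu.2
    apply integral_congr_ae
    filter_upwards [hμae u hu0] with s hsmem
    rw [min_eq_left (hsmem.2.trans huT)]
  -- interval integrability of the integrand
  have hgInt : ∀ t1 t2 : ℝ, 0 ≤ t1 → 0 ≤ t2 →
      IntervalIntegrable (fun u => r u * (F u - x u)) volume t1 t2 := by
    intro t1 t2 h1 h2
    set T := max t1 t2 with hT
    have hT0 : 0 ≤ T := le_trans h1 (le_max_left _ _)
    obtain ⟨Rf, hRf⟩ := hFbd T hT0
    obtain ⟨Rx, hRx⟩ := hxbdT T hT0
    have haesm : AEStronglyMeasurable (fun u => r u * (F u - x u))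
        (volume.restrict (Ι t1 t2)) := by
      exact (hr_meas.aestronglyMeasurable.restrict).mul
        ((hFaesm t1 t2 h1 h2).sub (hx_cont.aestronglyMeasurable.restrict))
    apply IntervalIntegrable.mono_fun'
      (g := fun _ => C * (Rf + Rx)) intervalIntegrable_const haesm
    have hae1 : ∀ᵐ u ∂(volume.restrict (Ι t1 t2)), r u ≤ C := ae_restrict_of_ae hrC
    filter_upwards [hae1, ae_restrict_mem measurableSet_uIoc] with u h1u h2u
    have hu0 : (0:ℝ) ≤ u := le_of_lt (lt_of_le_of_lt (le_min h1 h2) h2u.1)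
    have hF' : |F u| ≤ Rf := hRf u hu0 h2u.2
    have hx' : |x u| ≤ Rx := hRx u h2u.2
    have h5 : |F u - x u| ≤ Rf + Rx := by
      rw [sub_eq_add_neg]
      exact le_trans (abs_add_le _ _) (by rw [abs_neg]; exact add_le_add hF' hx')
    have : ‖r u * (F u - x u)‖ = |r u| * |F u - x u| := abs_mul _ _
    rw [this, abs_of_nonneg (hr_nonneg u)]
    exact mul_le_mul h1u h5 (abs_nonneg _) hC.le
  -- increments
  have hxdiff : ∀ t1 t2 : ℝ, 0 ≤ t1 → t1 ≤ t2 →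
      x t2 - x t1 = ∫ u in t1..t2, r u * (F u - x u) := by
    intro t1 t2 h1 h2
    have e1 := hx_sol' t1 h1
    have e2 := hx_sol' t2 (h1.trans h2)
    have e3 := intervalIntegral.integral_add_adjacent_intervals
      (hgInt 0 t1 le_rfl h1) (hgInt t1 t2 h1 (h1.trans h2))
    rw [e1, e2]
    linarith
  -- key inequality (lower form)
  have hkeylow : ∀ (m a b : ℝ), 0 ≤ a →
      (∀ u, a ≤ u → u ≤ b → m ≤ F u) →
      ∀ t1 t2, a ≤ t1 → t1 ≤ t2 → t2 ≤ b →
      x t1 - m ≤ (x t2 - m) + ∫ u in t1..t2, r u * (x u - m) := by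
    intro m a b ha hFm t1 t2 h1 h2 h3
    have ht10 : 0 ≤ t1 := le_trans ha h1
    have hdiff := hxdiff t1 t2 ht10 h2
    have hint1 : IntervalIntegrable (fun u => r u * (F u - x u)) volume t1 t2 :=
      hgInt t1 t2 ht10 (ht10.trans h2)
    have hint2 : IntervalIntegrable (fun u => r u * (m - x u)) volume t1 t2 :=
      aux_ry_integrable r _ C hr_meas hr_nonneg hrC (continuous_const.sub hx_cont) t1 t2
    have hmono : (∫ u in t1..t2, r u * (m - x u)) ≤
        ∫ u in t1..t2, r u * (F u - x u) := by
      apply intervalIntegral.integral_mono_ae_restrict h2 hint2 hint1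
      filter_upwards [ae_restrict_mem measurableSet_Icc] with u hu
      have hFu : m ≤ F u := hFm u (le_trans h1 hu.1) (le_trans hu.2 h3)
      apply mul_le_mul_of_nonneg_left _ (hr_nonneg u)
      linarith
    have hneg : (∫ u in t1..t2, r u * (m - x u)) =
        - ∫ u in t1..t2, r u * (x u - m) := by
      rw [← intervalIntegral.integral_neg]
      congr 1
      funext u
      ring
    rw [hneg] at hmono
    linarith
  -- key inequality (upper form)
  have hkeyup : ∀ (M a b : ℝ), 0 ≤ a →
      (∀ u, a ≤ u → u ≤ b → F u ≤ M) →
      ∀ t1 t2, a ≤ t1 → t1 ≤ t2 → t2 ≤ b →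
      (M - x t1) ≤ (M - x t2) + ∫ u in t1..t2, r u * (M - x u) := by
    intro M a b ha hFM t1 t2 h1 h2 h3
    have ht10 : 0 ≤ t1 := le_trans ha h1
    have hdiff := hxdiff t1 t2 ht10 h2
    have hint1 : IntervalIntegrable (fun u => r u * (F u - x u)) volume t1 t2 :=
      hgInt t1 t2 ht10 (ht10.trans h2)
    have hint2 : IntervalIntegrable (fun u => r u * (M - x u)) volume t1 t2 :=
      aux_ry_integrable r _ C hr_meas hr_nonneg hrC (continuous_const.sub hx_cont) t1 t2
    have hmono : (∫ u in t1..t2, r u * (F u - x u)) ≤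
        ∫ u in t1..t2, r u * (M - x u) := by
      apply intervalIntegral.integral_mono_ae_restrict h2 hint1 hint2
      filter_upwards [ae_restrict_mem measurableSet_Icc] with u hu
      have hFu : F u ≤ M := hFM u (le_trans h1 hu.1) (le_trans hu.2 h3)
      apply mul_le_mul_of_nonneg_left _ (hr_nonneg u)
      linarith
    linarith
  -- positivity of x on [0, ∞)
  have hpos : ∀ t : ℝ, 0 ≤ t → 0 < x t := by
    by_contra hcon
    push_neg at hcon
    obtain ⟨t, ht0, hxt⟩ := hcon
    have hZne : ∃ z, (0 ≤ z ∧ x z = 0) := by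
      have hmem : (0:ℝ) ∈ Icc (x t) (x 0) := ⟨hxt, by rw [hx0]; exact hφ_pos.le⟩
      obtain ⟨z, hz, hz0⟩ := intermediate_value_Icc' ht0 hx_cont.continuousOn hmem
      exact ⟨z, hz.1, hz0⟩
    set Z := {z : ℝ | 0 ≤ z ∧ x z = 0} with hZdef
    have hZne' : Z.Nonempty := hZne
    have hZbdd : BddBelow Z := ⟨0, fun z hz => hz.1⟩
    have hZclosed : IsClosed Z := by
      have : Z = Ici (0:ℝ) ∩ x ⁻¹' {0} := by
        ext z; simp [hZdef, Set.mem_setOf_eq, and_comm]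
      rw [this]
      exact isClosed_Ici.inter (isClosed_singleton.preimage hx_cont)
    set t0 := sInf Z with ht0def
    have ht0Z : t0 ∈ Z := hZclosed.csInf_mem hZne' hZbdd
    have ht0nn : 0 ≤ t0 := ht0Z.1
    have hxt0 : x t0 = 0 := ht0Z.2
    have hxnn : ∀ s, 0 ≤ s → s ≤ t0 → 0 ≤ x s := by
      intro s hs0 hst0
      by_contra hneg
      push_neg at hneg
      have hst0' : s < t0 := by
        rcases lt_or_eq_of_le hst0 with hlt | heq
        · exact hlt
        · exfalso; rw [heq, hxt0] at hneg; exact lt_irrefl 0 hneg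
      have hmem : (0:ℝ) ∈ Icc (x s) (x 0) := ⟨hneg.le, by rw [hx0]; exact hφ_pos.le⟩
      obtain ⟨z, hz, hz0⟩ := intermediate_value_Icc' hs0 hx_cont.continuousOn hmem
      have : t0 ≤ z := csInf_le hZbdd ⟨hz.1, hz0⟩
      linarith [hz.2]
    have hF0 : ∀ u, 0 ≤ u → u ≤ t0 → (0:ℝ) ≤ F u := by
      intro u hu0 hut0
      apply MeasureTheory.integral_nonneg_of_ae
      filter_upwards [hμae u hu0] with s hsmem
      rcases le_or_gt s 0 with hs | hs
      · rw [hx_init s hs]; exact hf_nonneg _ (hφ_nonneg s hs)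
      · exact hf_nonneg _ (hxnn s hs.le (hsmem.2.trans hut0))
    have hgr := gronwall_pos r (fun s => x s - 0) C 0 t0 hC hr_meas hr_nonneg hrC
      (hx_cont.sub continuous_const) ht0nn
      (fun s hs => by simpa using hxnn s hs.1 hs.2)
      (by simpa [hx0] using hφ_pos)
      (fun t1 t2 h1 h2 h3 => hkeylow 0 0 t0 le_rfl hF0 t1 t2 h1 h2 h3)
    have h9 : (0:ℝ) < x t0 - 0 := hgr
    rw [hxt0] at h9
    simpa using h9
  -- upper bound
  obtain ⟨yM, hyMmem, hyMmax⟩ := isCompact_Icc.exists_isMaxOn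
    ⟨0, le_rfl, hK.le⟩ (hf_cont.continuousOn (s := Icc 0 K))
  set M0 := f yM with hM0def
  have hfK : K ≤ f K := by
    have hlim : Tendsto (fun y => f y - y) (nhdsWithin K (Iio K)) (nhds (f K - K)) :=
      ((hf_cont.sub continuous_id).tendsto K).mono_left nhdsWithin_le_nhds
    have hev : ∀ᶠ s in nhdsWithin K (Iio K), (0:ℝ) ≤ f s - s := by
      filter_upwards [Ioo_mem_nhdsLT hK] with s hs
      linarith [hf_below s hs.1 hs.2]
    have := ge_of_tendsto hlim hev
    linarith
  set B := max (max M0 Cφ) K with hBdef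
  have hM0B : M0 ≤ B := le_trans (le_max_left _ _) (le_max_left _ _)
  have hCφB : Cφ ≤ B := le_trans (le_max_right _ _) (le_max_left _ _)
  have hKB : K ≤ B := le_max_right _ _
  have hfle : ∀ y : ℝ, 0 ≤ y → f y ≤ max M0 y := by
    intro y hy
    rcases le_or_gt y K with h1 | h1
    · exact le_max_of_le_left (hyMmax ⟨hy, h1⟩)
    · exact le_max_of_le_right (hf_above y h1).2.le
  have hub : ∀ t : ℝ, 0 ≤ t → x t ≤ B := by
    by_contra hcon
    push_neg at hcon
    obtain ⟨T, hT0, hTB⟩ := hcon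
    obtain ⟨σ, hσmem, hσmax⟩ := isCompact_Icc.exists_isMaxOn
      ⟨0, le_rfl, hT0⟩ (hx_cont.continuousOn (s := Icc 0 T))
    set M := x σ with hMdef
    have hMB : B < M := lt_of_lt_of_le hTB (hσmax ⟨hT0, le_rfl⟩)
    have hFM : ∀ u, 0 ≤ u → u ≤ σ → F u ≤ M := by
      intro u hu0 huσ
      haveI := hμ_prob u hu0
      have hae : ∀ᵐ s ∂(μ u), f (x s) ≤ M := by
        filter_upwards [hμae u hu0] with s hsmem
        rcases le_or_gt s 0 with hs | hs
        · rw [hx_init s hs]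
          have h1 : f (φ s) ≤ max M0 (φ s) := hfle _ (hφ_nonneg s hs)
          have h2 : φ s ≤ Cφ := hφub s hs
          calc f (φ s) ≤ max M0 (φ s) := h1
            _ ≤ max M0 Cφ := max_le_max le_rfl h2
            _ ≤ B := max_le hM0B hCφB
            _ ≤ M := hMB.le
        · have hsσ : s ≤ σ := hsmem.2.trans huσ
          have hsT : s ≤ T := hsσ.trans hσmem.2
          have hxs : x s ≤ M := hσmax ⟨hs.le, hsT⟩
          have h1 : f (x s) ≤ max M0 (x s) := hfle _ (hpos s hs.le).le
          calc f (x s) ≤ max M0 (x s) := h1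
            _ ≤ max M0 M := max_le_max le_rfl hxs
            _ = M := max_eq_right (le_trans hM0B hMB.le)
      have h2 : F u ≤ ∫ s, M ∂(μ u) :=
        MeasureTheory.integral_mono_ae (hfxμInt u hu0) (integrable_const M) hae
      simpa using h2
    have hgr := gronwall_pos r (fun s => M - x s) C 0 σ hC hr_meas hr_nonneg hrC
      (continuous_const.sub hx_cont) hσmem.1
      (fun s hs => by
        have : x s ≤ M := hσmax ⟨hs.1, hs.2.trans hσmem.2⟩
        simpa using this)
      (by
        show (0:ℝ) < M - x 0
        rw [hx0]
        linarith [hφ0C, hCφB, hMB])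
      (fun t1 t2 h1 h2 h3 => hkeyup M 0 σ le_rfl hFM t1 t2 h1 h2 h3)
    have h9 : (0:ℝ) < M - x σ := hgr
    linarith [hMdef.le, hMdef.ge]
  have hxB : ∀ s : ℝ, x s ≤ B := by
    intro s
    rcases le_or_gt s 0 with hs | hs
    · rw [hx_init s hs]; exact le_trans (hφub s hs) hCφB
    · exact hub s hs.le
  -- lower bound
  obtain ⟨zc, hzcmem, hzcmin⟩ := isCompact_Icc.exists_isMinOn
    ⟨K, le_rfl, hKB⟩ (hf_cont.continuousOn (s := Icc K B))
  set c := f zc with hcdef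
  have hcpos : 0 < c := by
    rcases eq_or_lt_of_le hzcmem.1 with heq | hlt
    · rw [hcdef, ← heq]; linarith [hfK]
    · exact (hf_above zc hlt).1
  obtain ⟨T0, hT0⟩ := eventually_atTop.1 (hh_tend.eventually_ge_atTop 0)
  set T' := max T0 0 with hT'def
  have hT'0 : (0:ℝ) ≤ T' := le_max_right _ _
  have hhT' : ∀ u, T' ≤ u → 0 ≤ h u := fun u hu => hT0 u (le_trans (le_max_left _ _) hu)
  obtain ⟨w, hwmem, hwmin⟩ := isCompact_Icc.exists_isMinOn
    ⟨0, le_rfl, hT'0⟩ (hx_cont.continuousOn (s := Icc 0 T'))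
  set I := x w with hIdef
  have hIpos : 0 < I := hpos w hwmem.1
  set A := min I c with hAdef
  have hApos : 0 < A := lt_min hIpos hcpos
  have hfge : ∀ y : ℝ, 0 < y → y ≤ K → y ≤ f y := by
    intro y hy hyK
    rcases lt_or_eq_of_le hyK with h1 | h1
    · exact (hf_below y hy h1).le
    · rw [h1]; exact hfK
  have hlow : ∀ t : ℝ, T' ≤ t → A ≤ x t := by
    intro t htT'
    obtain ⟨ts, htsmem, htsmin⟩ := isCompact_Icc.exists_isMinOn
      ⟨T', le_rfl, htT'⟩ (hx_cont.continuousOn (s := Icc T' t))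
    have hts0 : 0 ≤ ts := le_trans hT'0 htsmem.1
    suffices hA : A ≤ x ts from le_trans hA (htsmin ⟨htT', le_rfl⟩)
    by_contra hcon
    push_neg at hcon
    set m := x ts with hmdef
    have hxge : ∀ s, 0 ≤ s → s ≤ ts → m ≤ x s := by
      intro s hs0 hsts
      rcases le_or_gt s T' with h1 | h1
      · have : I ≤ x s := hwmin ⟨hs0, h1⟩
        linarith [min_le_left I c]
      · exact htsmin ⟨h1.le, hsts.trans htsmem.2⟩
    have hFm : ∀ u, T' ≤ u → u ≤ ts → m ≤ F u := by
      intro u huT' huts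
      have hu0 : 0 ≤ u := le_trans hT'0 huT'
      haveI := hμ_prob u hu0
      have hae : ∀ᵐ s ∂(μ u), m ≤ f (x s) := by
        filter_upwards [hμae u hu0] with s hsmem
        have hs0 : 0 ≤ s := le_trans (hhT' u huT') hsmem.1
        have hsts : s ≤ ts := hsmem.2.trans huts
        have hxs : m ≤ x s := hxge s hs0 hsts
        have hxspos : 0 < x s := hpos s hs0
        rcases le_or_gt (x s) K with h1 | h1
        · linarith [hfge (x s) hxspos h1]
        · have : c ≤ f (x s) := hzcmin ⟨h1.le, hxB s⟩
          have : A ≤ f (x s) := le_trans (min_le_right I c) this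
          linarith
      have h2 : (∫ s, m ∂(μ u)) ≤ F u :=
        MeasureTheory.integral_mono_ae (integrable_const m) (hfxμInt u hu0) hae
      simpa using h2
    have hgr := gronwall_pos r (fun s => x s - m) C T' ts hC hr_meas hr_nonneg hrC
      (hx_cont.sub continuous_const) htsmem.1
      (fun s hs => by
        have : m ≤ x s := hxge s (le_trans hT'0 hs.1) hs.2
        simpa using this)
      (by
        show (0:ℝ) < x T' - m
        have h1 : I ≤ x T' := hwmin ⟨hT'0, le_rfl⟩
        have h2 : A ≤ I := min_le_left I c
        linarith)
      (fun t1 t2 h1 h2 h3 => hkeylow m T' ts hT'0 hFm t1 t2 h1 h2 h3)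
    have h9 : (0:ℝ) < x ts - m := hgr
    linarith [hmdef.le, hmdef.ge]
  -- conclusion
  refine ⟨A, B, hApos, ?_, ?_⟩
  · have h1 : I ≤ x 0 := hwmin ⟨le_rfl, hT'0⟩
    have h2 : x 0 ≤ B := hxB 0
    have : A ≤ I := min_le_left I c
    linarith
  · intro t ht
    constructor
    · rcases le_or_gt t T' with h1 | h1
      · have : I ≤ x t := hwmin ⟨ht, h1⟩
        linarith [min_le_left I c]
      · exact hlow t h1.le
    · exact hxB t
end

section
/- Under hypotheses (a1)–(a5), every solution x of the initial value problem for the distributed-delay equation that is nonoscillatory about K converges to K: if there exists τ > 0 such that either x(t) > K for all t ≥ τ or x(t) < K for all t ≥ τ, then lim_{t→∞} x(t) = K. -/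
open MeasureTheory Filter Set

lemma crossing_above {x : ℝ → ℝ} (hx : Continuous x) {a b β : ℝ} (hab : a ≤ b)
    (ha : x a ≤ β) (hb : β < x b) :
    ∃ w, a ≤ w ∧ w < b ∧ x w ≤ β ∧ ∀ v, w < v → v ≤ b → β < x v := by
  set S : Set ℝ := Icc a b ∩ x ⁻¹' (Iic β) with hS
  have hSc : IsCompact S := isCompact_Icc.inter_right (isClosed_Iic.preimage hx)
  have hSne : S.Nonempty := ⟨a, ⟨le_rfl, hab⟩, ha⟩
  obtain ⟨⟨hwa, hwb⟩, hwβ⟩ : sSup S ∈ S := hSc.sSup_mem hSne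
  have hwmem : sSup S ∈ S := hSc.sSup_mem hSne
  have hwb' : sSup S < b := lt_of_le_of_ne hwb (by
    intro he; rw [he] at hwβ; exact absurd hwβ (not_le.2 hb))
  refine ⟨sSup S, hwa, hwb', hwβ, fun v hv hvb => ?_⟩
  by_contra hcon
  push_neg at hcon
  have : v ∈ S := ⟨⟨hwa.trans hv.le, hvb⟩, hcon⟩
  exact absurd (le_csSup hSc.bddAbove this) (not_le.2 hv)

lemma crossing_below {x : ℝ → ℝ} (hx : Continuous x) {a b β : ℝ} (hab : a ≤ b)
    (ha : β ≤ x a) (hb : x b < β) :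
    ∃ w, a ≤ w ∧ w < b ∧ β ≤ x w ∧ ∀ v, w < v → v ≤ b → x v < β := by
  obtain ⟨w, h1, h2, h3, h4⟩ := crossing_above (x := fun t => -x t) (hx.neg) hab
    (β := -β) (by simpa using ha) (by simpa using hb)
  exact ⟨w, h1, h2, by simpa using h3, fun v hv hvb => by simpa using h4 v hv hvb⟩

set_option maxHeartbeats 1000000 in
theorem distributed_delay_nonoscillatory_convergence
    (f : ℝ → ℝ) (L K : ℝ) (hL : 0 ≤ L) (hK : 0 < K)
    (h r : ℝ → ℝ) (μ : ℝ → Measure ℝ) (φ : ℝ → ℝ)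
    (hf_cont : Continuous f)
    (hf_nonneg : ∀ y : ℝ, 0 ≤ y → 0 ≤ f y)
    (hf_lip : ∀ u v : ℝ, 0 ≤ u → 0 ≤ v → |f u - f v| ≤ L * |u - v|)
    (hf_zero : f 0 = 0)
    (hf_below : ∀ y : ℝ, 0 < y → y < K → y < f y)
    (hf_above : ∀ y : ℝ, K < y → 0 < f y ∧ f y < y)
    (hh_meas : Measurable h)
    (hh_le : ∀ t : ℝ, 0 ≤ t → h t ≤ t)
    (hh_tend : Tendsto h atTop atTop)
    (hr_meas : Measurable r)
    (hr_nonneg : ∀ t : ℝ, 0 ≤ r t)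
    (hr_bdd : ∃ C : ℝ, ∀ᵐ t ∂volume, r t ≤ C)
    (hr_div : ¬ IntegrableOn r (Ici (0 : ℝ)))
    (hμ_prob : ∀ t : ℝ, 0 ≤ t → IsProbabilityMeasure (μ t))
    (hμ_supp : ∀ t : ℝ, 0 ≤ t → μ t (Icc (h t) t)ᶜ = 0)
    (hμ_meas : ∀ g : ℝ → ℝ, Measurable g → (∃ C : ℝ, ∀ y : ℝ, |g y| ≤ C) →
      Measurable (fun t => ∫ s, g s ∂(μ t)))
    (hφ_cont : ContinuousOn φ (Iic (0 : ℝ)))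
    (hφ_bdd : ∃ C : ℝ, ∀ t : ℝ, t ≤ 0 → |φ t| ≤ C)
    (hφ_nonneg : ∀ t : ℝ, t ≤ 0 → 0 ≤ φ t)
    (hφ_pos : 0 < φ 0)
    (x : ℝ → ℝ)
    (hx_cont : Continuous x)
    (hx_init : ∀ t : ℝ, t ≤ 0 → x t = φ t)
    (hx_sol : ∀ t : ℝ, 0 ≤ t →
      x t = φ 0 + ∫ u in (0:ℝ)..t, r u * ((∫ s, f (x s) ∂(μ u)) - x u))
    (hnonosc : ∃ τ : ℝ, 0 < τ ∧
      ((∀ t : ℝ, τ ≤ t → K < x t) ∨ (∀ t : ℝ, τ ≤ t → x t < K))) :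
    Tendsto x atTop (nhds K) := by
  classical
  obtain ⟨C₀, hC₀⟩ := hr_bdd
  set C : ℝ := max C₀ 1 with hCdef
  have hC1 : (1:ℝ) ≤ C := le_max_right _ _
  have hC0 : (0:ℝ) < C := lt_of_lt_of_le one_pos hC1
  have hrC : ∀ᵐ t ∂(volume : Measure ℝ), r t ≤ C :=
    hC₀.mono fun t ht => ht.trans (le_max_left _ _)
  -- f K = K
  have hfK : f K = K := by
    have h1 : f K ≤ K := by
      by_contra hc; push_neg at hc
      obtain ⟨δ, hδ0, hδ⟩ := Metric.continuousAt_iff.1 hf_cont.continuousAt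
        ((f K - K)/2) (by linarith)
      set m : ℝ := min (δ/2) ((f K - K)/4) with hm
      have hm0 : 0 < m := lt_min (by linarith) (by linarith)
      have h2 : dist (K + m) K < δ := by
        rw [Real.dist_eq]
        rw [abs_of_nonneg (by linarith)]
        have := min_le_left (δ/2) ((f K - K)/4); simp only [hm] at *; linarith
      have h3 := hδ h2
      rw [Real.dist_eq, abs_lt] at h3
      have h4 := (hf_above (K + m) (by linarith)).2
      have := min_le_right (δ/2) ((f K - K)/4)
      simp only [hm] at *
      linarith
    have h2 : K ≤ f K := by
      by_contra hc; push_neg at hc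
      obtain ⟨δ, hδ0, hδ⟩ := Metric.continuousAt_iff.1 hf_cont.continuousAt
        ((K - f K)/2) (by linarith)
      set m : ℝ := min (δ/2) (min (K/2) ((K - f K)/4)) with hm
      have hm0 : 0 < m := lt_min (by linarith) (lt_min (by linarith) (by linarith))
      have h2 : dist (K - m) K < δ := by
        rw [Real.dist_eq, abs_of_nonpos (by linarith)]
        have := min_le_left (δ/2) (min (K/2) ((K - f K)/4)); simp only [hm] at *; linarith
      have h3 := hδ h2
      rw [Real.dist_eq, abs_lt] at h3
      have hmK2 : m ≤ K/2 := le_trans (min_le_right _ _) (min_le_left _ _)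
      have hmf : m ≤ (K - f K)/4 := le_trans (min_le_right _ _) (min_le_right _ _)
      have h4 := hf_below (K - m) (by linarith) (by linarith)
      linarith
    linarith
  -- bound for x on (-∞, T]
  have xbd : ∀ T : ℝ, ∃ B, 0 ≤ B ∧ ∀ s, s ≤ T → |x s| ≤ B := by
    intro T
    obtain ⟨Cφ, hCφ⟩ := hφ_bdd
    obtain ⟨B2, hB2⟩ : ∃ B2, ∀ s ∈ Icc (0:ℝ) (max T 0), ‖x s‖ ≤ B2 :=
      isCompact_Icc.exists_bound_of_continuousOn hx_cont.continuousOn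
    refine ⟨max (max Cφ B2) 0, le_max_right _ _, fun s hs => ?_⟩
    rcases le_or_gt s 0 with hs0 | hs0
    · rw [hx_init s hs0]
      exact le_trans (hCφ s hs0) (le_trans (le_max_left _ _) (le_max_left _ _))
    · have : |x s| ≤ B2 := hB2 s ⟨hs0.le, le_trans hs (le_max_left _ _)⟩
      exact le_trans this (le_trans (le_max_right _ _) (le_max_left _ _))
  have fxbd : ∀ T : ℝ, ∃ B, 0 ≤ B ∧ ∀ s, s ≤ T → |f (x s)| ≤ B := by
    intro T
    obtain ⟨B1, hB10, hB1⟩ := xbd T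
    obtain ⟨B2, hB2⟩ : ∃ B2, ∀ y ∈ Icc (-B1) B1, ‖f y‖ ≤ B2 :=
      isCompact_Icc.exists_bound_of_continuousOn hf_cont.continuousOn
    refine ⟨max B2 0, le_max_right _ _, fun s hs => ?_⟩
    have := abs_le.1 (hB1 s hs)
    exact le_trans (hB2 (x s) ⟨this.1, this.2⟩) (le_max_left _ _)
  have hsupp_ae : ∀ v : ℝ, 0 ≤ v → ∀ᵐ s ∂(μ v), s ∈ Icc (h v) v := by
    intro v hv
    have h0 := hμ_supp v hv
    rw [ae_iff]
    convert h0 using 2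
    rfl

  have fint : ∀ v : ℝ, 0 ≤ v → Integrable (fun s => f (x s)) (μ v) := by
    intro v hv
    haveI := hμ_prob v hv
    obtain ⟨B, hB0, hB⟩ := fxbd v
    have hgc : Continuous fun s : ℝ => f (x (min s v)) :=
      hf_cont.comp (hx_cont.comp (continuous_id.min continuous_const))
    have hgi : Integrable (fun s : ℝ => f (x (min s v))) (μ v) := by
      refine Integrable.mono' (integrable_const B) hgc.aestronglyMeasurable
        (ae_of_all _ fun s => ?_)
      simpa [Real.norm_eq_abs] using hB _ (min_le_right s v)
    refine hgi.congr ?_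
    filter_upwards [hsupp_ae v hv] with s hs
    rw [min_eq_left hs.2]
  have Fub : ∀ (v γ : ℝ), 0 ≤ v → (∀ s, h v ≤ s → s ≤ v → f (x s) ≤ γ) →
      (∫ s, f (x s) ∂(μ v)) ≤ γ := by
    intro v γ hv hγ
    haveI := hμ_prob v hv
    have h1 : (∫ s, f (x s) ∂(μ v)) ≤ ∫ _, γ ∂(μ v) := by
      refine integral_mono_ae (fint v hv) (integrable_const _) ?_
      filter_upwards [hsupp_ae v hv] with s hs using hγ s hs.1 hs.2
    simpa using h1
  have Flb : ∀ (v γ : ℝ), 0 ≤ v → (∀ s, h v ≤ s → s ≤ v → γ ≤ f (x s)) →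
      γ ≤ ∫ s, f (x s) ∂(μ v) := by
    intro v γ hv hγ
    haveI := hμ_prob v hv
    have h1 : (∫ _, γ ∂(μ v)) ≤ ∫ s, f (x s) ∂(μ v) := by
      refine integral_mono_ae (integrable_const _) (fint v hv) ?_
      filter_upwards [hsupp_ae v hv] with s hs using hγ s hs.1 hs.2
    simpa using h1
  have rint : ∀ a b : ℝ, IntervalIntegrable r volume a b := by
    intro a b
    rw [intervalIntegrable_iff]
    refine Integrable.mono' (g := fun _ => C) ?_ hr_meas.aestronglyMeasurable ?_
    · exact integrableOn_const measure_Ioc_lt_top.ne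
    · filter_upwards [ae_restrict_of_ae hrC] with t ht
      rw [Real.norm_eq_abs, abs_of_nonneg (hr_nonneg t)]; exact ht
  have rnn : ∀ a b : ℝ, a ≤ b → 0 ≤ ∫ u in a..b, r u := fun a b hab =>
    intervalIntegral.integral_nonneg hab (fun u _ => hr_nonneg u)
  have rCb : ∀ a b : ℝ, a ≤ b → (∫ u in a..b, r u) ≤ C * (b - a) := by
    intro a b hab
    have h1 : (∫ u in a..b, r u) ≤ ∫ _ in a..b, C :=
      intervalIntegral.integral_mono_ae hab (rint a b) intervalIntegrable_const hrC
    rw [intervalIntegral.integral_const, smul_eq_mul] at h1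
    linarith [h1]
  have hGex : ∀ T : ℝ, 0 ≤ T → ∃ G : ℝ → ℝ, Measurable G ∧
      (∀ u, 0 ≤ u → u ≤ T → (∫ s, f (x s) ∂(μ u)) = G u) ∧
      ∃ B, 0 ≤ B ∧ ∀ u, 0 ≤ u → |G u| ≤ B := by
    intro T hT
    obtain ⟨B, hB0, hB⟩ := fxbd T
    have hgc : Continuous fun s : ℝ => f (x (min s T)) :=
      hf_cont.comp (hx_cont.comp (continuous_id.min continuous_const))
    have hgb : ∀ y : ℝ, |f (x (min y T))| ≤ B := fun y => hB _ (min_le_right _ _)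
    have hGm : Measurable (fun t => ∫ s, f (x (min s T)) ∂(μ t)) :=
      hμ_meas _ hgc.measurable ⟨B, hgb⟩
    refine ⟨_, hGm, ?_, B, hB0, ?_⟩
    · intro u hu huT
      refine integral_congr_ae ?_
      filter_upwards [hsupp_ae u hu] with s hs
      rw [min_eq_left (hs.2.trans huT)]
    · intro u hu
      haveI := hμ_prob u hu
      have h1 : ‖∫ s, f (x (min s T)) ∂(μ u)‖ ≤ B * ((μ u) univ).toReal := by
        refine norm_integral_le_of_norm_le_const (ae_of_all _ fun s => ?_)
        simpa [Real.norm_eq_abs] using hgb s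
      rw [Real.norm_eq_abs] at h1
      simpa using h1
  have intg : ∀ a b : ℝ, 0 ≤ a → a ≤ b →
      IntervalIntegrable (fun u => r u * ((∫ s, f (x s) ∂(μ u)) - x u)) volume a b := by
    intro a b ha hab
    have hb0 : 0 ≤ b := ha.trans hab
    obtain ⟨G, hGm, hGeq, B, hB0, hGb⟩ := hGex b hb0
    obtain ⟨Bx, hBx0, hBx⟩ := xbd b
    rw [intervalIntegrable_iff, uIoc_of_le hab]
    have hmeas : AEStronglyMeasurable (fun u => r u * (G u - x u))
        (volume.restrict (Ioc a b)) :=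
      (hr_meas.mul (hGm.sub hx_cont.measurable)).aestronglyMeasurable
    have hint : IntegrableOn (fun u => r u * (G u - x u)) (Ioc a b) := by
      refine Integrable.mono' (g := fun _ => C * (B + Bx)) ?_ hmeas ?_
      · exact integrableOn_const measure_Ioc_lt_top.ne
      · filter_upwards [ae_restrict_of_ae hrC, ae_restrict_mem measurableSet_Ioc]
          with u hu1 hu2
        have hu0 : 0 ≤ u := le_of_lt (lt_of_le_of_lt ha hu2.1)
        have h1 : |G u - x u| ≤ B + Bx := by
          have := abs_sub_abs_le_abs_sub (G u) (x u)
          have h2 := hGb u hu0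
          have h3 := hBx u hu2.2
          calc |G u - x u| ≤ |G u| + |x u| := abs_sub _ _
          _ ≤ B + Bx := add_le_add h2 h3
        rw [Real.norm_eq_abs, abs_mul, abs_of_nonneg (hr_nonneg u)]
        exact mul_le_mul hu1 h1 (abs_nonneg _) hC0.le
    refine (hint.congr_fun ?_ measurableSet_Ioc)
    intro u hu
    show r u * (G u - x u) = r u * ((∫ s, f (x s) ∂(μ u)) - x u)
    rw [hGeq u (le_of_lt (lt_of_le_of_lt ha hu.1)) hu.2]
  have key : ∀ a b : ℝ, 0 ≤ a → a ≤ b →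
      x b - x a = ∫ u in a..b, r u * ((∫ s, f (x s) ∂(μ u)) - x u) := by
    intro a b ha hab
    have h1 := hx_sol a ha
    have h2 := hx_sol b (ha.trans hab)
    have h3 := intervalIntegral.integral_add_adjacent_intervals
      (intg 0 a le_rfl ha) (intg a b ha hab)
    rw [h1, h2]
    linarith [h3]
  have keyIoc : ∀ a b : ℝ, 0 ≤ a → a ≤ b →
      x b - x a = ∫ u in Ioc a b, r u * ((∫ s, f (x s) ∂(μ u)) - x u) := by
    intro a b ha hab
    rw [key a b ha hab, intervalIntegral.integral_of_le hab]
  have Rdiv : ∀ a A : ℝ, 0 ≤ a → ∃ b, a ≤ b ∧ A ≤ ∫ u in a..b, r u := by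
    intro a A ha
    by_contra hcon
    push_neg at hcon
    apply hr_div
    have hIoi : IntegrableOn r (Ioi a) := by
      refine integrableOn_Ioi_of_intervalIntegral_norm_bounded A a
        (b := fun n : ℕ => max a n) (l := atTop) (fun n => ?_) ?_ ?_
      · exact (rint a (max a n)).1
      · exact tendsto_atTop_mono (fun n => le_max_right a n) tendsto_natCast_atTop_atTop
      · refine Eventually.of_forall fun n => ?_
        have heq : (∫ u in a..(max a n : ℝ), ‖r u‖) = ∫ u in a..(max a n : ℝ), r u := by
          refine intervalIntegral.integral_congr fun u _ => ?_
          rw [Real.norm_eq_abs, abs_of_nonneg (hr_nonneg u)]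
        rw [heq]
        exact (hcon _ (le_max_left _ _)).le
    have h1 : IntegrableOn r (Icc 0 a) := by
      rw [integrableOn_Icc_iff_integrableOn_Ioc]
      exact (rint 0 a).1
    have h2 : Ici (0:ℝ) ⊆ Icc 0 a ∪ Ioi a := by
      intro t ht
      rcases le_or_gt t a with h | h
      · exact Or.inl ⟨ht, h⟩
      · exact Or.inr h
    exact (h1.union hIoi).mono_set h2
  have hhN : ∀ A : ℝ, ∃ N, 0 ≤ N ∧ ∀ t, N ≤ t → A ≤ h t := by
    intro A
    obtain ⟨N, hN⟩ := eventually_atTop.1 (hh_tend.eventually_ge_atTop A)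
    exact ⟨max N 0, le_max_right _ _, fun t ht => hN t (le_trans (le_max_left _ _) ht)⟩
  -- positivity of x on [0, ∞)
  have xpos : ∀ t : ℝ, 0 ≤ t → 0 < x t := by
    by_contra hcon
    push_neg at hcon
    obtain ⟨tb, htb0, hxtb⟩ := hcon
    set S : Set ℝ := {t | 0 ≤ t ∧ x t ≤ 0} with hSdef
    have hSne : S.Nonempty := ⟨tb, htb0, hxtb⟩
    have hScl : IsClosed S := by
      have : S = Ici 0 ∩ x ⁻¹' (Iic 0) := rfl
      rw [this]
      exact isClosed_Ici.inter (isClosed_Iic.preimage hx_cont)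
    have hbdd : BddBelow S := ⟨0, fun t ht => ht.1⟩
    have ht0mem : sInf S ∈ S := hScl.csInf_mem hSne hbdd
    set t0 := sInf S with ht0def
    have ht00 : 0 ≤ t0 := ht0mem.1
    have hxt0 : x t0 ≤ 0 := ht0mem.2
    have hx0 : 0 < x 0 := by rw [hx_init 0 le_rfl]; exact hφ_pos
    have ht0pos : 0 < t0 := by
      rcases lt_or_eq_of_le ht00 with hlt | heq
      · exact hlt
      · exfalso; rw [← heq] at hxt0; linarith
    have hpos : ∀ s, 0 ≤ s → s < t0 → 0 < x s := by
      intro s hs hst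
      by_contra hc; push_neg at hc
      exact absurd (csInf_le hbdd ⟨hs, hc⟩) (not_le.2 hst)
    have hxt0' : 0 ≤ x t0 := by
      have htend : Tendsto x (nhdsWithin t0 (Iio t0)) (nhds (x t0)) :=
        (hx_cont.tendsto t0).mono_left nhdsWithin_le_nhds
      have h1 : ∀ᶠ s in nhdsWithin t0 (Iio t0), 0 ≤ x s := by
        have h2 : ∀ᶠ s in nhds t0, 0 < s := eventually_gt_nhds ht0pos
        filter_upwards [self_mem_nhdsWithin, h2.filter_mono nhdsWithin_le_nhds]
          with s hs1 hs2
        exact (hpos s hs2.le hs1).le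
      exact ge_of_tendsto htend h1
    have hnneg : ∀ s, s ≤ t0 → 0 ≤ x s := by
      intro s hs
      rcases lt_or_ge s 0 with h0 | h0
      · rw [hx_init s h0.le]; exact hφ_nonneg s h0.le
      · rcases lt_or_eq_of_le hs with hlt | heq
        · exact (hpos s h0 hlt).le
        · rw [heq]; exact hxt0'
    have hFnn : ∀ v, 0 ≤ v → v ≤ t0 → 0 ≤ ∫ s, f (x s) ∂(μ v) := by
      intro v hv hvt0
      exact Flb v 0 hv (fun s hs1 hs2 => hf_nonneg _ (hnneg s (hs2.trans hvt0)))
    set η : ℝ := 1/(4*C) with hηdef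
    have hη : 0 < η := by positivity
    set s0 : ℝ := max 0 (t0 - η) with hs0def
    have hs00 : 0 ≤ s0 := le_max_left _ _
    have hs0lt : s0 < t0 := max_lt ht0pos (by linarith)
    have hΔ : (∫ u in s0..t0, r u) ≤ (1:ℝ)/4 := by
      have h1 : (∫ u in s0..t0, r u) ≤ C * (t0 - s0) := rCb s0 t0 hs0lt.le
      have h2 : t0 - s0 ≤ η := by
        have := le_max_right 0 (t0 - η); rw [hs0def]; linarith [le_max_right 0 (t0 - η)]
      have h3 : C * (t0 - s0) ≤ C * η := mul_le_mul_of_nonneg_left h2 hC0.le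
      have h4 : C * η = 1/4 := by rw [hηdef]; field_simp
      linarith
    obtain ⟨us, husmem, husmax⟩ :=
      isCompact_Icc.exists_isMaxOn (α := ℝ) ⟨s0, le_rfl, hs0lt.le⟩ hx_cont.continuousOn
    have husmax' : ∀ s ∈ Icc s0 t0, x s ≤ x us := husmax
    have hSpos : 0 < x us :=
      lt_of_lt_of_le (hpos s0 hs00 hs0lt) (husmax' s0 ⟨le_rfl, hs0lt.le⟩)
    have hbdq : ∀ t, t ∈ Icc s0 t0 → x t ≤ x us / 4 := by
      intro t ht
      have ht0' : 0 ≤ t := hs00.trans ht.1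
      have h1 := key t t0 ht0' ht.2
      have h2 : (∫ u in t..t0, (-(x us)) * r u) ≤
          ∫ u in t..t0, r u * ((∫ s, f (x s) ∂(μ u)) - x u) := by
        refine intervalIntegral.integral_mono_on ht.2 ((rint t t0).const_mul _)
          (intg t t0 ht0' ht.2) ?_
        intro u hu
        have hu0 : 0 ≤ u := ht0'.trans hu.1
        have hF := hFnn u hu0 hu.2
        have hxu : x u ≤ x us := husmax' u ⟨ht.1.trans hu.1, hu.2⟩
        have h3 : -(x us) ≤ (∫ s, f (x s) ∂(μ u)) - x u := by linarith
        calc (-(x us)) * r u = r u * (-(x us)) := by ring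
        _ ≤ r u * ((∫ s, f (x s) ∂(μ u)) - x u) :=
          mul_le_mul_of_nonneg_left h3 (hr_nonneg u)
      rw [intervalIntegral.integral_const_mul] at h2
      have h4 : (∫ u in t..t0, r u) ≤ 1/4 := by
        have h5 := intervalIntegral.integral_add_adjacent_intervals
          (rint s0 t) (rint t t0)
        have h6 := rnn s0 t ht.1
        linarith
      have h7 : -(x us) * (∫ u in t..t0, r u) ≥ -(x us) * (1/4) := by
        have := mul_le_mul_of_nonneg_left h4 hSpos.le
        nlinarith
      linarith
    have := hbdq us husmem
    linarith
  -- max point and sSup characterization for f on intervals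
  have hmaxpt : ∀ a b : ℝ, a ≤ b → ∃ y0, y0 ∈ Icc a b ∧ (∀ y ∈ Icc a b, f y ≤ f y0) ∧
      sSup (f '' Icc a b) = f y0 := by
    intro a b hab
    obtain ⟨y0, hy0, hmax⟩ :=
      isCompact_Icc.exists_isMaxOn (α := ℝ) ⟨a, le_rfl, hab⟩ hf_cont.continuousOn
    have hmax' : ∀ y ∈ Icc a b, f y ≤ f y0 := hmax
    refine ⟨y0, hy0, hmax', le_antisymm (csSup_le ⟨f a, mem_image_of_mem f ⟨le_rfl, hab⟩⟩ ?_)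
      (le_csSup ⟨f y0, ?_⟩ (mem_image_of_mem f hy0))⟩
    · rintro z ⟨y, hy, rfl⟩; exact hmax' y hy
    · rintro z ⟨y, hy, rfl⟩; exact hmax' y hy
  have hminpt : ∀ a b : ℝ, a ≤ b → ∃ y0, y0 ∈ Icc a b ∧ (∀ y ∈ Icc a b, f y0 ≤ f y) ∧
      sInf (f '' Icc a b) = f y0 := by
    intro a b hab
    obtain ⟨y0, hy0, hmin⟩ :=
      isCompact_Icc.exists_isMinOn (α := ℝ) ⟨a, le_rfl, hab⟩ hf_cont.continuousOn
    have hmin' : ∀ y ∈ Icc a b, f y0 ≤ f y := hmin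
    refine ⟨y0, hy0, hmin', le_antisymm (csInf_le ⟨f y0, ?_⟩ (mem_image_of_mem f hy0))
      (le_csInf ⟨f a, mem_image_of_mem f ⟨le_rfl, hab⟩⟩ ?_)⟩
    · rintro z ⟨y, hy, rfl⟩; exact hmin' y hy
    · rintro z ⟨y, hy, rfl⟩; exact hmin' y hy
  obtain ⟨τ, hτpos, hcase⟩ := hnonosc
  rcases hcase with hcase | hcase
  · -- Case 1 : K < x t for t ≥ τ
    obtain ⟨N₁, hN₁0, hN₁⟩ := hhN τ
    set T0 : ℝ := max N₁ τ with hT0def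
    have hT0τ : τ ≤ T0 := le_max_right _ _
    have hT00 : 0 ≤ T0 := hτpos.le.trans hT0τ
    have hhT0 : ∀ v, T0 ≤ v → τ ≤ h v := fun v hv => hN₁ v (le_trans (le_max_left _ _) hv)
    obtain ⟨u₀, hu₀mem, hu₀max⟩ :=
      isCompact_Icc.exists_isMaxOn (α := ℝ) ⟨τ, le_rfl, hT0τ⟩ hx_cont.continuousOn
    have hu₀max' : ∀ s ∈ Icc τ T0, x s ≤ x u₀ := hu₀max
    set M0 : ℝ := x u₀ with hM0def
    have hM0K : K < M0 := hcase u₀ hu₀mem.1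
    -- global upper bound
    have hbound : ∀ t, τ ≤ t → x t ≤ M0 := by
      intro t ht
      by_contra hcon; push_neg at hcon
      have htT0 : T0 < t := by
        by_contra hc; push_neg at hc
        exact absurd (hu₀max' t ⟨ht, hc⟩) (not_le.2 hcon)
      obtain ⟨u₁, hu₁mem, hu₁max⟩ :=
        isCompact_Icc.exists_isMaxOn (α := ℝ) ⟨τ, le_rfl, ht⟩ hx_cont.continuousOn
      have hu₁max' : ∀ s ∈ Icc τ t, x s ≤ x u₁ := hu₁max
      set M1 : ℝ := x u₁ with hM1def
      have hM01 : M0 < M1 := lt_of_lt_of_le hcon (hu₁max' t ⟨ht, le_rfl⟩)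
      have hKM1 : K < M1 := hM0K.trans hM01
      obtain ⟨y0, hy0mem, hy0max, _⟩ := hmaxpt K M1 hKM1.le
      have hfy0 : f y0 < M1 := by
        rcases eq_or_lt_of_le hy0mem.1 with he | hl
        · rw [← he, hfK]; exact hKM1
        · exact lt_of_lt_of_le (hf_above y0 hl).2 hy0mem.2
      set β : ℝ := max (f y0) M0 with hβdef
      have hβM1 : β < M1 := max_lt hfy0 hM01
      have hT0u₁ : T0 < u₁ := by
        by_contra hc; push_neg at hc
        exact absurd (hu₀max' u₁ ⟨hu₁mem.1, hc⟩) (not_le.2 hM01)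
      have hxT0β : x T0 ≤ β := le_trans (hu₀max' T0 ⟨hT0τ, le_rfl⟩) (le_max_right _ _)
      obtain ⟨w, hwT0, hwu₁, hwβ, hwafter⟩ :=
        crossing_above hx_cont hT0u₁.le hxT0β hβM1
      have hw0 : 0 ≤ w := hT00.trans hwT0
      have hkey := keyIoc w u₁ hw0 hwu₁.le
      have hnp : (∫ u in Ioc w u₁, r u * ((∫ s, f (x s) ∂(μ u)) - x u)) ≤ 0 := by
        refine integral_nonpos_of_ae ?_
        filter_upwards [ae_restrict_mem measurableSet_Ioc] with v hv
        simp only [Pi.zero_apply]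
        have hvT0 : T0 < v := lt_of_le_of_lt hwT0 hv.1
        have hv0 : 0 ≤ v := hT00.trans hvT0.le
        have hFv : (∫ s, f (x s) ∂(μ v)) ≤ f y0 := by
          refine Fub v (f y0) hv0 fun s hs1 hs2 => ?_
          have hsτ : τ ≤ s := le_trans (hhT0 v hvT0.le) hs1
          exact hy0max _ ⟨(hcase s hsτ).le, hu₁max' s ⟨hsτ, hs2.trans (hv.2.trans hu₁mem.2)⟩⟩
        have hxv : β < x v := hwafter v hv.1 hv.2
        have hβf : f y0 ≤ β := le_max_left _ _
        have h1 : (∫ s, f (x s) ∂(μ v)) - x v ≤ 0 := by linarith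
        exact mul_nonpos_iff.2 (Or.inl ⟨hr_nonneg v, h1⟩)
      rw [← hkey] at hnp
      linarith
    -- the set of eventual upper bounds
    set E : Set ℝ := {M | K ≤ M ∧ ∃ N, ∀ t, N ≤ t → x t ≤ M} with hEdef
    have hM0E : M0 ∈ E := ⟨hM0K.le, τ, hbound⟩
    have hEbdd : BddBelow E := ⟨K, fun M hM => hM.1⟩
    have hEne : E.Nonempty := ⟨M0, hM0E⟩
    have hIK : K ≤ sInf E := le_csInf hEne (fun M hM => hM.1)
    -- core descent lemma
    have core : ∀ M N ε : ℝ, K < M → 0 < ε → (∀ t, N ≤ t → x t ≤ M) →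
        ∃ N', ∀ t, N' ≤ t → x t ≤ max (sSup (f '' Icc K M)) K + ε := by
      intro M N ε hKM hε hMbd
      obtain ⟨y0, hy0mem, hy0max, hy0sup⟩ := hmaxpt K M hKM.le
      obtain ⟨N₂, hN₂0, hN₂⟩ := hhN (max N τ)
      set T2 : ℝ := max N₂ (max N τ) with hT2def
      have hT2τ : τ ≤ T2 := le_trans (le_max_right N τ) (le_max_right _ _)
      have hT20 : 0 ≤ T2 := hτpos.le.trans hT2τ
      have hhT2 : ∀ v, T2 ≤ v → max N τ ≤ h v := fun v hv =>
        hN₂ v ((le_max_left _ _).trans hv)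
      set β : ℝ := max (f y0) K with hβdef
      have hβf : f y0 ≤ β := le_max_left _ _
      have hβK : K ≤ β := le_max_right _ _
      have hFub : ∀ v, T2 ≤ v → (∫ s, f (x s) ∂(μ v)) ≤ f y0 := by
        intro v hv
        refine Fub v (f y0) (hT20.trans hv) fun s hs1 hs2 => ?_
        have hsN : N ≤ s := le_trans (le_trans (le_max_left N τ) (hhT2 v hv)) hs1
        have hsτ : τ ≤ s := le_trans (le_trans (le_max_right N τ) (hhT2 v hv)) hs1
        exact hy0max _ ⟨(hcase s hsτ).le, hMbd s hsN⟩
      have hstep1 : ∃ t1, T2 ≤ t1 ∧ x t1 ≤ β + ε := by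
        by_contra hcon; push_neg at hcon
        obtain ⟨b, hb1, hb2⟩ := Rdiv T2 ((x T2 - K)/ε) hT20
        have hkey := key T2 b hT20 hb1
        have hmono : (∫ u in T2..b, r u * ((∫ s, f (x s) ∂(μ u)) - x u)) ≤
            ∫ u in T2..b, (-ε) * r u := by
          refine intervalIntegral.integral_mono_on hb1 (intg T2 b hT20 hb1)
            ((rint T2 b).const_mul _) ?_
          intro v hv
          have hFv := hFub v hv.1
          have hxv : β + ε < x v := hcon v hv.1
          have h1 : (∫ s, f (x s) ∂(μ v)) - x v ≤ -ε := by linarith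
          calc r v * ((∫ s, f (x s) ∂(μ v)) - x v) ≤ r v * (-ε) :=
            mul_le_mul_of_nonneg_left h1 (hr_nonneg v)
          _ = (-ε) * r v := by ring
        rw [intervalIntegral.integral_const_mul] at hmono
        have hA : x T2 - K ≤ ε * ∫ u in T2..b, r u := by
          rw [div_le_iff₀ hε] at hb2
          linarith [hb2]
        have hxb : x b ≤ K := by nlinarith [hmono, hkey]
        have := hcon b hb1
        linarith
      obtain ⟨t1, ht1T2, ht1⟩ := hstep1
      refine ⟨t1, fun t ht => ?_⟩
      rw [hy0sup]
      by_contra hcon; push_neg at hcon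
      obtain ⟨w, hwt1, hwt, hwβ, hwafter⟩ := crossing_above hx_cont ht ht1 hcon
      have hw0 : 0 ≤ w := (hT20.trans ht1T2).trans hwt1
      have hkey := keyIoc w t hw0 hwt.le
      have hnp : (∫ u in Ioc w t, r u * ((∫ s, f (x s) ∂(μ u)) - x u)) ≤ 0 := by
        refine integral_nonpos_of_ae ?_
        filter_upwards [ae_restrict_mem measurableSet_Ioc] with v hv
        simp only [Pi.zero_apply]
        have hvT2 : T2 ≤ v := ht1T2.trans (hwt1.trans hv.1.le)
        have hFv := hFub v hvT2
        have hxv : β + ε < x v := hwafter v hv.1 hv.2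
        have h1 : (∫ s, f (x s) ∂(μ v)) - x v ≤ 0 := by linarith
        exact mul_nonpos_iff.2 (Or.inl ⟨hr_nonneg v, h1⟩)
      rw [← hkey] at hnp
      linarith
    -- sInf E = K
    have hIeqK : sInf E = K := by
      by_contra hne
      have hKI : K < sInf E := lt_of_le_of_ne hIK (Ne.symm hne)
      obtain ⟨z0, hz0mem, hz0max, hz0sup⟩ := hmaxpt K (sInf E) hKI.le
      have hz0lt : f z0 < sInf E := by
        rcases eq_or_lt_of_le hz0mem.1 with he | hl
        · rw [← he, hfK]; exact hKI
        · exact lt_of_lt_of_le (hf_above z0 hl).2 hz0mem.2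
      set c : ℝ := max (f z0) K with hcdef
      have hcI : c < sInf E := max_lt hz0lt hKI
      set ε' : ℝ := (sInf E - c)/3 with hε'def
      have hε' : 0 < ε' := by rw [hε'def]; linarith
      obtain ⟨δ, hδ0, hδ⟩ := Metric.continuousAt_iff.1 hf_cont.continuousAt ε' hε'
      obtain ⟨M, hME, hMlt⟩ := exists_lt_of_csInf_lt hEne (lt_add_of_pos_right (sInf E) hδ0)
      have hKM : K ≤ M := hME.1
      rcases eq_or_lt_of_le hKM with he | hKMlt
      · exact hne (le_antisymm (le_trans (csInf_le hEbdd hME) he.symm.le) hIK)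
      · obtain ⟨N, hN⟩ := hME.2
        obtain ⟨N', hN'⟩ := core M N ε' hKMlt hε' hN
        obtain ⟨y1, hy1mem, hy1max, hy1sup⟩ := hmaxpt K M hKMlt.le
        have hvE : max (sSup (f '' Icc K M)) K + ε' ∈ E := by
          refine ⟨?_, N', hN'⟩
          have := le_max_right (sSup (f '' Icc K M)) K
          linarith
        have hIle : sInf E ≤ max (sSup (f '' Icc K M)) K + ε' := csInf_le hEbdd hvE
        have hy1c : f y1 ≤ c + ε' := by
          rcases le_or_gt y1 (sInf E) with hyI | hyI
          · have h1 : f y1 ≤ f z0 := hz0max y1 ⟨hy1mem.1, hyI⟩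
            have := le_max_left (f z0) K
            linarith
          · have h1 : dist y1 (sInf E) < δ := by
              rw [Real.dist_eq, abs_lt]
              constructor
              · linarith
              · linarith [hy1mem.2, hMlt]
            have h2 := hδ h1
            rw [Real.dist_eq, abs_lt] at h2
            have h3 : f (sInf E) ≤ f z0 := hz0max (sInf E) ⟨hKI.le, le_rfl⟩
            have := le_max_left (f z0) K
            linarith [h2.2]
          -- done
        have hKc : K ≤ c := le_max_right _ _
        have hfin : sInf E ≤ c + 2*ε' := by
          rw [hy1sup] at hIle
          have h1 : max (f y1) K ≤ c + ε' := max_le (by linarith) (by linarith)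
          linarith
        rw [hε'def] at hfin
        linarith
    rw [Metric.tendsto_atTop]
    intro ε hε
    have hlt : sInf E < K + ε := by rw [hIeqK]; linarith
    obtain ⟨M, hME, hMlt⟩ := exists_lt_of_csInf_lt hEne hlt
    obtain ⟨N, hN⟩ := hME.2
    refine ⟨max N τ, fun t ht => ?_⟩
    have h1 : x t ≤ M := hN t ((le_max_left _ _).trans ht)
    have h2 : K < x t := hcase t ((le_max_right _ _).trans ht)
    rw [Real.dist_eq, abs_lt]
    constructor <;> linarith
  · -- Case 2 : x t < K for t ≥ τ
    obtain ⟨N₁, hN₁0, hN₁⟩ := hhN τ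
    set T0 : ℝ := max N₁ τ with hT0def
    have hT0τ : τ ≤ T0 := le_max_right _ _
    have hT00 : 0 ≤ T0 := hτpos.le.trans hT0τ
    have hhT0 : ∀ v, T0 ≤ v → τ ≤ h v := fun v hv => hN₁ v (le_trans (le_max_left _ _) hv)
    obtain ⟨u₀, hu₀mem, hu₀min⟩ :=
      isCompact_Icc.exists_isMinOn (α := ℝ) ⟨τ, le_rfl, hT0τ⟩ hx_cont.continuousOn
    have hu₀min' : ∀ s ∈ Icc τ T0, x u₀ ≤ x s := hu₀min
    set m0 : ℝ := x u₀ with hm0def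
    have hm0K : m0 < K := hcase u₀ hu₀mem.1
    have hm0pos : 0 < m0 := xpos u₀ (hτpos.le.trans hu₀mem.1)
    -- global lower bound
    have hbound : ∀ t, τ ≤ t → m0 ≤ x t := by
      intro t ht
      by_contra hcon; push_neg at hcon
      have htT0 : T0 < t := by
        by_contra hc; push_neg at hc
        exact absurd (hu₀min' t ⟨ht, hc⟩) (not_le.2 hcon)
      obtain ⟨u₁, hu₁mem, hu₁min⟩ :=
        isCompact_Icc.exists_isMinOn (α := ℝ) ⟨τ, le_rfl, ht⟩ hx_cont.continuousOn
      have hu₁min' : ∀ s ∈ Icc τ t, x u₁ ≤ x s := hu₁min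
      set m1 : ℝ := x u₁ with hm1def
      have hm01 : m1 < m0 := lt_of_le_of_lt (hu₁min' t ⟨ht, le_rfl⟩) hcon
      have hm1K : m1 < K := hm01.trans hm0K
      have hm1pos : 0 < m1 := xpos u₁ (hτpos.le.trans hu₁mem.1)
      obtain ⟨y0, hy0mem, hy0min, _⟩ := hminpt m1 K hm1K.le
      have hfy0 : m1 < f y0 := by
        rcases eq_or_lt_of_le hy0mem.2 with he | hl
        · rw [he, hfK]; exact hm1K
        · exact lt_of_le_of_lt hy0mem.1 (hf_below y0 (lt_of_lt_of_le hm1pos hy0mem.1) hl)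
      set β : ℝ := min (f y0) m0 with hβdef
      have hβm1 : m1 < β := lt_min hfy0 hm01
      have hT0u₁ : T0 < u₁ := by
        by_contra hc; push_neg at hc
        exact absurd (hu₀min' u₁ ⟨hu₁mem.1, hc⟩) (not_le.2 hm01)
      have hxT0β : β ≤ x T0 := le_trans (min_le_right _ _) (hu₀min' T0 ⟨hT0τ, le_rfl⟩)
      obtain ⟨w, hwT0, hwu₁, hwβ, hwafter⟩ :=
        crossing_below hx_cont hT0u₁.le hxT0β hβm1
      have hw0 : 0 ≤ w := hT00.trans hwT0
      have hkey := keyIoc w u₁ hw0 hwu₁.le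
      have hnp : 0 ≤ (∫ u in Ioc w u₁, r u * ((∫ s, f (x s) ∂(μ u)) - x u)) := by
        refine integral_nonneg_of_ae ?_
        filter_upwards [ae_restrict_mem measurableSet_Ioc] with v hv
        simp only [Pi.zero_apply]
        have hvT0 : T0 < v := lt_of_le_of_lt hwT0 hv.1
        have hv0 : 0 ≤ v := hT00.trans hvT0.le
        have hFv : f y0 ≤ (∫ s, f (x s) ∂(μ v)) := by
          refine Flb v (f y0) hv0 fun s hs1 hs2 => ?_
          have hsτ : τ ≤ s := le_trans (hhT0 v hvT0.le) hs1
          exact hy0min _ ⟨hu₁min' s ⟨hsτ, hs2.trans (hv.2.trans hu₁mem.2)⟩, (hcase s hsτ).le⟩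
        have hxv : x v < β := hwafter v hv.1 hv.2
        have hβf : β ≤ f y0 := min_le_left _ _
        have h1 : 0 ≤ (∫ s, f (x s) ∂(μ v)) - x v := by linarith
        exact mul_nonneg (hr_nonneg v) h1
      rw [← hkey] at hnp
      linarith
    -- the set of eventual lower bounds
    set E : Set ℝ := {m | 0 < m ∧ m ≤ K ∧ ∃ N, ∀ t, N ≤ t → m ≤ x t} with hEdef
    have hm0E : m0 ∈ E := ⟨hm0pos, hm0K.le, τ, hbound⟩
    have hEbdd : BddAbove E := ⟨K, fun m hm => hm.2.1⟩
    have hEne : E.Nonempty := ⟨m0, hm0E⟩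
    have hJK : sSup E ≤ K := csSup_le hEne (fun m hm => hm.2.1)
    have hJ0 : 0 < sSup E := lt_of_lt_of_le hm0pos (le_csSup hEbdd hm0E)
    -- core ascent lemma
    have core : ∀ m N ε : ℝ, 0 < m → m < K → 0 < ε → (∀ t, N ≤ t → m ≤ x t) →
        ∃ N', ∀ t, N' ≤ t → min (sInf (f '' Icc m K)) K - ε ≤ x t := by
      intro m N ε hm0' hmK hε hmbd
      obtain ⟨y0, hy0mem, hy0min, hy0inf⟩ := hminpt m K hmK.le
      obtain ⟨N₂, hN₂0, hN₂⟩ := hhN (max N τ)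
      set T2 : ℝ := max N₂ (max N τ) with hT2def
      have hT2τ : τ ≤ T2 := le_trans (le_max_right N τ) (le_max_right _ _)
      have hT20 : 0 ≤ T2 := hτpos.le.trans hT2τ
      have hhT2 : ∀ v, T2 ≤ v → max N τ ≤ h v := fun v hv =>
        hN₂ v ((le_max_left _ _).trans hv)
      set β : ℝ := min (f y0) K with hβdef
      have hβf : β ≤ f y0 := min_le_left _ _
      have hβK : β ≤ K := min_le_right _ _
      have hFlb : ∀ v, T2 ≤ v → f y0 ≤ (∫ s, f (x s) ∂(μ v)) := by
        intro v hv
        refine Flb v (f y0) (hT20.trans hv) fun s hs1 hs2 => ?_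
        have hsN : N ≤ s := le_trans (le_trans (le_max_left N τ) (hhT2 v hv)) hs1
        have hsτ : τ ≤ s := le_trans (le_trans (le_max_right N τ) (hhT2 v hv)) hs1
        exact hy0min _ ⟨hmbd s hsN, (hcase s hsτ).le⟩
      have hstep1 : ∃ t1, T2 ≤ t1 ∧ β - ε ≤ x t1 := by
        by_contra hcon; push_neg at hcon
        obtain ⟨b, hb1, hb2⟩ := Rdiv T2 ((K - x T2)/ε) hT20
        have hkey := key T2 b hT20 hb1
        have hmono : (∫ u in T2..b, ε * r u) ≤
            ∫ u in T2..b, r u * ((∫ s, f (x s) ∂(μ u)) - x u) := by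
          refine intervalIntegral.integral_mono_on hb1 ((rint T2 b).const_mul _)
            (intg T2 b hT20 hb1) ?_
          intro v hv
          have hFv := hFlb v hv.1
          have hxv : x v < β - ε := hcon v hv.1
          have h1 : ε ≤ (∫ s, f (x s) ∂(μ v)) - x v := by linarith
          calc ε * r v = r v * ε := by ring
          _ ≤ r v * ((∫ s, f (x s) ∂(μ v)) - x v) :=
            mul_le_mul_of_nonneg_left h1 (hr_nonneg v)
        rw [intervalIntegral.integral_const_mul] at hmono
        have hA : K - x T2 ≤ ε * ∫ u in T2..b, r u := by
          rw [div_le_iff₀ hε] at hb2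
          linarith [hb2]
        have hxb : K ≤ x b := by nlinarith [hmono, hkey]
        have := hcon b hb1
        linarith
      obtain ⟨t1, ht1T2, ht1⟩ := hstep1
      refine ⟨t1, fun t ht => ?_⟩
      rw [hy0inf]
      by_contra hcon; push_neg at hcon
      obtain ⟨w, hwt1, hwt, hwβ, hwafter⟩ := crossing_below hx_cont ht ht1 hcon
      have hw0 : 0 ≤ w := (hT20.trans ht1T2).trans hwt1
      have hkey := keyIoc w t hw0 hwt.le
      have hnp : 0 ≤ (∫ u in Ioc w t, r u * ((∫ s, f (x s) ∂(μ u)) - x u)) := by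
        refine integral_nonneg_of_ae ?_
        filter_upwards [ae_restrict_mem measurableSet_Ioc] with v hv
        simp only [Pi.zero_apply]
        have hvT2 : T2 ≤ v := ht1T2.trans (hwt1.trans hv.1.le)
        have hFv := hFlb v hvT2
        have hxv : x v < β - ε := hwafter v hv.1 hv.2
        have h1 : 0 ≤ (∫ s, f (x s) ∂(μ v)) - x v := by linarith
        exact mul_nonneg (hr_nonneg v) h1
      rw [← hkey] at hnp
      linarith
    -- sSup E = K
    have hJeqK : sSup E = K := by
      by_contra hne
      have hJK' : sSup E < K := lt_of_le_of_ne hJK hne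
      obtain ⟨z0, hz0mem, hz0min, hz0inf⟩ := hminpt (sSup E) K hJK'.le
      have hz0gt : sSup E < f z0 := by
        rcases eq_or_lt_of_le hz0mem.2 with he | hl
        · rw [he, hfK]; exact hJK'
        · exact lt_of_le_of_lt hz0mem.1 (hf_below z0 (lt_of_lt_of_le hJ0 hz0mem.1) hl)
      set c : ℝ := min (f z0) K with hcdef
      have hcJ : sSup E < c := lt_min hz0gt hJK'
      set ε' : ℝ := min ((c - sSup E)/3) ((sSup E)/2) with hε'def
      have hε' : 0 < ε' := lt_min (by linarith) (by linarith)
      have hε'le : ε' ≤ (c - sSup E)/3 := min_le_left _ _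
      obtain ⟨δ₀, hδ₀0, hδ₀⟩ := Metric.continuousAt_iff.1 hf_cont.continuousAt ε' hε'
      set δ : ℝ := min δ₀ ((sSup E)/2) with hδdef
      have hδ0 : 0 < δ := lt_min hδ₀0 (by linarith)
      obtain ⟨m, hmE, hmgt⟩ := exists_lt_of_lt_csSup hEne (by linarith : sSup E - δ < sSup E)
      have hmJ : m ≤ sSup E := le_csSup hEbdd hmE
      have hmK : m < K := lt_of_le_of_lt hmJ hJK'
      have hm0' : 0 < m := hmE.1
      obtain ⟨N, hN⟩ := hmE.2.2
      obtain ⟨N', hN'⟩ := core m N ε' hm0' hmK hε' hN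
      obtain ⟨y1, hy1mem, hy1min, hy1inf⟩ := hminpt m K hmK.le
      have hy1c : c - ε' ≤ f y1 := by
        rcases le_or_gt (sSup E) y1 with hyJ | hyJ
        · have h1 : f z0 ≤ f y1 := hz0min y1 ⟨hyJ, hy1mem.2⟩
          have := min_le_left (f z0) K
          linarith
        · have h1 : dist y1 (sSup E) < δ₀ := by
            rw [Real.dist_eq, abs_lt]
            constructor
            · have h2 : sSup E - δ < y1 := lt_of_lt_of_le hmgt hy1mem.1
              have h3 : δ ≤ δ₀ := min_le_left _ _
              linarith
            · linarith
          have h2 := hδ₀ h1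
          rw [Real.dist_eq, abs_lt] at h2
          have h3 : f z0 ≤ f (sSup E) := hz0min (sSup E) ⟨le_rfl, hJK'.le⟩
          have := min_le_left (f z0) K
          linarith [h2.1]
      have hvE : min (sInf (f '' Icc m K)) K - ε' ∈ E := by
        refine ⟨?_, ?_, N', hN'⟩
        · rw [hy1inf]
          have h1 : c - ε' ≤ min (f y1) K := le_min (by linarith) (by
            have := min_le_right (f z0) K; linarith)
          have h2 : (c - sSup E)/3 ≤ (c - sSup E)/3 := le_rfl
          have h3 : sSup E < c - 2*ε' := by linarith
          linarith [hJ0]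
        · have := min_le_right (sInf (f '' Icc m K)) K
          linarith
      have hJge : min (sInf (f '' Icc m K)) K - ε' ≤ sSup E := le_csSup hEbdd hvE
      rw [hy1inf] at hJge
      have h1 : c - ε' ≤ min (f y1) K := le_min (by linarith) (by
        have := min_le_right (f z0) K; linarith)
      linarith
    rw [Metric.tendsto_atTop]
    intro ε hε
    have hlt : K - ε < sSup E := by rw [hJeqK]; linarith
    obtain ⟨m, hmE, hmgt⟩ := exists_lt_of_lt_csSup hEne hlt
    obtain ⟨N, hN⟩ := hmE.2.2
    refine ⟨max N τ, fun t ht => ?_⟩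
    have h1 : m ≤ x t := hN t ((le_max_left _ _).trans ht)
    have h2 : x t < K := hcase t ((le_max_right _ _).trans ht)
    rw [Real.dist_eq, abs_lt]
    constructor <;> linarith
end

section
/- Under hypotheses (a1)–(a5), if in addition f(x) < K for every x with 0 < x < K, then every solution x of the initial value problem for the distributed-delay equation satisfies lim_{t→∞} x(t) = K. -/
open MeasureTheory Filter Set Topology

/-- Integral bounds against a probability measure supported in `s`. -/
lemma dds_int_bounds {ν : Measure ℝ} [IsProbabilityMeasure ν] {g : ℝ → ℝ} {s : Set ℝ}
    (hg : AEStronglyMeasurable g ν) (hs : ν sᶜ = 0) {lo hi : ℝ}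
    (hb : ∀ y ∈ s, lo ≤ g y ∧ g y ≤ hi) :
    lo ≤ (∫ y, g y ∂ν) ∧ (∫ y, g y ∂ν) ≤ hi := by
  have hae : ∀ᵐ y ∂ν, y ∈ s := by
    rw [ae_iff]
    exact hs
  have hint : Integrable g ν := by
    refine Integrable.mono' (integrable_const (max |lo| |hi|)) hg ?_
    filter_upwards [hae] with y hy
    have h1 := (hb y hy).1
    have h2 := (hb y hy).2
    rw [Real.norm_eq_abs, abs_le]
    constructor
    · calc -(max |lo| |hi|) ≤ -|lo| := by simp [neg_le_neg_iff]
        _ ≤ lo := neg_abs_le lo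
        _ ≤ g y := h1
    · exact h2.trans ((le_abs_self hi).trans (le_max_right _ _))
  constructor
  · have h1 : (∫ _, lo ∂ν) ≤ ∫ y, g y ∂ν := by
      refine integral_mono_ae (integrable_const lo) hint ?_
      filter_upwards [hae] with y hy using (hb y hy).1
    simpa using h1
  · have h2 : (∫ y, g y ∂ν) ≤ ∫ _, hi ∂ν := by
      refine integral_mono_ae hint (integrable_const hi) ?_
      filter_upwards [hae] with y hy using (hb y hy).2
    simpa using h2

/-- comparison estimate, upper version -/
lemma dds_est_upper {x F r : ℝ → ℝ} {a b D : ℝ} (hab : a ≤ b)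
    (hr0 : ∀ u, 0 ≤ r u) (hrI : IntervalIntegrable r volume a b)
    (hint : IntervalIntegrable (fun u => r u * (F u - x u)) volume a b)
    (heq : x b - x a = ∫ u in a..b, r u * (F u - x u))
    (hD : ∀ u ∈ Ioc a b, F u - x u ≤ D) :
    x b - x a ≤ D * ∫ u in a..b, r u := by
  have h1 : (∫ u in a..b, r u * (F u - x u)) ≤ ∫ u in a..b, r u * D := by
    refine intervalIntegral.integral_mono_ae_restrict hab hint (hrI.mul_const D) ?_
    have hne : ∀ᵐ u ∂(volume.restrict (Icc a b)), u ≠ a := by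
      refine ae_restrict_of_ae ?_
      have : (volume : Measure ℝ) {a} = 0 := measure_singleton a
      rw [ae_iff]; simpa using this
    filter_upwards [hne, ae_restrict_mem measurableSet_Icc] with u hu hmem
    have hu' : u ∈ Ioc a b := ⟨lt_of_le_of_ne hmem.1 (Ne.symm hu), hmem.2⟩
    exact mul_le_mul_of_nonneg_left (hD u hu') (hr0 u)
  rw [heq]
  calc (∫ u in a..b, r u * (F u - x u)) ≤ ∫ u in a..b, r u * D := h1
    _ = (∫ u in a..b, r u) * D := intervalIntegral.integral_mul_const D r
    _ = D * ∫ u in a..b, r u := mul_comm _ _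

/-- comparison estimate, lower version -/
lemma dds_est_lower {x F r : ℝ → ℝ} {a b D : ℝ} (hab : a ≤ b)
    (hr0 : ∀ u, 0 ≤ r u) (hrI : IntervalIntegrable r volume a b)
    (hint : IntervalIntegrable (fun u => r u * (F u - x u)) volume a b)
    (heq : x b - x a = ∫ u in a..b, r u * (F u - x u))
    (hD : ∀ u ∈ Ioc a b, D ≤ F u - x u) :
    D * (∫ u in a..b, r u) ≤ x b - x a := by
  have h1 : (∫ u in a..b, r u * D) ≤ ∫ u in a..b, r u * (F u - x u) := by
    refine intervalIntegral.integral_mono_ae_restrict hab (hrI.mul_const D) hint ?_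
    have hne : ∀ᵐ u ∂(volume.restrict (Icc a b)), u ≠ a := by
      refine ae_restrict_of_ae ?_
      have : (volume : Measure ℝ) {a} = 0 := measure_singleton a
      rw [ae_iff]; simpa using this
    filter_upwards [hne, ae_restrict_mem measurableSet_Icc] with u hu hmem
    have hu' : u ∈ Ioc a b := ⟨lt_of_le_of_ne hmem.1 (Ne.symm hu), hmem.2⟩
    exact mul_le_mul_of_nonneg_left (hD u hu') (hr0 u)
  rw [heq]
  calc D * (∫ u in a..b, r u) = (∫ u in a..b, r u) * D := mul_comm _ _
    _ = ∫ u in a..b, r u * D := (intervalIntegral.integral_mul_const D r).symm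
    _ ≤ _ := h1

set_option maxHeartbeats 2000000 in
theorem distributed_delay_stability_f_below_K
    (f : ℝ → ℝ) (L K : ℝ) (hL : 0 ≤ L) (hK : 0 < K)
    (h r : ℝ → ℝ) (μ : ℝ → Measure ℝ) (φ : ℝ → ℝ)
    (hf_cont : Continuous f)
    (hf_nonneg : ∀ y : ℝ, 0 ≤ y → 0 ≤ f y)
    (hf_lip : ∀ u v : ℝ, 0 ≤ u → 0 ≤ v → |f u - f v| ≤ L * |u - v|)
    (hf_zero : f 0 = 0)
    (hf_below : ∀ y : ℝ, 0 < y → y < K → y < f y)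
    (hf_above : ∀ y : ℝ, K < y → 0 < f y ∧ f y < y)
    (hh_meas : Measurable h)
    (hh_le : ∀ t : ℝ, 0 ≤ t → h t ≤ t)
    (hh_tend : Tendsto h atTop atTop)
    (hr_meas : Measurable r)
    (hr_nonneg : ∀ t : ℝ, 0 ≤ r t)
    (hr_bdd : ∃ C : ℝ, ∀ᵐ t ∂volume, r t ≤ C)
    (hr_div : ¬ IntegrableOn r (Ici (0 : ℝ)))
    (hμ_prob : ∀ t : ℝ, 0 ≤ t → IsProbabilityMeasure (μ t))
    (hμ_supp : ∀ t : ℝ, 0 ≤ t → μ t (Icc (h t) t)ᶜ = 0)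
    (hμ_meas : ∀ g : ℝ → ℝ, Measurable g → (∃ C : ℝ, ∀ y : ℝ, |g y| ≤ C) →
      Measurable (fun t => ∫ s, g s ∂(μ t)))
    (hφ_cont : ContinuousOn φ (Iic (0 : ℝ)))
    (hφ_bdd : ∃ C : ℝ, ∀ t : ℝ, t ≤ 0 → |φ t| ≤ C)
    (hφ_nonneg : ∀ t : ℝ, t ≤ 0 → 0 ≤ φ t)
    (hφ_pos : 0 < φ 0)
    (hfK : ∀ y : ℝ, 0 < y → y < K → f y < K)
    (x : ℝ → ℝ)
    (hx_cont : Continuous x)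
    (hx_init : ∀ t : ℝ, t ≤ 0 → x t = φ t)
    (hx_sol : ∀ t : ℝ, 0 ≤ t →
      x t = φ 0 + ∫ u in (0:ℝ)..t, r u * ((∫ s, f (x s) ∂(μ u)) - x u))
    :
    Tendsto x atTop (nhds K) := by
  classical
  -- constants
  obtain ⟨C0, hC0⟩ := hr_bdd
  set C : ℝ := max C0 1 with hCdef
  have hC1 : (1:ℝ) ≤ C := le_max_right _ _
  have hCpos : (0:ℝ) < C := lt_of_lt_of_le one_pos hC1
  have hrC : ∀ᵐ t ∂(volume : Measure ℝ), r t ≤ C :=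
    hC0.mono fun t ht => ht.trans (le_max_left _ _)
  obtain ⟨Cφ, hCφ⟩ := hφ_bdd
  set B : ℝ := max K Cφ with hBdef
  have hKB : K ≤ B := le_max_left _ _
  have hx0 : x 0 = φ 0 := hx_init 0 le_rfl
  have hxpos0 : 0 < x 0 := by rw [hx0]; exact hφ_pos
  have hxφ : ∀ s : ℝ, s ≤ 0 → 0 ≤ x s ∧ x s ≤ Cφ := by
    intro s hs
    rw [hx_init s hs]
    exact ⟨hφ_nonneg s hs, (le_abs_self _).trans (hCφ s hs)⟩
  -- facts about f
  have hfK_eq : f K = K := by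
    have h1 : f K ≤ K := by
      have hne : (𝓝[>] K).NeBot := nhdsGT_neBot K
      have ht : Tendsto f (𝓝[>] K) (𝓝 (f K)) :=
        (hf_cont.tendsto K).mono_left nhdsWithin_le_nhds
      have ht2 : Tendsto id (𝓝[>] K) (𝓝 K) :=
        tendsto_id.mono_left nhdsWithin_le_nhds
      refine le_of_tendsto_of_tendsto ht ht2 ?_
      filter_upwards [self_mem_nhdsWithin] with y hy
      exact le_of_lt (hf_above y hy).2
    have h2 : K ≤ f K := by
      have hne : (𝓝[<] K).NeBot := nhdsLT_neBot K
      have ht : Tendsto f (𝓝[<] K) (𝓝 (f K)) :=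
        (hf_cont.tendsto K).mono_left nhdsWithin_le_nhds
      have ht2 : Tendsto id (𝓝[<] K) (𝓝 K) :=
        tendsto_id.mono_left nhdsWithin_le_nhds
      refine le_of_tendsto_of_tendsto ht2 ht ?_
      have hIoo : Ioo 0 K ∈ 𝓝[<] K := by
        refine mem_nhdsWithin.2 ⟨Ioi 0, isOpen_Ioi, hK, ?_⟩
        rintro y ⟨hy1, hy2⟩
        exact ⟨hy1, hy2⟩
      filter_upwards [hIoo] with y hy
      exact le_of_lt (hf_below y hy.1 hy.2)
    linarith
  have hf_pos : ∀ y : ℝ, 0 < y → 0 < f y := by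
    intro y hy
    rcases lt_trichotomy y K with hlt | heq | hgt
    · exact hy.trans (hf_below y hy hlt)
    · rw [heq, hfK_eq]; exact hK
    · exact (hf_above y hgt).1
  have hf_le_max : ∀ y : ℝ, 0 ≤ y → f y ≤ max y K := by
    intro y hy
    rcases eq_or_lt_of_le hy with heq | hpos
    · rw [← heq, hf_zero]; positivity
    rcases lt_trichotomy y K with hlt | heq | hgt
    · exact le_trans (le_of_lt (hfK y hpos hlt)) (le_max_right _ _)
    · rw [heq, hfK_eq]; exact le_max_right _ _
    · exact le_trans (le_of_lt (hf_above y hgt).2) (le_max_left _ _)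
  set F : ℝ → ℝ := fun u => ∫ s, f (x s) ∂(μ u) with hFdef
  -- r integrable on intervals
  have hrI : ∀ a b : ℝ, IntervalIntegrable r volume a b := by
    intro a b
    refine IntervalIntegrable.mono_fun' (g := fun _ => C) ?_ ?_ ?_
    · exact intervalIntegrable_const
    · exact hr_meas.aestronglyMeasurable
    · filter_upwards [ae_restrict_of_ae hrC] with t ht
      rw [Real.norm_eq_abs, abs_of_nonneg (hr_nonneg t)]
      exact ht
  have hrB : ∀ a b : ℝ, a ≤ b →
      (0 ≤ ∫ u in a..b, r u) ∧ (∫ u in a..b, r u) ≤ C * (b - a) := by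
    intro a b hab
    constructor
    · exact intervalIntegral.integral_nonneg hab (fun u _ => hr_nonneg u)
    · have h1 : (∫ u in a..b, r u) ≤ ∫ u in a..b, C := by
        exact intervalIntegral.integral_mono_ae hab (hrI a b) intervalIntegrable_const hrC
      have h2 : (∫ u in a..b, (C:ℝ)) = (b - a) * C := by
        simp [intervalIntegral.integral_const, smul_eq_mul]
      rw [h2] at h1
      linarith [h1]
  -- boundedness of x and f∘x on half-lines
  have hxbdd : ∀ T : ℝ, ∃ BT : ℝ, 0 ≤ BT ∧ ∀ s : ℝ, s ≤ T → |x s| ≤ BT := by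
    intro T
    rcases le_or_gt T 0 with hT | hT
    · refine ⟨|Cφ|, abs_nonneg _, fun s hs => ?_⟩
      have h2 := hxφ s (hs.trans hT)
      rw [abs_of_nonneg h2.1]
      exact h2.2.trans (le_abs_self _)
    · obtain ⟨t0, ht0, hmax⟩ := isCompact_Icc.exists_isMaxOn (α := ℝ)
        (Set.nonempty_Icc.2 (le_of_lt hT)) ((continuous_abs.comp hx_cont).continuousOn (s := Icc 0 T))
      refine ⟨max |Cφ| |x t0|, le_trans (abs_nonneg _) (le_max_left _ _), fun s hs => ?_⟩
      rcases le_or_gt s 0 with hs0 | hs0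
      · have := hxφ s hs0
        rw [abs_of_nonneg this.1]
        exact le_trans (this.2.trans (le_abs_self _)) (le_max_left _ _)
      · have hmem : s ∈ Icc (0:ℝ) T := ⟨le_of_lt hs0, hs⟩
        exact le_trans (hmax hmem) (le_max_right _ _)
  have hfxbdd : ∀ T : ℝ, ∃ Df : ℝ, 0 ≤ Df ∧ ∀ s : ℝ, s ≤ T → |f (x s)| ≤ Df := by
    intro T
    obtain ⟨BT, hBT0, hBT⟩ := hxbdd T
    obtain ⟨y0, hy0, hmax⟩ := isCompact_Icc.exists_isMaxOn (α := ℝ)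
      (Set.nonempty_Icc.2 (by linarith : -BT ≤ BT))
      ((continuous_abs.comp hf_cont).continuousOn (s := Icc (-BT) BT))
    refine ⟨|f y0|, abs_nonneg _, fun s hs => ?_⟩
    have hmem : x s ∈ Icc (-BT) BT := by
      have := hBT s hs
      rw [abs_le] at this
      exact ⟨this.1, this.2⟩
    exact hmax hmem
  -- integrability of the integrand
  have hInt : ∀ b : ℝ, 0 ≤ b → IntegrableOn (fun u => r u * (F u - x u)) (Icc 0 b) volume := by
    intro b hb
    obtain ⟨BT, hBT0, hBT⟩ := hxbdd b
    obtain ⟨Df, hDf0, hDf⟩ := hfxbdd b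
    set g : ℝ → ℝ := fun s => f (x (min s b)) with hgdef
    have hgmeas : Measurable g :=
      (hf_cont.comp (hx_cont.comp (continuous_id.min continuous_const))).measurable
    have hgbdd : ∀ y : ℝ, |g y| ≤ Df := fun y => hDf _ (min_le_right _ _)
    have hGmeas : Measurable (fun u => ∫ s, g s ∂(μ u)) := hμ_meas g hgmeas ⟨Df, hgbdd⟩
    set G : ℝ → ℝ := fun u => ∫ s, g s ∂(μ u) with hGdef
    have hFG : ∀ u ∈ Icc (0:ℝ) b, F u = G u := by
      intro u hu
      haveI := hμ_prob u hu.1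
      have hae : ∀ᵐ s ∂(μ u), s ∈ Icc (h u) u := by
        rw [ae_iff]; exact hμ_supp u hu.1
      refine integral_congr_ae ?_
      filter_upwards [hae] with s hs
      have : min s b = s := min_eq_left (hs.2.trans hu.2)
      rw [hgdef]; simp only [this]
    have hGbdd : ∀ u ∈ Icc (0:ℝ) b, |G u| ≤ Df := by
      intro u hu
      haveI := hμ_prob u hu.1
      have := norm_integral_le_of_norm_le_const (μ := μ u) (f := g) (C := Df)
        (Filter.Eventually.of_forall (fun s => by rw [Real.norm_eq_abs]; exact hgbdd s))
      rw [probReal_univ, mul_one, Real.norm_eq_abs] at this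
      exact this
    have hmeas2 : Measurable (fun u => r u * (G u - x u)) :=
      hr_meas.mul (hGmeas.sub hx_cont.measurable)
    have hint2 : IntegrableOn (fun u => r u * (G u - x u)) (Icc 0 b) volume := by
      refine Integrable.mono' (g := fun _ => C * (Df + BT))
        (integrableOn_const ?_) hmeas2.aestronglyMeasurable.restrict ?_
      · exact isCompact_Icc.measure_lt_top.ne
      · filter_upwards [ae_restrict_of_ae hrC, ae_restrict_mem measurableSet_Icc] with u hu hmem
        rw [Real.norm_eq_abs, abs_mul, abs_of_nonneg (hr_nonneg u)]
        have h1 : |G u - x u| ≤ Df + BT := by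
          have := hGbdd u hmem
          have hx := hBT u hmem.2
          calc |G u - x u| ≤ |G u| + |x u| := abs_sub _ _
            _ ≤ Df + BT := by linarith
        exact mul_le_mul hu h1 (abs_nonneg _) (le_of_lt hCpos)
    refine hint2.congr_fun ?_ measurableSet_Icc
    intro u hu
    simp only [hFG u hu]
  have hIntI : ∀ a b : ℝ, 0 ≤ a → 0 ≤ b →
      IntervalIntegrable (fun u => r u * (F u - x u)) volume a b := by
    intro a b ha hb
    rcases le_total a b with hab | hab
    · rw [intervalIntegrable_iff_integrableOn_Ioc_of_le hab]
      exact (hInt b hb).mono_set (Ioc_subset_Icc_self.trans (Icc_subset_Icc_left ha))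
    · have : IntervalIntegrable (fun u => r u * (F u - x u)) volume b a := by
        rw [intervalIntegrable_iff_integrableOn_Ioc_of_le hab]
        exact (hInt a ha).mono_set (Ioc_subset_Icc_self.trans (Icc_subset_Icc_left hb))
      exact this.symm
  have hsol : ∀ a b : ℝ, 0 ≤ a → a ≤ b →
      x b - x a = ∫ u in a..b, r u * (F u - x u) := by
    intro a b ha hab
    have hb : (0:ℝ) ≤ b := ha.trans hab
    have e1 := hx_sol a ha
    have e2 := hx_sol b hb
    have : x b - x a = (∫ u in (0:ℝ)..b, r u * (F u - x u)) -
        ∫ u in (0:ℝ)..a, r u * (F u - x u) := by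
      simp only [hFdef]
      rw [e2, e1]; ring
    rw [this]
    exact intervalIntegral.integral_interval_sub_left (hIntI 0 b le_rfl hb) (hIntI 0 a le_rfl ha)
  -- bounds for F
  have hFb : ∀ u : ℝ, 0 ≤ u → ∀ lo hi : ℝ,
      (∀ s : ℝ, h u ≤ s → s ≤ u → lo ≤ f (x s) ∧ f (x s) ≤ hi) →
      lo ≤ F u ∧ F u ≤ hi := by
    intro u hu lo hi hb
    haveI := hμ_prob u hu
    exact dds_int_bounds ((hf_cont.comp hx_cont).aestronglyMeasurable)
      (hμ_supp u hu) (fun y hy => hb y hy.1 hy.2)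
  -- divergence of the integral of r
  have hI_tend : Tendsto (fun t => ∫ u in (0:ℝ)..t, r u) atTop atTop := by
    set I : ℝ → ℝ := fun t => ∫ u in (0:ℝ)..t, r u with hIdef
    have hmono : ∀ s t : ℝ, s ≤ t → I s ≤ I t := by
      intro s t hst
      have : I t - I s = ∫ u in s..t, r u :=
        intervalIntegral.integral_interval_sub_left (hrI 0 t) (hrI 0 s)
      have h2 := (hrB s t hst).1
      linarith [this ▸ h2]
    have hunb : ∀ M : ℝ, ∃ t : ℝ, M ≤ I t := by
      intro M
      by_contra hcon
      push_neg at hcon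
      have hIoi : IntegrableOn r (Ioi (0:ℝ)) volume := by
        refine integrableOn_Ioi_of_intervalIntegral_norm_bounded M 0
          (f := r) (b := fun i : ℝ => i) (l := atTop) ?_ tendsto_id ?_
        · intro i
          exact (hrI 0 i).1
        · filter_upwards [eventually_ge_atTop (0:ℝ)] with i hi
          show (∫ u in (0:ℝ)..i, ‖r u‖) ≤ M
          have heq : (∫ u in (0:ℝ)..i, ‖r u‖) = ∫ u in (0:ℝ)..i, r u := by
            refine intervalIntegral.integral_congr ?_
            intro u _
            show ‖r u‖ = r u
            rw [Real.norm_eq_abs, abs_of_nonneg (hr_nonneg u)]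
          rw [heq]
          exact le_of_lt (hcon i)
      exact hr_div ((integrableOn_Ici_iff_integrableOn_Ioi (by simp)).2 hIoi)
    rw [tendsto_atTop]
    intro M
    obtain ⟨t0, ht0⟩ := hunb M
    filter_upwards [eventually_ge_atTop t0] with t ht
    exact le_trans ht0 (hmono t0 t ht)
  -- left-limit helpers
  have hleft_le : ∀ τ a0 P : ℝ, a0 ≤ τ → (∀ s, a0 ≤ s → s < τ → x s ≤ P) →
      x a0 ≤ P → x τ ≤ P := by
    intro τ a0 P hτ hbef hbase
    rcases eq_or_lt_of_le hτ with heq | hlt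
    · rw [← heq]; exact hbase
    · have hcl : τ ∈ closure (Ico a0 τ) := by
        rw [closure_Ico (ne_of_lt hlt)]
        exact ⟨le_of_lt hlt, le_rfl⟩
      haveI hne : (𝓝[Ico a0 τ] τ).NeBot := mem_closure_iff_nhdsWithin_neBot.1 hcl
      have htd : Tendsto x (𝓝[Ico a0 τ] τ) (𝓝 (x τ)) :=
        (hx_cont.tendsto τ).mono_left nhdsWithin_le_nhds
      refine le_of_tendsto htd ?_
      filter_upwards [self_mem_nhdsWithin] with s hs
      exact hbef s hs.1 hs.2
  have hleft_ge : ∀ τ a0 P : ℝ, a0 ≤ τ → (∀ s, a0 ≤ s → s < τ → P ≤ x s) →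
      P ≤ x a0 → P ≤ x τ := by
    intro τ a0 P hτ hbef hbase
    rcases eq_or_lt_of_le hτ with heq | hlt
    · rw [← heq]; exact hbase
    · have hcl : τ ∈ closure (Ico a0 τ) := by
        rw [closure_Ico (ne_of_lt hlt)]
        exact ⟨le_of_lt hlt, le_rfl⟩
      haveI hne : (𝓝[Ico a0 τ] τ).NeBot := mem_closure_iff_nhdsWithin_neBot.1 hcl
      have htd : Tendsto x (𝓝[Ico a0 τ] τ) (𝓝 (x τ)) :=
        (hx_cont.tendsto τ).mono_left nhdsWithin_le_nhds
      refine ge_of_tendsto htd ?_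
      filter_upwards [self_mem_nhdsWithin] with s hs
      exact hbef s hs.1 hs.2
  -- crossing lemmas
  have hcross : ∀ a b P : ℝ, a ≤ b → x a ≤ P → P < x b →
      ∃ c, a ≤ c ∧ c < b ∧ x c ≤ P ∧ ∀ u, c < u → u ≤ b → P < x u := by
    intro a b P hab hxa hxb
    set S : Set ℝ := Icc a b ∩ {u | x u ≤ P} with hSdef
    have hScl : IsClosed S := isClosed_Icc.inter (isClosed_le hx_cont continuous_const)
    have hSne : S.Nonempty := ⟨a, ⟨le_rfl, hab⟩, hxa⟩
    have hSbdd : BddAbove S := bddAbove_Icc.mono inter_subset_left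
    have hcS : sSup S ∈ S := hScl.csSup_mem hSne hSbdd
    refine ⟨sSup S, hcS.1.1, ?_, hcS.2, ?_⟩
    · rcases eq_or_lt_of_le hcS.1.2 with heq | hlt
      · exfalso; rw [heq] at hcS; exact absurd hxb (not_lt.2 hcS.2)
      · exact hlt
    · intro u hcu hub
      by_contra hP
      push_neg at hP
      have : u ∈ S := ⟨⟨le_trans hcS.1.1 (le_of_lt hcu), hub⟩, hP⟩
      exact absurd (le_csSup hSbdd this) (not_le.2 hcu)
  have hcrossL : ∀ a b P : ℝ, a ≤ b → P ≤ x a → x b < P →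
      ∃ c, a ≤ c ∧ c < b ∧ P ≤ x c ∧ ∀ u, c < u → u ≤ b → x u < P := by
    intro a b P hab hxa hxb
    set S : Set ℝ := Icc a b ∩ {u | P ≤ x u} with hSdef
    have hScl : IsClosed S := isClosed_Icc.inter (isClosed_le continuous_const hx_cont)
    have hSne : S.Nonempty := ⟨a, ⟨le_rfl, hab⟩, hxa⟩
    have hSbdd : BddAbove S := bddAbove_Icc.mono inter_subset_left
    have hcS : sSup S ∈ S := hScl.csSup_mem hSne hSbdd
    refine ⟨sSup S, hcS.1.1, ?_, hcS.2, ?_⟩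
    · rcases eq_or_lt_of_le hcS.1.2 with heq | hlt
      · exfalso; rw [heq] at hcS; exact absurd hxb (not_lt.2 hcS.2)
      · exact hlt
    · intro u hcu hub
      by_contra hP
      push_neg at hP
      have : u ∈ S := ⟨⟨le_trans hcS.1.1 (le_of_lt hcu), hub⟩, hP⟩
      exact absurd (le_csSup hSbdd this) (not_le.2 hcu)
  -- positivity of x on [0, ∞)
  have hxpos : ∀ t : ℝ, 0 ≤ t → 0 < x t := by
    by_contra hcon
    push_neg at hcon
    obtain ⟨t, ht0, hxt⟩ := hcon
    set Z : Set ℝ := Ici 0 ∩ {t | x t ≤ 0} with hZdef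
    have hZcl : IsClosed Z := isClosed_Ici.inter (isClosed_le hx_cont continuous_const)
    have hZne : Z.Nonempty := ⟨t, ht0, hxt⟩
    have hZbdd : BddBelow Z := ⟨0, fun z hz => hz.1⟩
    set τ := sInf Z with hτdef
    have hτZ : τ ∈ Z := hZcl.csInf_mem hZne hZbdd
    have hτ0 : 0 ≤ τ := hτZ.1
    have hbefore : ∀ s, 0 ≤ s → s < τ → 0 < x s := by
      intro s hs0 hsτ
      by_contra hno
      push_neg at hno
      exact absurd (csInf_le hZbdd ⟨hs0, hno⟩) (not_le.2 hsτ)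
    have hτpos : 0 < τ := by
      rcases eq_or_lt_of_le hτ0 with heq | hlt
      · exfalso; rw [← heq] at hτZ; exact absurd hτZ.2 (not_le.2 hxpos0)
      · exact hlt
    have hxτ : x τ = 0 := le_antisymm hτZ.2
      (hleft_ge τ 0 0 hτ0 (fun s hs hsτ => le_of_lt (hbefore s hs hsτ)) (le_of_lt hxpos0))
    have hxleτ : ∀ s : ℝ, s ≤ τ → 0 ≤ x s := by
      intro s hs
      rcases le_or_gt s 0 with hs0 | hs0
      · exact (hxφ s hs0).1
      rcases eq_or_lt_of_le hs with heq | hlt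
      · rw [heq, hxτ]
      · exact le_of_lt (hbefore s (le_of_lt hs0) hlt)
    set a := max 0 (τ - 1/(2*C)) with hadef
    have ha0 : 0 ≤ a := le_max_left _ _
    have haτ : a < τ := by
      apply max_lt hτpos
      have : 0 < 1/(2*C) := by positivity
      linarith
    have hτa : τ - a ≤ 1/(2*C) := by
      have : τ - 1/(2*C) ≤ a := le_max_right _ _
      linarith
    obtain ⟨tst, htst, hmax⟩ := isCompact_Icc.exists_isMaxOn
      (Set.nonempty_Icc.2 (le_of_lt haτ)) (hx_cont.continuousOn (s := Icc a τ))
    have hM : 0 < x tst := lt_of_lt_of_le (hbefore a ha0 haτ) (hmax ⟨le_rfl, le_of_lt haτ⟩)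
    obtain ⟨Df, hDf0, hDf⟩ := hfxbdd τ
    have htst0 : 0 ≤ tst := le_trans ha0 htst.1
    have hFlo : ∀ u, tst ≤ u → u ≤ τ → 0 ≤ F u := by
      intro u h1 h2
      refine (hFb u (le_trans htst0 h1) 0 Df (fun s hs1 hs2 => ?_)).1
      exact ⟨hf_nonneg _ (hxleτ s (hs2.trans h2)), (le_abs_self _).trans (hDf s (hs2.trans h2))⟩
    have hDb : ∀ u ∈ Ioc tst τ, -(x tst) ≤ F u - x u := by
      intro u hu
      have h1 : 0 ≤ F u := hFlo u (le_of_lt hu.1) hu.2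
      have h2 : x u ≤ x tst := hmax ⟨le_trans htst.1 (le_of_lt hu.1), hu.2⟩
      linarith
    have hest := dds_est_lower (x := x) (F := F) (r := r) (a := tst) (b := τ)
      (D := -(x tst)) htst.2 hr_nonneg (hrI _ _) (hIntI tst τ htst0 hτ0)
      (hsol tst τ htst0 htst.2) hDb
    have hint1 := (hrB tst τ htst.2).1
    have hint2 := (hrB tst τ htst.2).2
    have h3 : C * (τ - tst) ≤ 1/2 := by
      have h4 : τ - tst ≤ 1/(2*C) := by
        have := htst.1
        linarith
      calc C * (τ - tst) ≤ C * (1/(2*C)) := mul_le_mul_of_nonneg_left h4 (le_of_lt hCpos)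
        _ = 1/2 := by field_simp
    have h5 : (∫ u in tst..τ, r u) ≤ 1/2 := le_trans hint2 h3
    have h6 : x tst * (∫ u in tst..τ, r u) ≤ x tst * (1/2) :=
      mul_le_mul_of_nonneg_left h5 (le_of_lt hM)
    rw [hxτ] at hest
    nlinarith
  have hxnn : ∀ t : ℝ, 0 ≤ x t := by
    intro t
    rcases le_or_gt t 0 with ht | ht
    · exact (hxφ t ht).1
    · exact le_of_lt (hxpos t (le_of_lt ht))
  -- global upper bound
  have hxB : ∀ t : ℝ, x t ≤ B := by
    by_contra hcon
    push_neg at hcon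
    obtain ⟨t, hxt⟩ := hcon
    have ht0 : 0 ≤ t := by
      by_contra hneg
      push_neg at hneg
      exact absurd ((hxφ t (le_of_lt hneg)).2.trans (le_max_right _ _)) (not_le.2 hxt)
    set Z : Set ℝ := Ici 0 ∩ {t | B < x t} with hZdef
    have hZne : Z.Nonempty := ⟨t, ht0, hxt⟩
    have hZbdd : BddBelow Z := ⟨0, fun z hz => hz.1⟩
    set τ := sInf Z with hτdef
    have hτ0 : 0 ≤ τ := le_csInf hZne (fun z hz => hz.1)
    have hbefore : ∀ s, 0 ≤ s → s < τ → x s ≤ B := by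
      intro s hs0 hsτ
      by_contra hno
      push_neg at hno
      exact absurd (csInf_le hZbdd ⟨hs0, hno⟩) (not_le.2 hsτ)
    have hxτB : x τ ≤ B :=
      hleft_le τ 0 B hτ0 hbefore ((hxφ 0 le_rfl).2.trans (le_max_right _ _))
    have hxleB : ∀ s, s ≤ τ → x s ≤ B := by
      intro s hs
      rcases le_or_gt s 0 with hs0 | hs0
      · exact (hxφ s hs0).2.trans (le_max_right _ _)
      rcases eq_or_lt_of_le hs with heq | hlt
      · rw [heq]; exact hxτB
      · exact hbefore s (le_of_lt hs0) hlt
    set η := 1/(4*C) with hηdef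
    have hη : 0 < η := by positivity
    obtain ⟨z, hzZ, hzlt⟩ := exists_lt_of_csInf_lt hZne (show sInf Z < τ + η by
      rw [← hτdef]; linarith)
    have hτz : τ < z := by
      have hle : τ ≤ z := csInf_le hZbdd hzZ
      rcases eq_or_lt_of_le hle with heq | hlt
      · exfalso; rw [heq] at hxτB; exact absurd hxτB (not_le.2 hzZ.2)
      · exact hlt
    obtain ⟨tst, htst, hmax⟩ := isCompact_Icc.exists_isMaxOn
      (Set.nonempty_Icc.2 (le_of_lt hτz)) (hx_cont.continuousOn (s := Icc τ z))
    have hδpos : B < x tst := lt_of_lt_of_le hzZ.2 (hmax ⟨le_of_lt hτz, le_rfl⟩)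
    set δ := x tst - B with hδdef
    have hδ0 : 0 < δ := by rw [hδdef]; linarith
    have hxlez : ∀ s, s ≤ z → x s ≤ B + δ := by
      intro s hs
      rcases le_or_gt s τ with hsτ | hsτ
      · exact (hxleB s hsτ).trans (by linarith)
      · have : x s ≤ x tst := hmax ⟨le_of_lt hsτ, hs⟩
        rw [hδdef]; linarith
    have hfub : ∀ s, s ≤ z → f (x s) ≤ B + δ := by
      intro s hs
      refine (hf_le_max (x s) (hxnn s)).trans ?_
      refine max_le (hxlez s hs) ?_
      linarith [hKB, hδ0]
    obtain ⟨c, hc1, hc2, hc3, hc4⟩ := hcross τ tst B htst.1 hxτB hδpos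
    have hc0 : 0 ≤ c := le_trans hτ0 hc1
    have htstz : tst ≤ z := htst.2
    have hDb : ∀ u ∈ Ioc c tst, F u - x u ≤ δ := by
      intro u hu
      have hu0 : 0 ≤ u := le_trans hc0 (le_of_lt hu.1)
      have hF : F u ≤ B + δ := by
        refine (hFb u hu0 0 (B + δ) (fun s hs1 hs2 => ?_)).2
        exact ⟨hf_nonneg _ (hxnn s), hfub s (le_trans hs2 (le_trans hu.2 htstz))⟩
      have hxu : B < x u := hc4 u hu.1 hu.2
      linarith
    have hest := dds_est_upper (x := x) (F := F) (r := r) (a := c) (b := tst)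
      (D := δ) (le_of_lt hc2) hr_nonneg (hrI _ _)
      (hIntI c tst hc0 (le_trans hc0 (le_of_lt hc2))) (hsol c tst hc0 (le_of_lt hc2)) hDb
    have hint1 := (hrB c tst (le_of_lt hc2)).1
    have hint2 := (hrB c tst (le_of_lt hc2)).2
    have h3 : C * (tst - c) ≤ 1/4 := by
      have h4 : tst - c ≤ η := by
        have := hc1
        have := htst.2
        linarith
      calc C * (tst - c) ≤ C * η := mul_le_mul_of_nonneg_left h4 (le_of_lt hCpos)
        _ = 1/4 := by rw [hηdef]; field_simp
    have h5 : (∫ u in c..tst, r u) ≤ 1/4 := le_trans hint2 h3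
    have h6 : δ * (∫ u in c..tst, r u) ≤ δ * (1/4) :=
      mul_le_mul_of_nonneg_left h5 (le_of_lt hδ0)
    have h7 : δ ≤ x tst - x c := by rw [hδdef]; linarith
    nlinarith [hδ0, h6, h7, hest]
  -- persistence
  have hpers : ∃ m0 T0 : ℝ, 0 < m0 ∧ m0 ≤ K ∧ 0 ≤ T0 ∧ ∀ t : ℝ, T0 ≤ t → m0 ≤ x t := by
    obtain ⟨T0', hT0'⟩ := eventually_atTop.1 (hh_tend.eventually_ge_atTop (0:ℝ))
    set T0 := max T0' 0 with hT0def
    have hT00 : 0 ≤ T0 := le_max_right _ _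
    have hh0 : ∀ u, T0 ≤ u → 0 ≤ h u := fun u hu => hT0' u ((le_max_left _ _).trans hu)
    obtain ⟨tm, htm, hmin⟩ := isCompact_Icc.exists_isMinOn
      (Set.nonempty_Icc.2 hT00) (hx_cont.continuousOn (s := Icc 0 T0))
    have hmc : 0 < x tm := hxpos tm htm.1
    obtain ⟨yK, hyK, hminf⟩ := isCompact_Icc.exists_isMinOn
      (Set.nonempty_Icc.2 hKB) (hf_cont.continuousOn (s := Icc K B))
    have hρK : 0 < f yK := hf_pos yK (lt_of_lt_of_le hK hyK.1)
    set q := min (min (x tm) K) (f yK) with hqdef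
    have hq0 : 0 < q := lt_min (lt_min hmc hK) hρK
    have hqK : q ≤ K := (min_le_left _ _).trans (min_le_right _ _)
    have hqm : q ≤ x tm := (min_le_left _ _).trans (min_le_left _ _)
    have hqρ : q ≤ f yK := min_le_right _ _
    set P := q/2 with hPdef
    have hP0 : 0 < P := by positivity
    have hPq : P < q := by rw [hPdef]; linarith
    -- key property of f
    have hkey : ∀ flo y : ℝ, 0 < flo → flo ≤ P → flo ≤ y → y ≤ B → flo ≤ f y := by
      intro flo y h1 h2 h3 h4
      rcases lt_trichotomy y K with hlt | heq | hgt
      · exact le_of_lt (lt_of_le_of_lt h3 (hf_below y (lt_of_lt_of_le h1 h3) hlt))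
      · rw [heq, hfK_eq]; exact h2.trans ((le_of_lt hPq).trans hqK)
      · have : f yK ≤ f y := hminf ⟨le_of_lt hgt, h4⟩
        exact le_trans (h2.trans ((le_of_lt hPq).trans hqρ)) this
    refine ⟨P, T0, hP0, (le_of_lt hPq).trans hqK, hT00, ?_⟩
    by_contra hcon
    push_neg at hcon
    obtain ⟨t, ht0, hxt⟩ := hcon
    set Z : Set ℝ := Ici T0 ∩ {t | x t < P} with hZdef
    have hZne : Z.Nonempty := ⟨t, ht0, hxt⟩
    have hZbdd : BddBelow Z := ⟨T0, fun z hz => hz.1⟩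
    set τ := sInf Z with hτdef
    have hτ0 : T0 ≤ τ := le_csInf hZne (fun z hz => hz.1)
    have hbefore : ∀ s, T0 ≤ s → s < τ → P ≤ x s := by
      intro s hs0 hsτ
      by_contra hno
      push_neg at hno
      exact absurd (csInf_le hZbdd ⟨hs0, hno⟩) (not_le.2 hsτ)
    have hxT0 : P ≤ x T0 := le_trans ((le_of_lt hPq).trans hqm) (hmin ⟨hT00, le_rfl⟩)
    have hxτP : P ≤ x τ := hleft_ge τ T0 P hτ0 hbefore hxT0
    have hxgeτ : ∀ s, T0 ≤ s → s ≤ τ → P ≤ x s := by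
      intro s hs0 hs
      rcases eq_or_lt_of_le hs with heq | hlt
      · rw [heq]; exact hxτP
      · exact hbefore s hs0 hlt
    set η := 1/(4*C) with hηdef
    have hη : 0 < η := by positivity
    obtain ⟨z, hzZ, hzlt⟩ := exists_lt_of_csInf_lt hZne (show sInf Z < τ + η by
      rw [← hτdef]; linarith)
    have hτz : τ < z := by
      have hle : τ ≤ z := csInf_le hZbdd hzZ
      rcases eq_or_lt_of_le hle with heq | hlt
      · exfalso; rw [heq] at hxτP; exact absurd hxτP (not_le.2 hzZ.2)
      · exact hlt
    obtain ⟨tst, htst, hminz⟩ := isCompact_Icc.exists_isMinOn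
      (Set.nonempty_Icc.2 (le_of_lt hτz)) (hx_cont.continuousOn (s := Icc τ z))
    have htstP : x tst < P := lt_of_le_of_lt (hminz ⟨le_of_lt hτz, le_rfl⟩) hzZ.2
    set δ := P - x tst with hδdef
    have hδ0 : 0 < δ := by rw [hδdef]; linarith
    have hfloor : 0 < P - δ := by
      rw [hδdef]
      have : 0 < x tst := hxpos tst (le_trans hT00 (le_trans hτ0 htst.1))
      linarith
    have hxfloor : ∀ s, 0 ≤ s → s ≤ tst → P - δ ≤ x s := by
      intro s hs0 hs
      rcases le_or_gt s T0 with hsT | hsT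
      · have := hmin ⟨hs0, hsT⟩
        have h2 : P ≤ x s := le_trans ((le_of_lt hPq).trans hqm) this
        linarith
      rcases le_or_gt s τ with hsτ | hsτ
      · have := hxgeτ s (le_of_lt hsT) hsτ
        linarith
      · have h9 : x tst ≤ x s := hminz ⟨le_of_lt hsτ, hs.trans htst.2⟩
        rw [hδdef]
        linarith
    have hτT0 : 0 ≤ τ := le_trans hT00 hτ0
    have hFlo : ∀ u, τ ≤ u → u ≤ tst → P - δ ≤ F u := by
      intro u h1 h2
      have hu0 : 0 ≤ u := le_trans hτT0 h1
      have huT0 : T0 ≤ u := le_trans hτ0 h1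
      refine (hFb u hu0 (P - δ) (B + 1) (fun s hs1 hs2 => ?_)).1
      have hs0 : 0 ≤ s := le_trans (hh0 u huT0) hs1
      have hsf : P - δ ≤ x s := hxfloor s hs0 (hs2.trans h2)
      constructor
      · exact hkey (P - δ) (x s) hfloor (by linarith) hsf (hxB s)
      · exact le_trans ((hf_le_max (x s) (hxnn s)).trans (max_le (hxB s) hKB)) (by linarith)
    obtain ⟨c, hc1, hc2, hc3, hc4⟩ := hcrossL τ tst (P - δ/2) htst.1 (by linarith) (by
      rw [hδdef]; linarith)
    have hc0 : 0 ≤ c := le_trans hτT0 hc1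
    have hDb : ∀ u ∈ Ioc c tst, -(δ/2) ≤ F u - x u := by
      intro u hu
      have hF : P - δ ≤ F u := hFlo u (le_trans hc1 (le_of_lt hu.1)) hu.2
      have hxu : x u < P - δ/2 := hc4 u hu.1 hu.2
      linarith
    have hest := dds_est_lower (x := x) (F := F) (r := r) (a := c) (b := tst)
      (D := -(δ/2)) (le_of_lt hc2) hr_nonneg (hrI _ _)
      (hIntI c tst hc0 (le_trans hc0 (le_of_lt hc2))) (hsol c tst hc0 (le_of_lt hc2)) hDb
    have hint1 := (hrB c tst (le_of_lt hc2)).1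
    have hint2 := (hrB c tst (le_of_lt hc2)).2
    have h3 : C * (tst - c) ≤ 1/4 := by
      have h4 : tst - c ≤ η := by
        have := hc1
        have := htst.2
        linarith
      calc C * (tst - c) ≤ C * η := mul_le_mul_of_nonneg_left h4 (le_of_lt hCpos)
        _ = 1/4 := by rw [hηdef]; field_simp
    have h5 : (∫ u in c..tst, r u) ≤ 1/4 := le_trans hint2 h3
    have h6 : x tst - x c ≤ -(δ/2) := by rw [hδdef]; linarith
    have h7 : (δ/2) * (∫ u in c..tst, r u) ≤ (δ/2) * (1/4) :=
      mul_le_mul_of_nonneg_left h5 (by positivity)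
    rw [neg_mul] at hest
    linarith
  -- attraction lemmas
  have hIsub : ∀ a b : ℝ, (∫ u in a..b, r u) =
      (∫ u in (0:ℝ)..b, r u) - ∫ u in (0:ℝ)..a, r u := by
    intro a b
    rw [intervalIntegral.integral_interval_sub_left (hrI 0 b) (hrI 0 a)]
  have attractU : ∀ P T1 : ℝ, 0 ≤ T1 → (∀ u : ℝ, T1 ≤ u → F u ≤ P) →
      ∀ ε : ℝ, 0 < ε → ∃ T2, ∀ t : ℝ, T2 ≤ t → x t ≤ P + ε := by
    intro P T1 hT1 hFP ε hε
    have hex : ∃ t1, T1 ≤ t1 ∧ x t1 ≤ P + ε := by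
      by_contra hno
      push_neg at hno
      obtain ⟨t, ht⟩ := ((hI_tend.eventually_ge_atTop
        ((∫ u in (0:ℝ)..T1, r u) + (x T1 + 1)/ε)).and (eventually_ge_atTop T1)).exists
      have hDb : ∀ u ∈ Ioc T1 t, F u - x u ≤ -ε := by
        intro u hu
        have h1 : F u ≤ P := hFP u (le_of_lt hu.1)
        have h2 : P + ε < x u := hno u (le_of_lt hu.1)
        linarith
      have hest := dds_est_upper (x := x) (F := F) (r := r) (a := T1) (b := t)
        (D := -ε) ht.2 hr_nonneg (hrI _ _) (hIntI T1 t hT1 (hT1.trans ht.2))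
        (hsol T1 t hT1 ht.2) hDb
      have hint : (x T1 + 1)/ε ≤ ∫ u in T1..t, r u := by
        rw [hIsub T1 t]
        linarith [ht.1]
      have h3 : -ε * ((x T1 + 1)/ε) = -(x T1 + 1) := by field_simp
      have h4 : -ε * (∫ u in T1..t, r u) ≤ -ε * ((x T1 + 1)/ε) := by
        rw [neg_mul, neg_mul]
        exact neg_le_neg (mul_le_mul_of_nonneg_left hint (le_of_lt hε))
      have h5 := hxnn t
      linarith
    obtain ⟨t1, ht1T, ht1⟩ := hex
    refine ⟨t1, fun t ht => ?_⟩
    by_contra hgt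
    push_neg at hgt
    obtain ⟨c, hc1, hc2, hc3, hc4⟩ := hcross t1 t (P + ε) ht ht1 hgt
    have hc0 : 0 ≤ c := le_trans (hT1.trans ht1T) hc1
    have hDb : ∀ u ∈ Ioc c t, F u - x u ≤ -ε := by
      intro u hu
      have h1 : F u ≤ P := hFP u (le_trans (le_trans ht1T hc1) (le_of_lt hu.1))
      have h2 : P + ε < x u := hc4 u hu.1 hu.2
      linarith
    have hest := dds_est_upper (x := x) (F := F) (r := r) (a := c) (b := t)
      (D := -ε) (le_of_lt hc2) hr_nonneg (hrI _ _)
      (hIntI c t hc0 (hc0.trans (le_of_lt hc2))) (hsol c t hc0 (le_of_lt hc2)) hDb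
    have hint1 := (hrB c t (le_of_lt hc2)).1
    have h4 : -ε * (∫ u in c..t, r u) ≤ 0 := by
      rw [neg_mul]
      have : 0 ≤ ε * (∫ u in c..t, r u) := mul_nonneg (le_of_lt hε) hint1
      linarith
    linarith
  have attractL : ∀ P T1 : ℝ, 0 ≤ T1 → (∀ u : ℝ, T1 ≤ u → P ≤ F u) →
      ∀ ε : ℝ, 0 < ε → ∃ T2, ∀ t : ℝ, T2 ≤ t → P - ε ≤ x t := by
    intro P T1 hT1 hFP ε hε
    have hex : ∃ t1, T1 ≤ t1 ∧ P - ε ≤ x t1 := by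
      by_contra hno
      push_neg at hno
      obtain ⟨t, ht⟩ := ((hI_tend.eventually_ge_atTop
        ((∫ u in (0:ℝ)..T1, r u) + (B - x T1 + 1)/ε)).and (eventually_ge_atTop T1)).exists
      have hDb : ∀ u ∈ Ioc T1 t, ε ≤ F u - x u := by
        intro u hu
        have h1 : P ≤ F u := hFP u (le_of_lt hu.1)
        have h2 : x u < P - ε := hno u (le_of_lt hu.1)
        linarith
      have hest := dds_est_lower (x := x) (F := F) (r := r) (a := T1) (b := t)
        (D := ε) ht.2 hr_nonneg (hrI _ _) (hIntI T1 t hT1 (hT1.trans ht.2))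
        (hsol T1 t hT1 ht.2) hDb
      have hint : (B - x T1 + 1)/ε ≤ ∫ u in T1..t, r u := by
        rw [hIsub T1 t]
        linarith [ht.1]
      have h3 : ε * ((B - x T1 + 1)/ε) = B - x T1 + 1 := by field_simp
      have h4 : ε * ((B - x T1 + 1)/ε) ≤ ε * (∫ u in T1..t, r u) :=
        mul_le_mul_of_nonneg_left hint (le_of_lt hε)
      have h5 := hxB t
      linarith
    obtain ⟨t1, ht1T, ht1⟩ := hex
    refine ⟨t1, fun t ht => ?_⟩
    by_contra hgt
    push_neg at hgt
    obtain ⟨c, hc1, hc2, hc3, hc4⟩ := hcrossL t1 t (P - ε) ht ht1 hgt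
    have hc0 : 0 ≤ c := le_trans (hT1.trans ht1T) hc1
    have hDb : ∀ u ∈ Ioc c t, ε ≤ F u - x u := by
      intro u hu
      have h1 : P ≤ F u := hFP u (le_trans (le_trans ht1T hc1) (le_of_lt hu.1))
      have h2 : x u < P - ε := hc4 u hu.1 hu.2
      linarith
    have hest := dds_est_lower (x := x) (F := F) (r := r) (a := c) (b := t)
      (D := ε) (le_of_lt hc2) hr_nonneg (hrI _ _)
      (hIntI c t hc0 (hc0.trans (le_of_lt hc2))) (hsol c t hc0 (le_of_lt hc2)) hDb
    have hint1 := (hrB c t (le_of_lt hc2)).1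
    have h4 : 0 ≤ ε * (∫ u in c..t, r u) := mul_nonneg (le_of_lt hε) hint1
    linarith
  -- the sup-function S
  set SS : ℝ → ℝ := fun M => sSup (f '' Icc 0 M) with hSSdef
  have hSb : ∀ M : ℝ, BddAbove (f '' Icc 0 M) := fun M =>
    (isCompact_Icc.image hf_cont).bddAbove
  have hSne : ∀ M : ℝ, 0 ≤ M → (f '' Icc 0 M).Nonempty := fun M hM =>
    ⟨f 0, mem_image_of_mem f ⟨le_rfl, hM⟩⟩
  have hSmem : ∀ M : ℝ, ∀ y ∈ Icc 0 M, f y ≤ SS M := fun M y hy =>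
    le_csSup (hSb M) (mem_image_of_mem f hy)
  have hSmono : ∀ M M' : ℝ, 0 ≤ M → M ≤ M' → SS M ≤ SS M' := fun M M' hM hMM' =>
    csSup_le_csSup (hSb M') (hSne M hM) (image_mono (Icc_subset_Icc_right hMM'))
  have hSlt : ∀ M : ℝ, K < M → SS M < M := by
    intro M hM
    have hM0 : (0:ℝ) ≤ M := le_of_lt (hK.trans hM)
    obtain ⟨y0, hy0, hmaxf⟩ := isCompact_Icc.exists_isMaxOn
      (Set.nonempty_Icc.2 hM0) (hf_cont.continuousOn (s := Icc 0 M))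
    have h1 : SS M ≤ f y0 := by
      refine csSup_le (hSne M hM0) ?_
      rintro v ⟨y, hy, rfl⟩
      exact hmaxf hy
    have h2 : f y0 < M := by
      rcases eq_or_lt_of_le hy0.1 with heq | hpos
      · rw [← heq, hf_zero]; exact hK.trans hM
      rcases lt_trichotomy y0 K with hlt | heq | hgt
      · exact (hfK y0 hpos hlt).trans hM
      · rw [heq, hfK_eq]; exact hM
      · exact lt_of_lt_of_le (hf_above y0 hgt).2 hy0.2
    linarith
  have hSK : ∀ M : ℝ, K ≤ M → K ≤ SS M := by
    intro M hM
    have : f K ≤ SS M := hSmem M K ⟨le_of_lt hK, hM⟩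
    rw [hfK_eq] at this
    exact this
  have hSlip : ∀ M ε : ℝ, K ≤ M → 0 < ε → SS (M + ε) ≤ SS M + L * ε := by
    intro M ε hKM hε
    have hM0 : (0:ℝ) ≤ M := le_trans (le_of_lt hK) hKM
    refine csSup_le (hSne (M + ε) (by linarith)) ?_
    rintro v ⟨y, hy, rfl⟩
    rcases le_or_gt y M with hyM | hyM
    · have := hSmem M y ⟨hy.1, hyM⟩
      nlinarith [mul_nonneg hL (le_of_lt hε)]
    · have h1 : f y - f M ≤ |f y - f M| := le_abs_self _
      have h2 : |f y - f M| ≤ L * |y - M| := hf_lip y M hy.1 hM0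
      have h3 : |y - M| = y - M := abs_of_pos (by linarith)
      have h4 : L * (y - M) ≤ L * ε := mul_le_mul_of_nonneg_left (by linarith [hy.2]) hL
      have h5 : f M ≤ SS M := hSmem M M ⟨hM0, le_rfl⟩
      rw [h3] at h2
      linarith
  -- set of eventual upper bounds
  set U : Set ℝ := {M : ℝ | K ≤ M ∧ ∃ T, 0 ≤ T ∧ ∀ t, T ≤ t → x t ≤ M} with hUdef
  have hBU : B ∈ U := ⟨hKB, 0, le_rfl, fun t _ => hxB t⟩
  have hUbdd : BddBelow U := ⟨K, fun M hM => hM.1⟩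
  have hΛK : K ≤ sInf U := le_csInf ⟨B, hBU⟩ (fun M hM => hM.1)
  have hstep : ∀ M, M ∈ U → ∀ ε', 0 < ε' → sInf U ≤ SS M + ε' := by
    intro M hM ε' hε'
    obtain ⟨hKM, T, hT0, hTle⟩ := hM
    obtain ⟨T1', hT1'⟩ := eventually_atTop.1 (hh_tend.eventually_ge_atTop T)
    set T1 := max T1' 0 with hT1def
    have hT10 : (0:ℝ) ≤ T1 := le_max_right _ _
    have hM0 : (0:ℝ) ≤ M := le_trans (le_of_lt hK) hKM
    have hFP : ∀ u, T1 ≤ u → F u ≤ SS M := by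
      intro u hu
      refine (hFb u (hT10.trans hu) 0 (SS M) (fun s hs1 hs2 => ?_)).2
      have hhu : T ≤ h u := hT1' u ((le_max_left _ _).trans hu)
      exact ⟨hf_nonneg _ (hxnn s), hSmem M (x s) ⟨hxnn s, hTle s (hhu.trans hs1)⟩⟩
    obtain ⟨T2, hT2⟩ := attractU (SS M) T1 hT10 hFP ε' hε'
    refine csInf_le hUbdd ⟨(hSK M hKM).trans (by linarith), max T2 0, le_max_right _ _,
      fun t ht => hT2 t ((le_max_left _ _).trans ht)⟩
  have hUK : sInf U ≤ K := by
    by_contra hgt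
    push_neg at hgt
    set Λ := sInf U with hΛdef
    set g := Λ - SS Λ with hgdef
    have hg : 0 < g := by
      have := hSlt Λ hgt
      rw [hgdef]; linarith
    set ε := g/(2*(L+1)) with hεdef
    have hε : 0 < ε := by rw [hεdef]; positivity
    set ε' := g/4 with hε'def
    have hε' : 0 < ε' := by rw [hε'def]; positivity
    obtain ⟨M, hMU, hMlt⟩ := exists_lt_of_csInf_lt ⟨B, hBU⟩
      (show sInf U < Λ + ε by rw [← hΛdef]; linarith)
    have hchain : Λ ≤ SS M + ε' := hstep M hMU ε' hε'
    have hSM : SS M ≤ SS (Λ + ε) :=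
      hSmono M (Λ + ε) (le_trans (le_of_lt hK) hMU.1) (le_of_lt hMlt)
    have hSlipA : SS (Λ + ε) ≤ SS Λ + L * ε := hSlip Λ ε (le_of_lt hgt) hε
    have h1 : L * ε ≤ (L + 1) * ε := mul_le_mul_of_nonneg_right (by linarith) (le_of_lt hε)
    have h2 : (L + 1) * ε = g/2 := by
      rw [hεdef]
      field_simp
    linarith
  have hupper : ∀ ε : ℝ, 0 < ε → ∃ T, 0 ≤ T ∧ ∀ t, T ≤ t → x t ≤ K + ε := by
    intro ε hε
    obtain ⟨M, hMU, hMlt⟩ := exists_lt_of_csInf_lt ⟨B, hBU⟩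
      (lt_of_le_of_lt hUK (show K < K + ε by linarith))
    obtain ⟨hKM, T, hT0, hTle⟩ := hMU
    exact ⟨T, hT0, fun t ht => (hTle t ht).trans (le_of_lt hMlt)⟩
  -- the set of eventual lower bounds
  obtain ⟨m0, T0p, hm00, hm0K, hT0p0, hm0x⟩ := hpers
  set W : Set ℝ := {m : ℝ | 0 < m ∧ m ≤ K ∧ ∃ T, 0 ≤ T ∧ ∀ t, T ≤ t → m ≤ x t} with hWdef
  have hm0W : m0 ∈ W := ⟨hm00, hm0K, T0p, hT0p0, fun t ht => hm0x t ht⟩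
  have hWne : W.Nonempty := ⟨m0, hm0W⟩
  have hWbdd : BddAbove W := ⟨K, fun m hm => hm.2.1⟩
  have hlamm0 : m0 ≤ sSup W := le_csSup hWbdd hm0W
  have hlamK : sSup W ≤ K := csSup_le hWne (fun m hm => hm.2.1)
  have hWK : ¬ (sSup W < K) := by
    intro hlt
    set lam := sSup W with hlamdef
    have hlam0 : 0 < lam := lt_of_lt_of_le hm00 hlamm0
    set Kmid := (K + lam)/2 with hKmiddef
    have hmid1 : lam < Kmid := by rw [hKmiddef]; linarith
    have hmid2 : Kmid < K := by rw [hKmiddef]; linarith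
    have hm0lam : m0 ≤ lam := hlamm0
    have hne2 : m0/2 ≤ Kmid := by linarith
    obtain ⟨yθ, hyθ, hminθ⟩ := isCompact_Icc.exists_isMinOn
      (Set.nonempty_Icc.2 hne2) ((hf_cont.sub continuous_id).continuousOn (s := Icc (m0/2) Kmid))
    have hyθ0 : 0 < yθ := lt_of_lt_of_le (by linarith : (0:ℝ) < m0/2) hyθ.1
    set θ := f yθ - yθ with hθdef
    have hθ : 0 < θ := by
      rw [hθdef]
      have := hf_below yθ hyθ0 (lt_of_le_of_lt hyθ.2 hmid2)
      linarith
    have hθall : ∀ y, m0/2 ≤ y → y ≤ Kmid → θ ≤ f y - y := by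
      intro y h1 h2
      exact hminθ ⟨h1, h2⟩
    set ε := min (min (θ/2) ((K - lam)/(2*(L+1)))) (lam/2) with hεdef
    have hε : 0 < ε := by
      refine lt_min (lt_min (by positivity) ?_) (by positivity)
      have : 0 < K - lam := by linarith
      positivity
    have hεθ : ε ≤ θ/2 := (min_le_left _ _).trans (min_le_left _ _)
    have hεK : ε ≤ (K - lam)/(2*(L+1)) := (min_le_left _ _).trans (min_le_right _ _)
    have hεlam : ε ≤ lam/2 := min_le_right _ _
    obtain ⟨m, hmW, hmlt⟩ := exists_lt_of_lt_csSup hWne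
      (show lam - ε < sSup W by rw [← hlamdef]; linarith)
    obtain ⟨hm0', hmK, Tl, hTl0, hTl⟩ := hmW
    obtain ⟨Tu, hTu0, hTu⟩ := hupper ε hε
    set T := max Tl Tu with hTdef
    obtain ⟨T1', hT1'⟩ := eventually_atTop.1 (hh_tend.eventually_ge_atTop T)
    set T1 := max T1' 0 with hT1def
    have hT10 : (0:ℝ) ≤ T1 := le_max_right _ _
    set ε₂ := min (θ/2) ((K - lam)/2) with hε₂def
    have hε₂ : 0 < ε₂ := lt_min (by positivity) (by linarith)
    have hε₂K : ε₂ ≤ (K - lam)/2 := min_le_right _ _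
    have hε₂θ : ε₂ ≤ θ/2 := min_le_left _ _
    have hLε : L * ε ≤ (K - lam)/2 := by
      have h1 : L * ε ≤ (L + 1) * ε := mul_le_mul_of_nonneg_right (by linarith) (le_of_lt hε)
      have h2 : (L + 1) * ε ≤ (L + 1) * ((K - lam)/(2*(L+1))) :=
        mul_le_mul_of_nonneg_left hεK (by linarith)
      have h3 : (L + 1) * ((K - lam)/(2*(L+1))) = (K - lam)/2 := by
        field_simp
      linarith
    have hFP : ∀ u, T1 ≤ u → lam + ε₂ ≤ F u := by
      intro u hu
      refine (hFb u (hT10.trans hu) (lam + ε₂) B (fun s hs1 hs2 => ?_)).1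
      have hhu : T ≤ h u := hT1' u ((le_max_left _ _).trans hu)
      have hs0 : T ≤ s := hhu.trans hs1
      have hy1 : m ≤ x s := hTl s ((le_max_left _ _).trans hs0)
      have hy2 : x s ≤ K + ε := hTu s ((le_max_right _ _).trans hs0)
      have hylo : lam/2 ≤ x s := by linarith
      have hylo2 : m0/2 ≤ x s := by linarith
      constructor
      · rcases le_or_gt (x s) Kmid with h1 | h1
        · have := hθall (x s) hylo2 h1
          linarith
        rcases le_or_gt (x s) K with h2 | h2
        · have hxf : x s ≤ f (x s) := by
            rcases eq_or_lt_of_le h2 with heq | hlt2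
            · rw [heq, hfK_eq]
            · exact le_of_lt (hf_below (x s) (by linarith) hlt2)
          rw [hKmiddef] at h1
          linarith
        · have hlip := hf_lip (x s) K (by linarith) (le_of_lt hK)
          rw [hfK_eq] at hlip
          have habs : |x s - K| = x s - K := abs_of_pos (by linarith)
          rw [habs] at hlip
          have h4 : f (x s) - K ≥ -(L * (x s - K)) := by
            have := neg_abs_le (f (x s) - K)
            linarith
          have h5 : L * (x s - K) ≤ L * ε := mul_le_mul_of_nonneg_left (by linarith) hL
          linarith
      · exact (hf_le_max (x s) (hxnn s)).trans (max_le (hxB s) hKB)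
    obtain ⟨T2, hT2⟩ := attractL (lam + ε₂) T1 hT10 hFP (ε₂/2) (half_pos hε₂)
    have hmem : lam + ε₂/2 ∈ W := by
      refine ⟨by linarith, by linarith, max T2 0, le_max_right _ _, fun t ht => ?_⟩
      have := hT2 t ((le_max_left _ _).trans ht)
      linarith
    have := le_csSup hWbdd hmem
    rw [← hlamdef] at this
    linarith
  have hlower : ∀ ε : ℝ, 0 < ε → ∃ T, ∀ t, T ≤ t → K - ε ≤ x t := by
    intro ε hε
    have hKW : K ≤ sSup W := not_lt.1 hWK
    obtain ⟨m, hmW, hmgt⟩ := exists_lt_of_lt_csSup hWne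
      (show K - ε < sSup W by linarith)
    obtain ⟨hm0', hmK, T, hT0, hT⟩ := hmW
    exact ⟨T, fun t ht => (le_of_lt hmgt).trans (hT t ht)⟩
  -- conclusion
  rw [Metric.tendsto_atTop]
  intro ε hε
  obtain ⟨Tu, hTu0, hTu⟩ := hupper (ε/2) (half_pos hε)
  obtain ⟨Tl, hTl⟩ := hlower (ε/2) (half_pos hε)
  refine ⟨max Tu Tl, fun t ht => ?_⟩
  have h1 := hTu t ((le_max_left _ _).trans ht)
  have h2 := hTl t ((le_max_right _ _).trans ht)
  rw [Real.dist_eq, abs_lt]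
  constructor <;> linarith
end

section
/- Under hypotheses (a1)–(a5), suppose that for every a ∈ (0, K) the following implication holds: if max_{x ∈ [a,K]} f(x) > K, then min_{x ∈ [K, max_{y ∈ [a,K]} f(y)]} f(x) > a. Then every solution x of the initial value problem for the distributed-delay equation satisfies lim_{t→∞} x(t) = K. -/
open MeasureTheory Filter Set

set_option maxHeartbeats 2000000 in
theorem distributed_delay_stability_minmax_condition
    (f : ℝ → ℝ) (L K : ℝ) (hL : 0 ≤ L) (hK : 0 < K)
    (h r : ℝ → ℝ) (μ : ℝ → Measure ℝ) (φ : ℝ → ℝ)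
    (hf_cont : Continuous f)
    (hf_nonneg : ∀ y : ℝ, 0 ≤ y → 0 ≤ f y)
    (hf_lip : ∀ u v : ℝ, 0 ≤ u → 0 ≤ v → |f u - f v| ≤ L * |u - v|)
    (hf_zero : f 0 = 0)
    (hf_below : ∀ y : ℝ, 0 < y → y < K → y < f y)
    (hf_above : ∀ y : ℝ, K < y → 0 < f y ∧ f y < y)
    (hh_meas : Measurable h)
    (hh_le : ∀ t : ℝ, 0 ≤ t → h t ≤ t)
    (hh_tend : Tendsto h atTop atTop)
    (hr_meas : Measurable r)
    (hr_nonneg : ∀ t : ℝ, 0 ≤ r t)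
    (hr_bdd : ∃ C : ℝ, ∀ᵐ t ∂volume, r t ≤ C)
    (hr_div : ¬ IntegrableOn r (Ici (0 : ℝ)))
    (hμ_prob : ∀ t : ℝ, 0 ≤ t → IsProbabilityMeasure (μ t))
    (hμ_supp : ∀ t : ℝ, 0 ≤ t → μ t (Icc (h t) t)ᶜ = 0)
    (hμ_meas : ∀ g : ℝ → ℝ, Measurable g → (∃ C : ℝ, ∀ y : ℝ, |g y| ≤ C) →
      Measurable (fun t => ∫ s, g s ∂(μ t)))
    (hφ_cont : ContinuousOn φ (Iic (0 : ℝ)))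
    (hφ_bdd : ∃ C : ℝ, ∀ t : ℝ, t ≤ 0 → |φ t| ≤ C)
    (hφ_nonneg : ∀ t : ℝ, t ≤ 0 → 0 ≤ φ t)
    (hφ_pos : 0 < φ 0)
    (hcond : ∀ a : ℝ, 0 < a → a < K →
      K < sSup (f '' Icc a K) → a < sInf (f '' Icc K (sSup (f '' Icc a K))))
    (x : ℝ → ℝ)
    (hx_cont : Continuous x)
    (hx_init : ∀ t : ℝ, t ≤ 0 → x t = φ t)
    (hx_sol : ∀ t : ℝ, 0 ≤ t →
      x t = φ 0 + ∫ u in (0:ℝ)..t, r u * ((∫ s, f (x s) ∂(μ u)) - x u))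
    :
    Tendsto x atTop (nhds K) := by
  classical
  obtain ⟨C0, hC0⟩ := hr_bdd
  set C : ℝ := max C0 1 with hC_def
  have hC1 : (1:ℝ) ≤ C := le_max_right _ _
  have hCpos : (0:ℝ) < C := lt_of_lt_of_le one_pos hC1
  have hrC : ∀ᵐ t ∂(volume : Measure ℝ), r t ≤ C :=
    hC0.mono fun t ht => ht.trans (le_max_left _ _)
  obtain ⟨Cφ, hCφ⟩ := hφ_bdd
  have hCφ0 : 0 ≤ Cφ := le_trans (abs_nonneg _) (hCφ 0 le_rfl)
  set F : ℝ → ℝ := fun u => ∫ s, f (x s) ∂(μ u) with hF_def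
  set G : ℝ → ℝ := fun u => r u * (F u - x u) with hG_def
  have hx0 : x 0 = φ 0 := hx_init 0 le_rfl
  have hsol' : ∀ t : ℝ, 0 ≤ t → x t = φ 0 + ∫ u in (0:ℝ)..t, G u := by
    intro t ht
    simpa only [hG_def, hF_def] using hx_sol t ht
  -- a.e. support of μ t
  have hsupp : ∀ t : ℝ, 0 ≤ t → ∀ᵐ s ∂(μ t), s ∈ Icc (h t) t := by
    intro t ht
    have h1 := hμ_supp t ht
    rw [ae_iff]
    exact h1
  -- f fixes K
  have hfK : f K = K := by
    rcases lt_trichotomy (f K) K with hlt | heq | hgt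
    · exfalso
      have hc : ContinuousAt (fun y => f y - y) K := (hf_cont.sub continuous_id).continuousAt
      have hev : ∀ᶠ y in nhds K, f y - y < 0 := by
        have : (fun y => f y - y) K < 0 := by simpa using sub_neg.mpr hlt
        exact hc.eventually_lt_const this
      have hev' : ∀ᶠ y in nhdsWithin K (Iio K), f y - y < 0 :=
        hev.filter_mono nhdsWithin_le_nhds
      have hmem : Ioo 0 K ∈ nhdsWithin K (Iio K) :=
        Ioo_mem_nhdsLT_of_mem ⟨hK, le_rfl⟩
      obtain ⟨y, hy1, hy2⟩ := (hev'.and (eventually_of_mem hmem fun y hy => hy)).exists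
      have := hf_below y hy2.1 hy2.2
      linarith
    · exact heq
    · exfalso
      have hc : ContinuousAt (fun y => f y - y) K := (hf_cont.sub continuous_id).continuousAt
      have hev : ∀ᶠ y in nhds K, 0 < f y - y := by
        have : 0 < (fun y => f y - y) K := by simpa using sub_pos.mpr hgt
        exact hc.eventually_const_lt this
      have hev' : ∀ᶠ y in nhdsWithin K (Ioi K), 0 < f y - y :=
        hev.filter_mono nhdsWithin_le_nhds
      have hmem : Ioo K (K+1) ∈ nhdsWithin K (Ioi K) :=
        Ioo_mem_nhdsGT_of_mem ⟨le_rfl, by linarith⟩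
      obtain ⟨y, hy1, hy2⟩ := (hev'.and (eventually_of_mem hmem fun y hy => hy)).exists
      have := (hf_above y hy2.1).2
      linarith
  -- x is bounded on every Iic b
  have hxbd : ∀ b : ℝ, ∃ A, 0 ≤ A ∧ ∀ s, s ≤ b → |x s| ≤ A := by
    intro b
    obtain ⟨A0, hA0⟩ := (isCompact_Icc (a := (0:ℝ)) (b := b)).exists_bound_of_continuousOn
      hx_cont.continuousOn
    refine ⟨max Cφ (max A0 0), le_trans hCφ0 (le_max_left _ _), ?_⟩
    intro s hs
    rcases le_or_gt s 0 with h0 | h0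
    · rw [hx_init s h0]; exact le_trans (hCφ s h0) (le_max_left _ _)
    · have := hA0 s ⟨h0.le, hs⟩
      rw [Real.norm_eq_abs] at this
      exact le_trans this (le_trans (le_max_left _ _) (le_max_right _ _))
  -- f is bounded on bounded sets
  have hfbd : ∀ A : ℝ, ∃ B, 0 ≤ B ∧ ∀ y : ℝ, |y| ≤ A → |f y| ≤ B := by
    intro A
    obtain ⟨B0, hB0⟩ := (isCompact_Icc (a := -A) (b := A)).exists_bound_of_continuousOn
      hf_cont.continuousOn
    refine ⟨max B0 0, le_max_right _ _, ?_⟩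
    intro y hy
    have := hB0 y (by rcases abs_le.mp hy with ⟨h1, h2⟩; exact ⟨h1, h2⟩)
    rw [Real.norm_eq_abs] at this
    exact le_trans this (le_max_left _ _)
  -- integrability of f ∘ x with respect to μ u
  have hμint : ∀ u : ℝ, 0 ≤ u → Integrable (fun s => f (x s)) (μ u) := by
    intro u hu
    haveI := hμ_prob u hu
    obtain ⟨A, hA0, hA⟩ := hxbd u
    obtain ⟨B, hB0, hB⟩ := hfbd A
    refine Integrable.mono' (integrable_const B)
      ((hf_cont.comp hx_cont).aestronglyMeasurable) ?_
    refine (hsupp u hu).mono fun s hs => ?_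
    rw [Real.norm_eq_abs]
    exact hB _ (hA s hs.2)
  have hFle : ∀ u q : ℝ, 0 ≤ u → (∀ᵐ s ∂(μ u), f (x s) ≤ q) → F u ≤ q := by
    intro u q hu hq
    haveI := hμ_prob u hu
    have h1 : F u ≤ ∫ _s, q ∂(μ u) :=
      integral_mono_ae (hμint u hu) (integrable_const q) hq
    simpa using h1
  have hFge : ∀ u q : ℝ, 0 ≤ u → (∀ᵐ s ∂(μ u), q ≤ f (x s)) → q ≤ F u := by
    intro u q hu hq
    haveI := hμ_prob u hu
    have h1 : (∫ _s, q ∂(μ u)) ≤ F u :=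
      integral_mono_ae (integrable_const q) (hμint u hu) hq
    simpa using h1
  -- integrability of G on [0, b]
  have hGon : ∀ b : ℝ, 0 ≤ b → IntegrableOn G (Icc 0 b) volume := by
    intro b hb
    obtain ⟨A, hA0, hA⟩ := hxbd b
    obtain ⟨B, hB0, hB⟩ := hfbd A
    set gb : ℝ → ℝ := fun s => f (x (min s b)) with hgb_def
    have hgbc : Continuous gb :=
      hf_cont.comp (hx_cont.comp (continuous_id.min continuous_const))
    have hgb_bdd : ∀ y : ℝ, |gb y| ≤ B := fun y => hB _ (hA _ (min_le_right _ _))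
    have hFbm : Measurable (fun u => ∫ s, gb s ∂(μ u)) := hμ_meas gb hgbc.measurable ⟨B, hgb_bdd⟩
    have hFeq : ∀ u ∈ Icc (0:ℝ) b, F u = ∫ s, gb s ∂(μ u) := by
      intro u hu
      refine integral_congr_ae ((hsupp u hu.1).mono fun s hs => ?_)
      have hmin : min s b = s := min_eq_left (hs.2.trans hu.2)
      simp only [hgb_def, hmin]
    have hFbB : ∀ u : ℝ, 0 ≤ u → |∫ s, gb s ∂(μ u)| ≤ B := by
      intro u hu
      haveI := hμ_prob u hu
      have h1 := norm_integral_le_of_norm_le_const (μ := μ u) (f := gb) (C := B)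
        (Eventually.of_forall fun s => by rw [Real.norm_eq_abs]; exact hgb_bdd s)
      simpa [measure_univ] using h1
    set G' : ℝ → ℝ := fun u => r u * ((∫ s, gb s ∂(μ u)) - x u) with hG'_def
    have hG'm : Measurable G' := hr_meas.mul (hFbm.sub hx_cont.measurable)
    have hG'on : IntegrableOn G' (Icc 0 b) volume := by
      apply Measure.integrableOn_of_bounded (M := C * (B + A)) measure_Icc_lt_top.ne
        hG'm.aestronglyMeasurable
      refine ((ae_restrict_mem measurableSet_Icc).and (ae_restrict_of_ae hrC)).mono ?_
      rintro u ⟨hu, hru⟩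
      rw [Real.norm_eq_abs, hG'_def]
      rw [abs_mul, abs_of_nonneg (hr_nonneg u)]
      have h1 : |(∫ s, gb s ∂(μ u)) - x u| ≤ B + A := by
        calc |(∫ s, gb s ∂(μ u)) - x u| ≤ |∫ s, gb s ∂(μ u)| + |x u| := abs_sub _ _
          _ ≤ B + A := add_le_add (hFbB u hu.1) (hA u hu.2)
      exact mul_le_mul hru h1 (abs_nonneg _) hCpos.le
    refine hG'on.congr_fun (fun u hu => ?_) measurableSet_Icc
    show r u * ((∫ s, gb s ∂(μ u)) - x u) = r u * (F u - x u)
    rw [hFeq u hu]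
  have hGii : ∀ a b : ℝ, 0 ≤ a → a ≤ b → IntervalIntegrable G volume a b := by
    intro a b ha hab
    rw [intervalIntegrable_iff]
    refine (hGon b (ha.trans hab)).mono_set ?_
    rw [uIoc_of_le hab]
    exact fun s hs => ⟨ha.trans hs.1.le, hs.2⟩
  have hdiff : ∀ a b : ℝ, 0 ≤ a → a ≤ b → x b - x a = ∫ u in a..b, G u := by
    intro a b ha hab
    have h1 := hsol' a ha
    have h2 := hsol' b (ha.trans hab)
    have h3 := intervalIntegral.integral_add_adjacent_intervals
      (hGii 0 a le_rfl ha) (hGii a b ha hab)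
    rw [h1, h2]; linarith
  -- r is interval integrable
  have hrii : ∀ a b : ℝ, IntervalIntegrable r volume a b := by
    intro a b
    rw [intervalIntegrable_iff]
    apply Measure.integrableOn_of_bounded (M := C) measure_Ioc_lt_top.ne
      hr_meas.aestronglyMeasurable
    refine (ae_restrict_of_ae hrC).mono fun u hu => ?_
    rw [Real.norm_eq_abs, abs_of_nonneg (hr_nonneg u)]
    exact hu
  -- the integral of r diverges
  have hRdiv : ∀ a : ℝ, 0 ≤ a → Tendsto (fun t => ∫ u in a..t, r u) atTop atTop := by
    intro a ha
    have hmono : Monotone (fun t => ∫ u in a..t, r u) := by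
      intro t1 t2 h12
      have h3 := intervalIntegral.integral_add_adjacent_intervals (hrii a t1) (hrii t1 t2)
      have h4 : 0 ≤ ∫ u in t1..t2, r u :=
        intervalIntegral.integral_nonneg h12 (fun u _ => hr_nonneg u)
      simp only []
      linarith
    apply tendsto_atTop_atTop_of_monotone hmono
    by_contra hbd
    push_neg at hbd
    obtain ⟨B, hB⟩ := hbd
    apply hr_div
    have hIoi : IntegrableOn r (Ioi a) volume := by
      apply integrableOn_Ioi_of_intervalIntegral_norm_bounded B a
        (b := fun n : ℕ => a + n) (l := atTop)
      · intro n
        have h5 := hrii a (a + n)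
        rw [intervalIntegrable_iff, uIoc_of_le (le_add_of_nonneg_right (Nat.cast_nonneg n) : a ≤ a + (n:ℝ))] at h5
        exact h5
      · exact tendsto_atTop_add_const_left atTop a tendsto_natCast_atTop_atTop
      · refine Eventually.of_forall fun n => ?_
        have heq : (∫ u in a..(a + (n:ℝ)), ‖r u‖) = ∫ u in a..(a + (n:ℝ)), r u := by
          apply intervalIntegral.integral_congr
          intro u _
          show ‖r u‖ = r u
          rw [Real.norm_eq_abs, abs_of_nonneg (hr_nonneg u)]
        rw [heq]
        exact (hB _).le
    have hIcc : IntegrableOn r (Icc 0 a) volume := by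
      apply Measure.integrableOn_of_bounded (M := C) measure_Icc_lt_top.ne
        hr_meas.aestronglyMeasurable
      refine (ae_restrict_of_ae hrC).mono fun u hu => ?_
      rw [Real.norm_eq_abs, abs_of_nonneg (hr_nonneg u)]
      exact hu
    refine (hIcc.union hIoi).mono_set ?_
    intro s hs
    rcases le_or_gt s a with h1 | h1
    · exact Or.inl ⟨hs, h1⟩
    · exact Or.inr h1
  -- no upward crossing
  have noCrossUp : ∀ T t q : ℝ, 0 ≤ T → T ≤ t → x T ≤ q →
      (∀ u, T ≤ u → u ≤ t → F u ≤ q) → x t ≤ q := by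
    intro T t q hT hTt hxT hFq
    by_contra hgt
    push_neg at hgt
    set S : Set ℝ := Icc T t ∩ x ⁻¹' Iic q with hS_def
    have hScpt : IsCompact S := isCompact_Icc.inter_right (isClosed_Iic.preimage hx_cont)
    have hSne : S.Nonempty := ⟨T, ⟨le_rfl, hTt⟩, hxT⟩
    obtain ⟨t0, ⟨⟨hTt0, ht0t⟩, hxt0⟩, ht0max⟩ :
        ∃ t0 ∈ S, ∀ s ∈ S, s ≤ t0 :=
      ⟨sSup S, hScpt.sSup_mem hSne, fun s hs => le_csSup hScpt.bddAbove hs⟩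
    have ht0lt : t0 < t := lt_of_le_of_ne ht0t (by
      rintro rfl
      exact absurd hxt0 (not_le.mpr hgt))
    have hmid : ∀ u, t0 < u → u ≤ t → q < x u := by
      intro u h1 h2
      by_contra hle
      push_neg at hle
      exact absurd (ht0max u ⟨⟨hTt0.trans h1.le, h2⟩, hle⟩) (not_le.mpr h1)
    have hxt0q : x t0 = q := by
      refine le_antisymm hxt0 ?_
      have hev : ∀ᶠ u in nhdsWithin t0 (Ioi t0), q ≤ x u := by
        filter_upwards [Ioc_mem_nhdsGT_of_mem (⟨le_rfl, ht0lt⟩ : t0 ∈ Ico t0 t)] with u hu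
        exact (hmid u hu.1 hu.2).le
      exact ge_of_tendsto ((hx_cont.tendsto t0).mono_left nhdsWithin_le_nhds) hev
    have hkey : x t - x t0 ≤ 0 := by
      rw [hdiff t0 t (hT.trans hTt0) ht0lt.le]
      have hGle : ∀ u ∈ Icc t0 t, G u ≤ 0 := by
        intro u hu
        have hq : q ≤ x u := by
          rcases eq_or_lt_of_le hu.1 with he | hl
          · rw [← he, hxt0q]
          · exact (hmid u hl hu.2).le
        have hF : F u ≤ q := hFq u (hTt0.trans hu.1) hu.2
        have hfx : F u - x u ≤ 0 := by linarith
        exact mul_nonpos_iff.mpr (Or.inl ⟨hr_nonneg u, hfx⟩)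
      have h2 := intervalIntegral.integral_nonneg (μ := volume) (f := fun u => -G u) ht0lt.le
        (fun u hu => neg_nonneg.mpr (hGle u hu))
      rw [intervalIntegral.integral_neg] at h2
      linarith
    linarith [hxt0q, hgt]
  -- no downward crossing
  have noCrossDown : ∀ T t q : ℝ, 0 ≤ T → T ≤ t → q ≤ x T →
      (∀ u, T ≤ u → u ≤ t → q ≤ F u) → q ≤ x t := by
    intro T t q hT hTt hxT hFq
    by_contra hgt
    push_neg at hgt
    set S : Set ℝ := Icc T t ∩ x ⁻¹' Ici q with hS_def
    have hScpt : IsCompact S := isCompact_Icc.inter_right (isClosed_Ici.preimage hx_cont)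
    have hSne : S.Nonempty := ⟨T, ⟨le_rfl, hTt⟩, hxT⟩
    obtain ⟨t0, ⟨⟨hTt0, ht0t⟩, hxt0⟩, ht0max⟩ :
        ∃ t0 ∈ S, ∀ s ∈ S, s ≤ t0 :=
      ⟨sSup S, hScpt.sSup_mem hSne, fun s hs => le_csSup hScpt.bddAbove hs⟩
    have ht0lt : t0 < t := lt_of_le_of_ne ht0t (by
      rintro rfl
      exact absurd hxt0 (not_le.mpr hgt))
    have hmid : ∀ u, t0 < u → u ≤ t → x u < q := by
      intro u h1 h2
      by_contra hle
      push_neg at hle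
      exact absurd (ht0max u ⟨⟨hTt0.trans h1.le, h2⟩, hle⟩) (not_le.mpr h1)
    have hxt0q : x t0 = q := by
      refine le_antisymm ?_ hxt0
      have hev : ∀ᶠ u in nhdsWithin t0 (Ioi t0), x u ≤ q := by
        filter_upwards [Ioc_mem_nhdsGT_of_mem (⟨le_rfl, ht0lt⟩ : t0 ∈ Ico t0 t)] with u hu
        exact (hmid u hu.1 hu.2).le
      exact le_of_tendsto ((hx_cont.tendsto t0).mono_left nhdsWithin_le_nhds) hev
    have hkey : 0 ≤ x t - x t0 := by
      rw [hdiff t0 t (hT.trans hTt0) ht0lt.le]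
      refine intervalIntegral.integral_nonneg ht0lt.le ?_
      intro u hu
      have hq : x u ≤ q := by
        rcases eq_or_lt_of_le hu.1 with he | hl
        · rw [← he, hxt0q]
        · exact (hmid u hl hu.2).le
      have hF : q ≤ F u := hFq u (hTt0.trans hu.1) hu.2
      have hfx : 0 ≤ F u - x u := by linarith
      exact mul_nonneg (hr_nonneg u) hfx
    linarith [hxt0q, hgt]
  -- positivity: one step
  have hstep : ∀ a e : ℝ, 0 ≤ a → 0 < e → (∀ s, 0 ≤ s → s ≤ a → e ≤ x s) →
      ∀ t, a ≤ t → t ≤ a + 1/(4*C) → e/2 ≤ x t := by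
    intro a e ha he hpast t hat hta
    by_contra hcon
    push_neg at hcon
    set S1 : Set ℝ := Icc a t ∩ x ⁻¹' Iic (e/2) with hS1_def
    have hS1cpt : IsCompact S1 := isCompact_Icc.inter_right (isClosed_Iic.preimage hx_cont)
    have hS1ne : S1.Nonempty := ⟨t, ⟨hat, le_rfl⟩, hcon.le⟩
    obtain ⟨ts, ⟨⟨hats, htst⟩, hxts'⟩, htsmin⟩ :
        ∃ ts ∈ S1, ∀ s ∈ S1, ts ≤ s :=
      ⟨sInf S1, hS1cpt.sInf_mem hS1ne, fun s hs => csInf_le hS1cpt.bddBelow hs⟩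
    have hxts0 : x ts ≤ e/2 := hxts'
    have hxa : e ≤ x a := hpast a ha le_rfl
    have halt : a < ts := by
      rcases eq_or_lt_of_le hats with heq | hlt
      · exfalso; rw [← heq] at hxts0; linarith
      · exact hlt
    have hpre : ∀ u, a ≤ u → u < ts → e/2 < x u := by
      intro u h1 h2
      by_contra hle
      push_neg at hle
      exact absurd (htsmin u ⟨⟨h1, h2.le.trans htst⟩, hle⟩) (not_le.mpr h2)
    have hxts : x ts = e/2 := by
      refine le_antisymm hxts0 ?_
      have hev : ∀ᶠ u in nhdsWithin ts (Iio ts), e/2 ≤ x u := by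
        filter_upwards [Ico_mem_nhdsLT_of_mem (⟨halt, le_rfl⟩ : ts ∈ Ioc a ts)] with u hu
        exact (hpre u hu.1 hu.2).le
      exact ge_of_tendsto ((hx_cont.tendsto ts).mono_left nhdsWithin_le_nhds) hev
    have hgeHalf : ∀ u, a ≤ u → u ≤ ts → e/2 ≤ x u := by
      intro u h1 h2
      rcases eq_or_lt_of_le h2 with heq | hlt
      · rw [heq, hxts]
      · exact (hpre u h1 hlt).le
    set S2 : Set ℝ := Icc a ts ∩ x ⁻¹' Ici e with hS2_def
    have hS2cpt : IsCompact S2 := isCompact_Icc.inter_right (isClosed_Ici.preimage hx_cont)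
    have hS2ne : S2.Nonempty := ⟨a, ⟨le_rfl, halt.le⟩, hxa⟩
    obtain ⟨t0, ⟨⟨hat0, ht0ts⟩, hxt0⟩, ht0max⟩ :
        ∃ t0 ∈ S2, ∀ s ∈ S2, s ≤ t0 :=
      ⟨sSup S2, hS2cpt.sSup_mem hS2ne, fun s hs => le_csSup hS2cpt.bddAbove hs⟩
    have hxt0e : e ≤ x t0 := hxt0
    have ht0lt : t0 < ts := by
      rcases eq_or_lt_of_le ht0ts with heq | hlt
      · exfalso; rw [heq, hxts] at hxt0e; linarith
      · exact hlt
    have hlt2 : ∀ u, t0 < u → u ≤ ts → x u < e := by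
      intro u h1 h2
      by_contra hle
      push_neg at hle
      exact absurd (ht0max u ⟨⟨hat0.trans h1.le, h2⟩, hle⟩) (not_le.mpr h1)
    have hxnn : ∀ s, 0 ≤ s → s ≤ ts → 0 ≤ x s := by
      intro s h1 h2
      rcases le_or_gt s a with h3 | h3
      · linarith [hpast s h1 h3]
      · linarith [hgeHalf s h3.le h2]
    have hF0 : ∀ u, a ≤ u → u ≤ ts → 0 ≤ F u := by
      intro u h1 h2
      refine hFge u 0 (ha.trans h1) ?_
      filter_upwards [hsupp u (ha.trans h1)] with s hs
      rcases le_or_gt s 0 with h3 | h3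
      · rw [hx_init s h3]; exact hf_nonneg _ (hφ_nonneg s h3)
      · exact hf_nonneg _ (hxnn s h3.le (hs.2.trans h2))
    have hGIoc : IntegrableOn G (Ioc t0 ts) volume := by
      have h5 := hGii t0 ts (ha.trans hat0) ht0lt.le
      rw [intervalIntegrable_iff, uIoc_of_le ht0lt.le] at h5
      exact h5
    have hmon : (∫ _u in Ioc t0 ts, (-(C*e))) ≤ ∫ u in Ioc t0 ts, G u := by
      apply integral_mono_ae (integrableOn_const (s := Ioc t0 ts) (C := -(C*e)) measure_Ioc_lt_top.ne) hGIoc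
      filter_upwards [ae_restrict_mem measurableSet_Ioc, ae_restrict_of_ae hrC] with u hu hru
      have hFu := hF0 u (hat0.trans hu.1.le) hu.2
      have hxu1 : x u < e := hlt2 u hu.1 hu.2
      have hxu0 : 0 ≤ x u := hxnn u ((ha.trans hat0).trans hu.1.le) hu.2
      have h1 : r u * x u ≤ C * e := mul_le_mul hru hxu1.le hxu0 hCpos.le
      have h3 : 0 ≤ r u * F u := mul_nonneg (hr_nonneg u) hFu
      show -(C*e) ≤ r u * (F u - x u)
      nlinarith
    have hconst : (∫ _u in Ioc t0 ts, (-(C*e))) = -(C*e) * (ts - t0) := by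
      rw [setIntegral_const]
      rw [Real.volume_real_Ioc, max_eq_left (by linarith : (0:ℝ) ≤ ts - t0), smul_eq_mul]
      ring
    have hkey : x ts - x t0 = ∫ u in t0..ts, G u := hdiff t0 ts (ha.trans hat0) ht0lt.le
    rw [intervalIntegral.integral_of_le ht0lt.le] at hkey
    have hts_t0 : ts - t0 ≤ 1/(4*C) := by
      have : ts ≤ t := htst
      linarith
    have hC4 : C * e * (ts - t0) ≤ C * e * (1/(4*C)) :=
      mul_le_mul_of_nonneg_left hts_t0 (by positivity)
    have hC4' : C * e * (1/(4*C)) = e/4 := by field_simp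
    nlinarith [hmon, hconst, hkey, hxts]
  -- positivity
  have hpos : ∀ t, 0 ≤ t → 0 < x t := by
    have hτ : 0 < 1/(4*C) := by positivity
    have hP : ∀ n : ℕ, ∀ s, 0 ≤ s → s ≤ n * (1/(4*C)) → φ 0 / 2^n ≤ x s := by
      intro n
      induction n with
      | zero =>
        intro s h1 h2
        simp only [Nat.cast_zero, zero_mul] at h2
        have : s = 0 := le_antisymm h2 h1
        rw [this, hx0]
        simp
      | succ n ih =>
        intro s h1 h2
        rcases le_or_gt s (n * (1/(4*C))) with h3 | h3
        · refine le_trans ?_ (ih s h1 h3)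
          apply div_le_div_of_nonneg_left hφ_pos.le (by positivity)
          exact pow_le_pow_right₀ (by norm_num) (Nat.le_succ n)
        · have hn0 : (0:ℝ) ≤ n * (1/(4*C)) := by positivity
          have hstep' := hstep (n * (1/(4*C))) (φ 0 / 2^n) hn0 (by positivity)
            (fun s' hs1 hs2 => ih s' hs1 hs2) s h3.le
            (by push_cast at h2 ⊢; linarith)
          calc φ 0 / 2^(n+1) = (φ 0 / 2^n)/2 := by ring
            _ ≤ x s := hstep'
    intro t ht
    obtain ⟨n, hn⟩ := exists_nat_ge (t / (1/(4*C)))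
    have hn' : t ≤ n * (1/(4*C)) := by
      rw [div_le_iff₀ hτ] at hn
      linarith
    exact lt_of_lt_of_le (by positivity) (hP n t ht hn')
  -- compact image facts
  have himgA : ∀ a b : ℝ, BddAbove (f '' Icc a b) := fun a b =>
    (isCompact_Icc.image hf_cont).bddAbove
  have himgB : ∀ a b : ℝ, BddBelow (f '' Icc a b) := fun a b =>
    (isCompact_Icc.image hf_cont).bddBelow
  have hsSup_mem : ∀ a b : ℝ, a ≤ b → sSup (f '' Icc a b) ∈ f '' Icc a b := fun a b hab =>
    (isCompact_Icc.image hf_cont).sSup_mem ((nonempty_Icc.mpr hab).image f)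
  have hsInf_mem : ∀ a b : ℝ, a ≤ b → sInf (f '' Icc a b) ∈ f '' Icc a b := fun a b hab =>
    (isCompact_Icc.image hf_cont).sInf_mem ((nonempty_Icc.mpr hab).image f)
  set PK := sSup (f '' Icc 0 K) with hPK_def
  have hfleMax : ∀ y : ℝ, 0 ≤ y → f y ≤ max PK y := by
    intro y hy
    rcases le_or_gt y K with h1 | h1
    · exact le_trans (le_csSup (himgA 0 K) ⟨y, ⟨hy, h1⟩, rfl⟩) (le_max_left _ _)
    · exact le_trans (hf_above y h1).2.le (le_max_right _ _)
  set Q := max (max PK Cφ) (max (φ 0) K) with hQ_def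
  have hKQ : K ≤ Q := le_trans (le_max_right _ _) (le_max_right _ _)
  have hPKQ : PK ≤ Q := le_trans (le_max_left _ _) (le_max_left _ _)
  have hCφQ : Cφ ≤ Q := le_trans (le_max_right _ _) (le_max_left _ _)
  have hφ0Q : φ 0 ≤ Q := le_trans (le_max_left _ _) (le_max_right _ _)
  -- global upper bound
  have hbQ : ∀ t, 0 ≤ t → x t ≤ Q := by
    have hQ' : ∀ Q', Q < Q' → ∀ t, 0 ≤ t → x t ≤ Q' := by
      intro Q' hQQ'
      by_contra hcon2
      push_neg at hcon2
      obtain ⟨t1, ht1, hxt1⟩ := hcon2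
      obtain ⟨ts, htsmem, htsmax⟩ := (isCompact_Icc (a := (0:ℝ)) (b := t1)).exists_isMaxOn
        (nonempty_Icc.mpr ht1) hx_cont.continuousOn
      have hQ'' : Q' < x ts := lt_of_lt_of_le hxt1 (htsmax (⟨ht1, le_rfl⟩ : t1 ∈ Icc (0:ℝ) t1))
      have hKQ' : K < Q' := lt_of_le_of_lt hKQ hQQ'
      have hθmem : sInf ((fun y => y - f y) '' Icc Q' (x ts)) ∈
          (fun y => y - f y) '' Icc Q' (x ts) := by
        apply (isCompact_Icc.image (continuous_id.sub hf_cont)).sInf_mem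
        exact (nonempty_Icc.mpr hQ''.le).image _
      set θ := sInf ((fun y => y - f y) '' Icc Q' (x ts)) with hθ_def
      have hθpos : 0 < θ := by
        obtain ⟨y0, hy0, hy0eq⟩ := hθmem
        rw [← hy0eq]
        have := (hf_above y0 (lt_of_lt_of_le hKQ' hy0.1)).2
        simp only []
        linarith
      have hθle : ∀ y, Q' ≤ y → y ≤ x ts → θ ≤ y - f y := fun y h1 h2 =>
        csInf_le (isCompact_Icc.image (continuous_id.sub hf_cont)).bddBelow ⟨y, ⟨h1, h2⟩, rfl⟩
      set q1 := max Q' (x ts - θ) with hq1_def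
      have hq1lt : q1 < x ts := max_lt hQ'' (by linarith)
      have hq1ge : Q' ≤ q1 := le_max_left _ _
      have hts0 : (0:ℝ) ≤ ts := htsmem.1
      have hFb : ∀ u, 0 ≤ u → u ≤ ts → F u ≤ q1 := by
        intro u hu huts
        apply hFle u q1 hu
        filter_upwards [hsupp u hu] with s hs
        have hsle : s ≤ ts := hs.2.trans huts
        rcases le_or_gt s 0 with h0 | h0
        · rw [hx_init s h0]
          have h2 : f (φ s) ≤ max PK (φ s) := hfleMax _ (hφ_nonneg s h0)
          have h3 : φ s ≤ Cφ := le_trans (le_abs_self _) (hCφ s h0)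
          have h4 : max PK (φ s) ≤ q1 := max_le (by linarith) (by linarith)
          linarith
        · have hxs0 : 0 ≤ x s := (hpos s h0.le).le
          have hxsb : x s ≤ x ts := htsmax ⟨h0.le, hsle.trans htsmem.2⟩
          rcases le_or_gt (x s) Q' with hc | hc
          · have h2 : f (x s) ≤ max PK (x s) := hfleMax _ hxs0
            have h4 : max PK (x s) ≤ q1 := max_le (by linarith) (by linarith)
            linarith
          · have h2 := hθle (x s) hc.le hxsb
            have h3 : f (x s) ≤ x ts - θ := by linarith
            exact h3.trans (le_max_right _ _)
      have hx0q : x 0 ≤ q1 := by rw [hx0]; linarith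
      have := noCrossUp 0 ts q1 le_rfl hts0 hx0q (fun u hu1 hu2 => hFb u hu1 hu2)
      linarith
    intro t ht
    by_contra hgt
    push_neg at hgt
    have := hQ' ((Q + x t)/2) (by linarith) t ht
    linarith
  have hxleQ : ∀ s : ℝ, x s ≤ Q := by
    intro s
    rcases le_or_gt s 0 with h0 | h0
    · rw [hx_init s h0]; exact le_trans (le_trans (le_abs_self _) (hCφ s h0)) hCφQ
    · exact hbQ s h0.le
  have hxge0 : ∀ s : ℝ, 0 ≤ x s := by
    intro s
    rcases le_or_gt s 0 with h0 | h0
    · rw [hx_init s h0]; exact hφ_nonneg s h0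
    · exact (hpos s h0.le).le
  -- limsup/liminf machinery
  have hbddAbove : IsBoundedUnder (· ≤ ·) atTop x :=
    isBoundedUnder_of_eventually_le (a := Q) (Eventually.of_forall hxleQ)
  have hbddBelow : IsBoundedUnder (· ≥ ·) atTop x :=
    isBoundedUnder_of_eventually_ge (a := 0) (Eventually.of_forall hxge0)
  set M := limsup x atTop with hM_def
  set m := liminf x atTop with hm_def
  have hmM : m ≤ M := liminf_le_limsup hbddAbove hbddBelow
  have hlimsupLe : ∀ T β : ℝ, 0 ≤ T → (∀ u, T ≤ u → F u ≤ β) → M ≤ β := by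
    intro T β hT hFβ
    refine le_of_forall_pos_le_add ?_
    intro ε hε
    by_cases hcase : ∀ T1 : ℝ, ∃ t, T1 ≤ t ∧ T ≤ t ∧ x t ≤ β + ε
    · obtain ⟨t0, _, ht0T, ht0x⟩ := hcase T
      have hall : ∀ t, t0 ≤ t → x t ≤ β + ε := fun t ht =>
        noCrossUp t0 t (β + ε) (hT.trans ht0T) ht ht0x
          (fun u h1 _ => le_trans (hFβ u (ht0T.trans h1)) (by linarith))
      exact limsup_le_of_le hbddBelow.isCoboundedUnder_le
        (eventually_atTop.mpr ⟨t0, hall⟩)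
    · exfalso
      push_neg at hcase
      obtain ⟨T1, hT1⟩ := hcase
      set a := max T (max T1 0) with ha_def
      have ha0 : (0:ℝ) ≤ a := le_trans (le_max_right _ _) (le_max_right _ _)
      have haT : T ≤ a := le_max_left _ _
      have haT1 : T1 ≤ a := le_trans (le_max_left _ _) (le_max_right _ _)
      have hgt : ∀ t, a ≤ t → β + ε < x t := fun t ht =>
        hT1 t (haT1.trans ht) (haT.trans ht)
      obtain ⟨t, hta, hint⟩ : ∃ t, a ≤ t ∧ (x a)/ε + 1 ≤ ∫ u in a..t, r u := by
        have h1 := (hRdiv a ha0).eventually_ge_atTop ((x a)/ε + 1)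
        obtain ⟨t, h2, h3⟩ := (h1.and (eventually_ge_atTop a)).exists
        exact ⟨t, h3, h2⟩
      have hineq : x t - x a ≤ -ε * ∫ u in a..t, r u := by
        rw [hdiff a t ha0 hta, ← intervalIntegral.integral_const_mul]
        apply intervalIntegral.integral_mono_on hta (hGii a t ha0 hta)
          ((hrii a t).const_mul (-ε))
        intro u hu
        have h1 : F u ≤ β := hFβ u (haT.trans hu.1)
        have h2 : β + ε < x u := hgt u hu.1
        have h3 : F u - x u ≤ -ε := by linarith
        calc G u = r u * (F u - x u) := rfl
          _ ≤ r u * (-ε) := mul_le_mul_of_nonneg_left h3 (hr_nonneg u)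
          _ = -ε * r u := mul_comm _ _
      have h4 : -ε * ∫ u in a..t, r u ≤ -ε * ((x a)/ε + 1) :=
        mul_le_mul_of_nonpos_left hint (by linarith)
      have h5 : -ε * ((x a)/ε + 1) = -x a - ε := by
        field_simp
        ring
      have h6 : 0 < x t := hpos t (ha0.trans hta)
      linarith
  have hliminfGe : ∀ T α : ℝ, 0 ≤ T → (∀ u, T ≤ u → α ≤ F u) → α ≤ m := by
    intro T α hT hFα
    have key : ∀ ε : ℝ, 0 < ε → α - ε ≤ m := by
      intro ε hε
      by_cases hcase : ∀ T1 : ℝ, ∃ t, T1 ≤ t ∧ T ≤ t ∧ α - ε ≤ x t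
      · obtain ⟨t0, _, ht0T, ht0x⟩ := hcase T
        have hall : ∀ t, t0 ≤ t → α - ε ≤ x t := fun t ht =>
          noCrossDown t0 t (α - ε) (hT.trans ht0T) ht ht0x
            (fun u h1 _ => le_trans (by linarith) (hFα u (ht0T.trans h1)))
        exact le_liminf_of_le hbddAbove.isCoboundedUnder_ge
          (eventually_atTop.mpr ⟨t0, hall⟩)
      · exfalso
        push_neg at hcase
        obtain ⟨T1, hT1⟩ := hcase
        set a := max T (max T1 0) with ha_def
        have ha0 : (0:ℝ) ≤ a := le_trans (le_max_right _ _) (le_max_right _ _)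
        have haT : T ≤ a := le_max_left _ _
        have haT1 : T1 ≤ a := le_trans (le_max_left _ _) (le_max_right _ _)
        have hgt : ∀ t, a ≤ t → x t < α - ε := fun t ht =>
          hT1 t (haT1.trans ht) (haT.trans ht)
        obtain ⟨t, hta, hint⟩ : ∃ t, a ≤ t ∧ (Q - x a)/ε + 1 ≤ ∫ u in a..t, r u := by
          have h1 := (hRdiv a ha0).eventually_ge_atTop ((Q - x a)/ε + 1)
          obtain ⟨t, h2, h3⟩ := (h1.and (eventually_ge_atTop a)).exists
          exact ⟨t, h3, h2⟩
        have hineq : ε * ∫ u in a..t, r u ≤ x t - x a := by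
          rw [hdiff a t ha0 hta, ← intervalIntegral.integral_const_mul]
          apply intervalIntegral.integral_mono_on hta ((hrii a t).const_mul ε)
            (hGii a t ha0 hta)
          intro u hu
          have h1 : α ≤ F u := hFα u (haT.trans hu.1)
          have h2 : x u < α - ε := hgt u hu.1
          have h3 : ε ≤ F u - x u := by linarith
          calc ε * r u = r u * ε := mul_comm _ _
            _ ≤ r u * (F u - x u) := mul_le_mul_of_nonneg_left h3 (hr_nonneg u)
            _ = G u := rfl
        have h4 : ε * ((Q - x a)/ε + 1) ≤ ε * ∫ u in a..t, r u :=
          mul_le_mul_of_nonneg_left hint (by linarith)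
        have h5 : ε * ((Q - x a)/ε + 1) = Q - x a + ε := by
          field_simp
        have h6 : x t ≤ Q := hxleQ t
        linarith
    refine le_of_forall_pos_le_add ?_
    intro ε hε
    linarith [key ε hε]
  -- persistence: liminf is positive
  have hmpos : 0 < m := by
    obtain ⟨T0', hT0'⟩ := eventually_atTop.mp (hh_tend.eventually_ge_atTop 0)
    set T0 := max T0' 0 with hT0_def
    have hT00 : (0:ℝ) ≤ T0 := le_max_right _ _
    have hhT0 : ∀ u, T0 ≤ u → 0 ≤ h u := fun u hu => hT0' u ((le_max_left _ _).trans hu)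
    obtain ⟨s0, hs0mem, hs0min⟩ := (isCompact_Icc (a := (0:ℝ)) (b := T0)).exists_isMinOn
      (nonempty_Icc.mpr hT00) hx_cont.continuousOn
    set d0 := x s0 with hd0_def
    have hd0pos : 0 < d0 := hpos s0 hs0mem.1
    have hd0le : ∀ s, 0 ≤ s → s ≤ T0 → d0 ≤ x s := fun s h1 h2 => hs0min ⟨h1, h2⟩
    set ρ := sInf (f '' Icc K Q) with hρ_def
    have hρpos : 0 < ρ := by
      obtain ⟨y0, hy0, hy0eq⟩ := hsInf_mem K Q hKQ
      rw [hρ_def, ← hy0eq]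
      rcases eq_or_lt_of_le hy0.1 with heq | hlt
      · rw [← heq, hfK]; exact hK
      · exact (hf_above y0 hlt).1
    have hρle : ∀ y, K ≤ y → y ≤ Q → ρ ≤ f y := fun y h1 h2 =>
      csInf_le (himgB K Q) ⟨y, ⟨h1, h2⟩, rfl⟩
    set c := min ρ (min K d0) with hc_def
    have hcpos : 0 < c := lt_min hρpos (lt_min hK hd0pos)
    have hcρ : c ≤ ρ := min_le_left _ _
    have hcK : c ≤ K := (min_le_right _ _).trans (min_le_left _ _)
    have hcd0 : c ≤ d0 := (min_le_right _ _).trans (min_le_right _ _)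
    have hc42 : c/4 ≤ c/2 := by linarith
    set η := sInf ((fun y => f y - y) '' Icc (c/4) (c/2)) with hη_def
    have hηmem : η ∈ (fun y => f y - y) '' Icc (c/4) (c/2) := by
      apply (isCompact_Icc.image (hf_cont.sub continuous_id)).sInf_mem
      exact (nonempty_Icc.mpr hc42).image _
    have hηpos : 0 < η := by
      obtain ⟨y0, hy0, hy0eq⟩ := hηmem
      rw [← hy0eq]
      have hy0pos : 0 < y0 := lt_of_lt_of_le (by linarith) hy0.1
      have hy0K : y0 < K := lt_of_le_of_lt hy0.2 (by linarith)
      have := hf_below y0 hy0pos hy0K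
      simp only []
      linarith
    have hηle : ∀ y, c/4 ≤ y → y ≤ c/2 → η ≤ f y - y := fun y h1 h2 =>
      csInf_le (isCompact_Icc.image (hf_cont.sub continuous_id)).bddBelow ⟨y, ⟨h1, h2⟩, rfl⟩
    set c'' := max (c/4) (c/2 - η/2) with hc''_def
    have hc''lt : c'' < c/2 := max_lt (by linarith) (by linarith)
    have hc''ge : c/4 ≤ c'' := le_max_left _ _
    have hc''pos : 0 < c'' := lt_of_lt_of_le (by linarith) hc''ge
    have hper : ∀ t, T0 ≤ t → c'' < x t := by
      intro t1 hT0t1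
      by_contra hle
      push_neg at hle
      set S : Set ℝ := Icc T0 t1 ∩ x ⁻¹' Iic c'' with hS_def
      have hScpt : IsCompact S := isCompact_Icc.inter_right (isClosed_Iic.preimage hx_cont)
      have hSne : S.Nonempty := ⟨t1, ⟨hT0t1, le_rfl⟩, hle⟩
      obtain ⟨ts, ⟨⟨hT0ts, htst1⟩, hxts'⟩, htsmin⟩ :
          ∃ ts ∈ S, ∀ s ∈ S, ts ≤ s :=
        ⟨sInf S, hScpt.sInf_mem hSne, fun s hs => csInf_le hScpt.bddBelow hs⟩
      have hxtsle : x ts ≤ c'' := hxts'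
      have hxT0 : d0 ≤ x T0 := hd0le T0 hT00 le_rfl
      have hT0lt : T0 < ts := by
        rcases eq_or_lt_of_le hT0ts with heq | hlt
        · exfalso; rw [← heq] at hxtsle; linarith
        · exact hlt
      have hpre : ∀ u, T0 ≤ u → u < ts → c'' < x u := by
        intro u h1 h2
        by_contra hle2
        push_neg at hle2
        exact absurd (htsmin u ⟨⟨h1, h2.le.trans htst1⟩, hle2⟩) (not_le.mpr h2)
      have hxts : x ts = c'' := by
        refine le_antisymm hxtsle ?_
        have hev : ∀ᶠ u in nhdsWithin ts (Iio ts), c'' ≤ x u := by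
          filter_upwards [Ico_mem_nhdsLT_of_mem (⟨hT0lt, le_rfl⟩ : ts ∈ Ioc T0 ts)] with u hu
          exact (hpre u hu.1 hu.2).le
        exact ge_of_tendsto ((hx_cont.tendsto ts).mono_left nhdsWithin_le_nhds) hev
      have hlow : ∀ s, 0 ≤ s → s ≤ ts → c'' ≤ x s := by
        intro s h1 h2
        rcases le_or_gt s T0 with h3 | h3
        · linarith [hd0le s h1 h3]
        · rcases eq_or_lt_of_le h2 with heq | hlt
          · rw [heq, hxts]
          · exact (hpre s h3.le hlt).le
      have hFc : ∀ u, T0 ≤ u → u ≤ ts → c/2 ≤ F u := by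
        intro u h1 h2
        have hu0 : 0 ≤ u := hT00.trans h1
        apply hFge u (c/2) hu0
        filter_upwards [hsupp u hu0] with s hs
        have hs0 : 0 ≤ s := (hhT0 u h1).trans hs.1
        have hsts : s ≤ ts := hs.2.trans h2
        have hxs1 : c'' ≤ x s := hlow s hs0 hsts
        have hxs2 : x s ≤ Q := hxleQ s
        rcases lt_or_ge K (x s) with hK1 | hK1
        · have := hρle (x s) hK1.le hxs2
          linarith
        · rcases le_or_gt (c/2) (x s) with h5 | h5
          · rcases eq_or_lt_of_le hK1 with heq | hlt
            · rw [heq, hfK]; linarith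
            · have := hf_below (x s) (by linarith) hlt
              linarith
          · have h6 := hηle (x s) (hc''ge.trans hxs1) h5.le
            have h7 : c/2 - η/2 ≤ c'' := le_max_right _ _
            linarith
      have hxT0c : c/2 ≤ x T0 := by linarith
      have := noCrossDown T0 ts (c/2) hT00 hT0lt.le hxT0c hFc
      linarith
    have hcm : c'' ≤ m := le_liminf_of_le hbddAbove.isCoboundedUnder_ge
      (eventually_atTop.mpr ⟨T0, fun t ht => (hper t ht).le⟩)
    linarith
  -- asymptotic interval inequalities
  have hkey : ∀ ε : ℝ, 0 < ε → ε < m →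
      M ≤ sSup (f '' Icc m M) + L * ε ∧ sInf (f '' Icc m M) - L * ε ≤ m := by
    intro ε hε hεm
    obtain ⟨S, hS⟩ : ∃ S : ℝ, ∀ s, S ≤ s → m - ε ≤ x s ∧ x s ≤ M + ε := by
      have h1 : ∀ᶠ s in atTop, m - ε < x s :=
        eventually_lt_of_lt_liminf (by linarith : m - ε < m) hbddBelow
      have h2 : ∀ᶠ s in atTop, x s < M + ε :=
        eventually_lt_of_limsup_lt (by linarith : M < M + ε) hbddAbove
      obtain ⟨S, hS⟩ := eventually_atTop.mp (h1.and h2)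
      exact ⟨S, fun s hs => ⟨(hS s hs).1.le, (hS s hs).2.le⟩⟩
    obtain ⟨T, hT0, hTh⟩ : ∃ T : ℝ, 0 ≤ T ∧ ∀ u, T ≤ u → S ≤ h u := by
      obtain ⟨T', hT'⟩ := eventually_atTop.mp (hh_tend.eventually_ge_atTop S)
      exact ⟨max T' 0, le_max_right _ _, fun u hu => hT' u ((le_max_left _ _).trans hu)⟩
    have hm0 : 0 ≤ m - ε := by linarith
    have hIcc : m - ε ≤ M + ε := by linarith
    have hup : M ≤ sSup (f '' Icc (m-ε) (M+ε)) := by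
      apply hlimsupLe T _ hT0
      intro u hu
      apply hFle u _ (hT0.trans hu)
      filter_upwards [hsupp u (hT0.trans hu)] with s hs
      have h3 := hS s ((hTh u hu).trans hs.1)
      exact le_csSup (himgA _ _) ⟨x s, ⟨h3.1, h3.2⟩, rfl⟩
    have hdown : sInf (f '' Icc (m-ε) (M+ε)) ≤ m := by
      apply hliminfGe T _ hT0
      intro u hu
      apply hFge u _ (hT0.trans hu)
      filter_upwards [hsupp u (hT0.trans hu)] with s hs
      have h3 := hS s ((hTh u hu).trans hs.1)
      exact csInf_le (himgB _ _) ⟨x s, ⟨h3.1, h3.2⟩, rfl⟩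
    have hclamp : ∀ y : ℝ, m - ε ≤ y → y ≤ M + ε →
        ∃ y', y' ∈ Icc m M ∧ |y - y'| ≤ ε ∧ 0 ≤ y := by
      intro y h1 h2
      refine ⟨max m (min y M), ⟨le_max_left _ _, max_le hmM (min_le_right _ _)⟩, ?_, by linarith⟩
      rcases le_total y m with h3 | h3
      · rw [min_eq_left (h3.trans hmM), max_eq_left h3, abs_le]
        constructor <;> linarith
      · rcases le_total y M with h5 | h5
        · rw [min_eq_left h5, max_eq_right h3, sub_self, abs_zero]; linarith
        · rw [min_eq_right h5, max_eq_right hmM, abs_le]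
          constructor <;> linarith
    constructor
    · refine hup.trans ?_
      apply csSup_le ((nonempty_Icc.mpr hIcc).image f)
      rintro z ⟨y, hy, rfl⟩
      obtain ⟨y', hy'mem, hyy', hy0⟩ := hclamp y hy.1 hy.2
      have hy'0 : 0 ≤ y' := le_trans (by linarith) hy'mem.1
      have hlip := hf_lip y y' hy0 hy'0
      have h1 : f y - f y' ≤ L * ε := by
        have h2 := le_abs_self (f y - f y')
        have h3 : L * |y - y'| ≤ L * ε := mul_le_mul_of_nonneg_left hyy' hL
        linarith
      have h3 : f y' ≤ sSup (f '' Icc m M) := le_csSup (himgA _ _) ⟨y', hy'mem, rfl⟩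
      linarith
    · refine le_trans ?_ hdown
      apply le_csInf ((nonempty_Icc.mpr hIcc).image f)
      rintro z ⟨y, hy, rfl⟩
      obtain ⟨y', hy'mem, hyy', hy0⟩ := hclamp y hy.1 hy.2
      have hy'0 : 0 ≤ y' := le_trans (by linarith) hy'mem.1
      have hlip := hf_lip y y' hy0 hy'0
      have h1 : f y' - f y ≤ L * ε := by
        have h2 : L * |y - y'| ≤ L * ε := mul_le_mul_of_nonneg_left hyy' hL
        calc f y' - f y ≤ |f y' - f y| := le_abs_self _
          _ = |f y - f y'| := abs_sub_comm _ _
          _ ≤ L * |y - y'| := hlip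
          _ ≤ L * ε := h2
      have h3 : sInf (f '' Icc m M) ≤ f y' := csInf_le (himgB _ _) ⟨y', hy'mem, rfl⟩
      linarith
  have hLsq : ∀ ε' : ℝ, 0 < ε' → L * min (ε' / (L+1)) (m/2) ≤ ε' := by
    intro ε' hε'
    have h3 : L * min (ε' / (L+1)) (m/2) ≤ L * (ε'/(L+1)) :=
      mul_le_mul_of_nonneg_left (min_le_left _ _) hL
    have hd : (0:ℝ) ≤ ε'/(L+1) := by positivity
    have h5 : ε' = (L+1) * (ε'/(L+1)) := by field_simp
    nlinarith
  have hMle : M ≤ sSup (f '' Icc m M) := by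
    refine le_of_forall_pos_le_add ?_
    intro ε' hε'
    set ε := min (ε' / (L+1)) (m/2) with hε_def
    have hεpos : 0 < ε := lt_min (by positivity) (by linarith)
    have hεm : ε < m := lt_of_le_of_lt (min_le_right _ _) (by linarith)
    have h1 := (hkey ε hεpos hεm).1
    have h2 := hLsq ε' hε'
    linarith
  have hmge : sInf (f '' Icc m M) ≤ m := by
    have key2 : ∀ ε' : ℝ, 0 < ε' → sInf (f '' Icc m M) ≤ m + ε' := by
      intro ε' hε'
      set ε := min (ε' / (L+1)) (m/2) with hε_def
      have hεpos : 0 < ε := lt_min (by positivity) (by linarith)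
      have hεm : ε < m := lt_of_le_of_lt (min_le_right _ _) (by linarith)
      have h1 := (hkey ε hεpos hεm).2
      have h2 := hLsq ε' hε'
      linarith
    exact le_of_forall_pos_le_add key2
  -- final combinatorics
  have hKM : K ≤ M := by
    by_contra hMK
    push_neg at hMK
    obtain ⟨y0, hy0, hy0eq⟩ := hsInf_mem m M hmM
    have h1 : m < f y0 := by
      have := hf_below y0 (lt_of_lt_of_le hmpos hy0.1) (lt_of_le_of_lt hy0.2 hMK)
      linarith [hy0.1]
    rw [hy0eq] at h1
    linarith
  have hmK : m ≤ K := by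
    by_contra hKm
    push_neg at hKm
    obtain ⟨y0, hy0, hy0eq⟩ := hsSup_mem m M hmM
    have h1 : f y0 < M := lt_of_lt_of_le (hf_above y0 (lt_of_lt_of_le hKm hy0.1)).2 hy0.2
    rw [hy0eq] at h1
    linarith
  have hMKeq : M = K := by
    by_contra hne
    have hMgt : K < M := lt_of_le_of_ne hKM (Ne.symm hne)
    have h1 : sSup (f '' Icc K M) < M := by
      obtain ⟨y0, hy0, hy0eq⟩ := hsSup_mem K M hMgt.le
      rw [← hy0eq]
      rcases eq_or_lt_of_le hy0.1 with heq | hlt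
      · rw [← heq, hfK]; exact hMgt
      · exact lt_of_lt_of_le (hf_above y0 hlt).2 hy0.2
    have hsplit : sSup (f '' Icc m M) ≤ max (sSup (f '' Icc m K)) (sSup (f '' Icc K M)) := by
      apply csSup_le ((nonempty_Icc.mpr hmM).image f)
      rintro z ⟨y, hy, rfl⟩
      rcases le_or_gt y K with h2 | h2
      · exact le_trans (le_csSup (himgA _ _) ⟨y, ⟨hy.1, h2⟩, rfl⟩) (le_max_left _ _)
      · exact le_trans (le_csSup (himgA _ _) ⟨y, ⟨h2.le, hy.2⟩, rfl⟩) (le_max_right _ _)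
    have hAM : M ≤ sSup (f '' Icc m K) := by
      rcases max_cases (sSup (f '' Icc m K)) (sSup (f '' Icc K M)) with ⟨hmax, _⟩ | ⟨hmax, _⟩
      · rw [hmax] at hsplit; linarith
      · rw [hmax] at hsplit; linarith
    have hA : K < sSup (f '' Icc m K) := lt_of_lt_of_le hMgt hAM
    have hmltK : m < K := by
      rcases eq_or_lt_of_le hmK with heq | hlt
      · exfalso
        have h6 := hMle
        rw [heq] at h6
        linarith
      · exact hlt
    have hc := hcond m hmpos hmltK hA
    obtain ⟨y0, hy0, hy0eq⟩ := hsInf_mem m M hmM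
    have h2 : m < f y0 := by
      rcases le_or_gt y0 K with h3 | h3
      · rcases eq_or_lt_of_le h3 with heq | hlt
        · rw [heq, hfK]; exact hmltK
        · have := hf_below y0 (lt_of_lt_of_le hmpos hy0.1) hlt
          linarith [hy0.1]
      · have h4 : y0 ∈ Icc K (sSup (f '' Icc m K)) := ⟨h3.le, hy0.2.trans hAM⟩
        exact lt_of_lt_of_le hc (csInf_le (himgB _ _) ⟨y0, h4, rfl⟩)
    rw [hy0eq] at h2
    linarith
  have hmKeq : m = K := by
    by_contra hne
    have hmlt : m < K := lt_of_le_of_ne hmK hne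
    obtain ⟨y0, hy0, hy0eq⟩ := hsInf_mem m M hmM
    have h2 : m < f y0 := by
      rcases eq_or_lt_of_le (hy0.2.trans (le_of_eq hMKeq)) with heq | hlt
      · rw [heq, hfK]; exact hmlt
      · have := hf_below y0 (lt_of_lt_of_le hmpos hy0.1) hlt
        linarith [hy0.1]
    rw [hy0eq] at h2
    linarith
  exact tendsto_of_liminf_eq_limsup hmKeq hMKeq hbddAbove hbddBelow
end
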